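/- arXiv:2605.01972 — 6 statements merged into one kernel-verified Lean document; each statement's English description precedes it below -/
import Mathlib

section
/- Assume ψ : [0,1] → [0,∞) is continuous with ψ(0) = 0 and there exists c₀ > 0 such that ψ(x) ≥ c₀·x for all x ∈ [0,1]. Let δ ∈ (0,1) and let x_N, x_T ∈ ℂ with x_T ≠ 0 and |x_N| ≤ min(1, c₀)·|x_T|. Then |x_T| ≤ κ_{G_ψ}(p_δ; (x_N, x_T)) ≤ max(1, (|x_N|/|x_T|)·(1/(1−δ)))·|x_T|. -/
open Complex Metric Set

/-- The Kobayashi–Royden metric of a domain `Ω ⊆ ℂ²` at point `z` in direction `X`: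
the infimum of `1/λ` over all `λ > 0` admitting a holomorphic map `φ : 𝔻 → Ω`
with `φ 0 = z` and `φ' 0 = λ • X`. -/
noncomputable def kob (Ω : Set (ℂ × ℂ)) (z X : ℂ × ℂ) : ℝ :=
  sInf {c : ℝ | ∃ lam : ℝ, 0 < lam ∧ c = 1 / lam ∧
    ∃ φ : ℂ → ℂ × ℂ, DifferentiableOn ℂ φ (ball (0 : ℂ) 1) ∧
      MapsTo φ (ball (0 : ℂ) 1) Ω ∧ φ 0 = z ∧ deriv φ 0 = lam • X}

/-- The model domain `G_ψ = {z ∈ 𝔻² : Re z₁ < ψ(|z₂|)}`. -/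
def Gpsi (ψ : ℝ → ℝ) : Set (ℂ × ℂ) :=
  {z : ℂ × ℂ | ‖z.1‖ < 1 ∧ ‖z.2‖ < 1 ∧ z.1.re < ψ (‖z.2‖)}

/-- The base point `p_δ = (-δ, 0)`. -/
noncomputable def pdel (δ : ℝ) : ℂ × ℂ := ((-δ : ℂ), 0)

/-- estimates for the Kobayashi–Royden metric in nearly tangential directions
when `ψ(x) ≥ c₀ x`. -/
theorem stmt1 (ψ : ℝ → ℝ) (c₀ : ℝ) (hc₀ : 0 < c₀)
    (hcont : ContinuousOn ψ (Icc 0 1)) (hψ0 : ψ 0 = 0)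
    (hnonneg : ∀ x ∈ Icc (0 : ℝ) 1, 0 ≤ ψ x)
    (hlow : ∀ x ∈ Icc (0 : ℝ) 1, c₀ * x ≤ ψ x)
    (δ : ℝ) (hδ : δ ∈ Ioo (0 : ℝ) 1)
    (xN xT : ℂ) (hxT : xT ≠ 0)
    (hmaj : ‖xN‖ ≤ min 1 c₀ * ‖xT‖) :
    ‖xT‖ ≤ kob (Gpsi ψ) (pdel δ) (xN, xT) ∧
    kob (Gpsi ψ) (pdel δ) (xN, xT) ≤
      max 1 (‖xN‖ / ‖xT‖ * (1 / (1 - δ))) * ‖xT‖ := by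
  obtain ⟨hδ0, hδ1⟩ := hδ
  set A := ‖xN‖ with hA
  set T := ‖xT‖ with hTdef
  have hT : 0 < T := norm_pos_iff.mpr hxT
  have hA0 : 0 ≤ A := norm_nonneg xN
  have hAc : A ≤ c₀ * T := le_trans hmaj (by
    have : min 1 c₀ ≤ c₀ := min_le_right _ _
    nlinarith [hT.le])
  set M := max 1 (A / T * (1 / (1 - δ))) with hM
  have h1δ : 0 < 1 - δ := by linarith
  have hM1 : (1 : ℝ) ≤ M := le_max_left _ _
  have hMT : 0 < M * T := mul_pos (lt_of_lt_of_le one_pos hM1) hT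
  set lam := 1 / (M * T) with hlamdef
  have hlam : 0 < lam := by positivity
  have hlamT : lam * T ≤ 1 := by
    rw [hlamdef, div_mul_eq_mul_div, one_mul, div_le_one hMT]
    nlinarith
  have hlamA : lam * A ≤ 1 - δ := by
    rw [hlamdef, div_mul_eq_mul_div, one_mul, div_le_iff₀ hMT]
    have h2 : A / T * (1 / (1 - δ)) ≤ M := le_max_right _ _
    have : A / T * (1 / (1 - δ)) * (T * (1 - δ)) = A := by
      field_simp
    nlinarith [mul_le_mul_of_nonneg_right h2 (by positivity : (0:ℝ) ≤ T * (1 - δ))]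
  have hlamAc : lam * A ≤ c₀ * (lam * T) := by nlinarith
  -- the candidate map
  set φ : ℂ → ℂ × ℂ := fun ζ => ((-δ : ℂ) + ζ * ((lam : ℂ) * xN), ζ * ((lam : ℂ) * xT))
    with hφdef
  have hder : deriv φ 0 = lam • (xN, xT) := by
    have h1 : HasDerivAt (fun ζ : ℂ => (-δ : ℂ) + ζ * ((lam : ℂ) * xN)) ((lam : ℂ) * xN) 0 :=
      (hasDerivAt_mul_const _).const_add _
    have h2 : HasDerivAt (fun ζ : ℂ => ζ * ((lam : ℂ) * xT)) ((lam : ℂ) * xT) 0 :=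
      hasDerivAt_mul_const _
    have := (h1.prodMk h2).deriv
    rw [hφdef, this, Prod.smul_mk]
    simp [Complex.real_smul]
  have hdiff : DifferentiableOn ℂ φ (ball (0 : ℂ) 1) := by
    apply Differentiable.differentiableOn
    apply Differentiable.prodMk
    · exact (differentiable_id.mul_const _).const_add _
    · exact differentiable_id.mul_const _
  have hmaps : MapsTo φ (ball (0 : ℂ) 1) (Gpsi ψ) := by
    intro ζ hζ
    have hζ1 : ‖ζ‖ < 1 := by
      rwa [mem_ball_zero_iff] at hζ
    have hζ0 : 0 ≤ ‖ζ‖ := norm_nonneg ζ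
    have habs1 : ‖ζ * ((lam : ℂ) * xN)‖ = ‖ζ‖ * (lam * A) := by
      rw [norm_mul, norm_mul, Complex.norm_real, Real.norm_eq_abs, abs_of_pos hlam]
    have habs2 : ‖ζ * ((lam : ℂ) * xT)‖ = ‖ζ‖ * (lam * T) := by
      rw [norm_mul, norm_mul, Complex.norm_real, Real.norm_eq_abs, abs_of_pos hlam]
    have hz2lt : ‖ζ‖ * (lam * T) < 1 := by
      calc ‖ζ‖ * (lam * T) ≤ ‖ζ‖ * 1 := by
            exact mul_le_mul_of_nonneg_left hlamT hζ0
        _ < 1 := by rwa [mul_one]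
    refine ⟨?_, ?_, ?_⟩
    · calc ‖(-δ : ℂ) + ζ * ((lam : ℂ) * xN)‖
          ≤ ‖(-δ : ℂ)‖ + ‖ζ * ((lam : ℂ) * xN)‖ := norm_add_le _ _
        _ = δ + ‖ζ‖ * (lam * A) := by
            rw [habs1]
            congr 1
            rw [norm_neg, Complex.norm_real, Real.norm_eq_abs, abs_of_pos hδ0]
        _ < 1 := by nlinarith [mul_le_mul_of_nonneg_left hlamA hζ0]
    · show ‖ζ * ((lam : ℂ) * xT)‖ < 1
      rw [habs2]; exact hz2lt
    · show ((-δ : ℂ) + ζ * ((lam : ℂ) * xN)).re < ψ (‖ζ * ((lam : ℂ) * xT)‖)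
      rw [habs2]
      have harg : ‖ζ‖ * (lam * T) ∈ Icc (0 : ℝ) 1 := ⟨by positivity, hz2lt.le⟩
      have hψlb := hlow _ harg
      have hre : ((-δ : ℂ) + ζ * ((lam : ℂ) * xN)).re ≤ -δ + ‖ζ‖ * (lam * A) := by
        rw [Complex.add_re]
        have := Complex.re_le_norm (ζ * ((lam : ℂ) * xN))
        rw [habs1] at this
        simp only [Complex.neg_re, Complex.ofReal_re]
        linarith
      have : ‖ζ‖ * (lam * A) ≤ c₀ * (‖ζ‖ * (lam * T)) := by nlinarith
      linarith
  have hφ0 : φ 0 = pdel δ := by simp [hφdef, pdel]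
  -- the element of the defining set
  have hmem : M * T ∈ {c : ℝ | ∃ lam : ℝ, 0 < lam ∧ c = 1 / lam ∧
      ∃ φ : ℂ → ℂ × ℂ, DifferentiableOn ℂ φ (ball (0 : ℂ) 1) ∧
        MapsTo φ (ball (0 : ℂ) 1) (Gpsi ψ) ∧ φ 0 = pdel δ ∧
        deriv φ 0 = lam • ((xN, xT) : ℂ × ℂ)} := by
    refine ⟨lam, hlam, ?_, φ, hdiff, hmaps, hφ0, hder⟩
    rw [hlamdef, one_div_one_div]
  have hlb : ∀ c ∈ {c : ℝ | ∃ lam : ℝ, 0 < lam ∧ c = 1 / lam ∧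
      ∃ φ : ℂ → ℂ × ℂ, DifferentiableOn ℂ φ (ball (0 : ℂ) 1) ∧
        MapsTo φ (ball (0 : ℂ) 1) (Gpsi ψ) ∧ φ 0 = pdel δ ∧
        deriv φ 0 = lam • ((xN, xT) : ℂ × ℂ)}, T ≤ c := by
    rintro c ⟨l, hl, rfl, g, hgdiff, hgmaps, hg0, hgder⟩
    set f : ℂ → ℂ := fun ζ => (g ζ).2 with hfdef
    have hfd : DifferentiableOn ℂ f (ball (0 : ℂ) 1) := hgdiff.snd
    have hf0 : f 0 = 0 := by simp [hfdef, hg0, pdel]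
    have hfmaps : MapsTo f (ball (0 : ℂ) 1) (ball (f 0) 1) := by
      intro ζ hζ
      have := hgmaps hζ
      rw [hf0, mem_ball_zero_iff]
      exact this.2.1
    have hgD : DifferentiableAt ℂ g 0 :=
      hgdiff.differentiableAt (isOpen_ball.mem_nhds (by simp))
    have hfder : deriv f 0 = l • xT := by
      have hg' : HasDerivAt g (deriv g 0) 0 := hgD.hasDerivAt
      have hf' : HasDerivAt f ((deriv g 0).2) 0 := by
        have := (ContinuousLinearMap.snd ℂ ℂ ℂ).hasFDerivAt.comp_hasDerivAt 0 hg'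
        exact this
      rw [hf'.deriv, hgder]; rfl
    have hsch := Complex.norm_deriv_le_div_of_mapsTo_ball hfd (hfmaps.mono_right ball_subset_closedBall) one_pos
    rw [hfder] at hsch
    have : ‖l • xT‖ = l * T := by
      rw [Complex.real_smul, norm_mul, Complex.norm_real, Real.norm_eq_abs, abs_of_pos hl]
    rw [this] at hsch
    rw [le_div_iff₀ hl, mul_comm]
    linarith [hsch]
  constructor
  · exact le_csInf ⟨M * T, hmem⟩ hlb
  · exact csInf_le ⟨T, fun c hc => (hlb c hc)⟩ hmem
end

section
/- Assume ψ : [0,1] → [0,∞) is continuous with ψ(0) = 0 and there exists c₀ > 0 such that ψ(x) ≥ c₀·√x for all x ∈ [0,1]. Then for every δ₀ ∈ (0,1) there exists C ≥ 1 (depending only on c₀ and δ₀) such that for all δ ∈ (0, δ₀] and all (x_N, x_T) ∈ ℂ²: max(|x_N|, |x_T|) ≤ κ_{G_ψ}(p_δ; (x_N, x_T)) ≤ C·max(|x_N|, |x_T|). -/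
open Complex Metric Set

set_option maxHeartbeats 1000000

lemma upper_mem (ψ : ℝ → ℝ) (c₀ : ℝ) (hc₀ : 0 < c₀)
    (hlow : ∀ x ∈ Icc (0:ℝ) 1, c₀ * Real.sqrt x ≤ ψ x)
    (δ r : ℝ) (hδ0 : 0 < δ) (hr0 : 0 < r) (hr14 : r ≤ 1/4) (hrc : r ≤ c₀/2)
    (hsum : δ + r < 1) (xN xT : ℂ)
    (hM : 0 < max (‖xN‖) (‖xT‖)) :
    ∃ lam : ℝ, 0 < lam ∧ max (‖xN‖) (‖xT‖) / r = 1 / lam ∧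
      ∃ φ : ℂ → ℂ × ℂ, DifferentiableOn ℂ φ (ball (0:ℂ) 1) ∧
        MapsTo φ (ball (0:ℂ) 1) (Gpsi ψ) ∧ φ 0 = pdel δ ∧
        deriv φ 0 = lam • ((xN, xT) : ℂ × ℂ) := by
  set M : ℝ := max (‖xN‖) (‖xT‖) with hMdef
  set lam : ℝ := r / M with hlamdef
  have hlam0 : 0 < lam := by positivity
  have hlamN : lam * ‖xN‖ ≤ r := by
    calc lam * ‖xN‖ ≤ lam * M := by
          exact mul_le_mul_of_nonneg_left (le_max_left _ _) hlam0.le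
      _ = r := div_mul_cancel₀ r hM.ne'
  have hlamT : lam * ‖xT‖ ≤ r := by
    calc lam * ‖xT‖ ≤ lam * M := by
          exact mul_le_mul_of_nonneg_left (le_max_right _ _) hlam0.le
      _ = r := div_mul_cancel₀ r hM.ne'
  set w : ℂ := xN * xT with hwdef
  set u : ℂ := if w = 0 then 1 else w / ((‖w‖ : ℝ) : ℂ) with hudef
  have hu : ‖u‖ = 1 := by
    by_cases h : w = 0
    · simp [hudef, h]
    · have hw0 : ‖w‖ ≠ 0 := norm_ne_zero_iff.2 h
      simp [hudef, h, norm_div, Complex.norm_real, Real.norm_eq_abs, _root_.abs_of_nonneg (norm_nonneg w),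
        div_self hw0]
  have hu0 : u ≠ 0 := by
    intro h; rw [h] at hu; simp at hu
  set βc : ℂ := ((1/4 : ℝ) : ℂ) with hβdef
  have hβc0 : βc ≠ 0 := by
    simp [hβdef]
  set zst : ℂ := -(((lam : ℝ) : ℂ) * xT) / (βc * u) with hzstdef
  have hwu : 0 ≤ (w * u⁻¹).re := by
    by_cases h : w = 0
    · simp [h]
    · have : w * u⁻¹ = ((‖w‖ : ℝ) : ℂ) := by
        rw [hudef, if_neg h]
        field_simp
      rw [this]
      simp [Complex.ofReal_re, norm_nonneg]
  have hphase : (xN * zst).re ≤ 0 := by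
    have hxz : xN * zst = ((-4 * lam : ℝ) : ℂ) * (w * u⁻¹) := by
      rw [hzstdef, hβdef, hwdef]
      push_cast
      field_simp [hu0]
    rw [hxz, Complex.re_ofReal_mul]
    exact mul_nonpos_of_nonpos_of_nonneg (by linarith) hwu
  have hzst_le : ‖zst‖ ≤ 4 * r := by
    rw [hzstdef, norm_div, norm_neg, norm_mul, norm_mul, hu, hβdef, Complex.norm_real, Real.norm_eq_abs,
      Complex.norm_real, Real.norm_eq_abs, abs_of_pos hlam0]
    rw [show |(1/4 : ℝ)| * 1 = (1/4 : ℝ) by norm_num]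
    rw [div_le_iff₀ (by norm_num)]
    linarith [hlamT]
  refine ⟨lam, hlam0, by rw [one_div_div], ?_⟩
  set φ : ℂ → ℂ × ℂ := fun ζ =>
    (-(δ : ℂ) + ((lam : ℝ) : ℂ) * xN * ζ, βc * u * ζ ^ 2 + ((lam : ℝ) : ℂ) * xT * ζ) with hφdef
  have h2eq : ∀ ζ : ℂ, βc * u * ζ ^ 2 + ((lam : ℝ) : ℂ) * xT * ζ = βc * u * (ζ * (ζ - zst)) := by
    intro ζ
    rw [hzstdef]
    field_simp
    ring
  have habs2 : ∀ ζ : ℂ, ‖βc * u * ζ ^ 2 + ((lam : ℝ) : ℂ) * xT * ζ‖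
      = (1/4) * (‖ζ‖ * ‖ζ - zst‖) := by
    intro ζ
    rw [h2eq, norm_mul, norm_mul, norm_mul, hu, hβdef, Complex.norm_real, Real.norm_eq_abs]
    rw [abs_of_pos (by norm_num : (0:ℝ) < 1/4)]
    ring
  refine ⟨φ, ?_, ?_, ?_, ?_⟩
  · apply Differentiable.differentiableOn
    apply Differentiable.prodMk
    · exact (differentiable_const _).add ((differentiable_id.const_mul _))
    · exact ((differentiable_pow 2).const_mul _).add (differentiable_id.const_mul _)
  · intro ζ hζ
    have ht : ‖ζ‖ < 1 := by
      simpa using mem_ball_zero_iff.1 hζ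
    have ht0 : 0 ≤ ‖ζ‖ := norm_nonneg ζ
    set t : ℝ := ‖ζ‖ with htdef
    set s : ℝ := ‖ζ - zst‖ with hsdef
    have hs0 : 0 ≤ s := norm_nonneg _
    have hs_le : s ≤ t + 4 * r := by
      calc s ≤ ‖ζ‖ + ‖zst‖ := by
            simpa [hsdef, sub_eq_add_neg] using norm_add_le ζ (-zst)
        _ ≤ t + 4 * r := by linarith [hzst_le]
    have habsN : ‖((lam : ℝ) : ℂ) * xN * ζ‖ = lam * ‖xN‖ * t := by
      rw [norm_mul, norm_mul, Complex.norm_real, Real.norm_eq_abs, abs_of_pos hlam0]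
    refine ⟨?_, ?_, ?_⟩
    · -- first coordinate in the disc
      calc ‖-(δ : ℂ) + ((lam : ℝ) : ℂ) * xN * ζ‖
          ≤ ‖-(δ : ℂ)‖ + ‖((lam : ℝ) : ℂ) * xN * ζ‖ :=
            norm_add_le _ _
        _ = δ + lam * ‖xN‖ * t := by
            rw [habsN, norm_neg, Complex.norm_real, Real.norm_eq_abs, abs_of_pos hδ0]
        _ < 1 := by nlinarith [norm_nonneg xN, mul_le_mul_of_nonneg_right hlamN ht0]
    · -- second coordinate in the disc
      show ‖βc * u * ζ ^ 2 + ((lam : ℝ) : ℂ) * xT * ζ‖ < 1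
      rw [habs2]
      nlinarith
    · -- the key inequality
      show (-(δ : ℂ) + ((lam : ℝ) : ℂ) * xN * ζ).re < ψ (‖βc * u * ζ ^ 2 + ((lam : ℝ) : ℂ) * xT * ζ‖)
      have hre : (-(δ : ℂ) + ((lam : ℝ) : ℂ) * xN * ζ).re = -δ + lam * (xN * ζ).re := by
        rw [Complex.add_re, Complex.neg_re, Complex.ofReal_re, mul_assoc,
          Complex.re_ofReal_mul]
      have key : lam * (xN * ζ).re ≤ r * Real.sqrt (t * s) := by
        rcases le_total t s with hts | hst
        · have h1 : (xN * ζ).re ≤ ‖xN‖ * t := by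
            simpa [norm_mul] using Complex.re_le_norm (xN * ζ)
          have h2 : t ≤ Real.sqrt (t * s) := by
            have h3 : Real.sqrt (t * t) ≤ Real.sqrt (t * s) :=
              Real.sqrt_le_sqrt (by nlinarith)
            rwa [Real.sqrt_mul_self ht0] at h3
          calc lam * (xN * ζ).re ≤ lam * (‖xN‖ * t) :=
                mul_le_mul_of_nonneg_left h1 hlam0.le
            _ = lam * ‖xN‖ * t := by ring
            _ ≤ r * t := mul_le_mul_of_nonneg_right hlamN ht0
            _ ≤ r * Real.sqrt (t * s) := mul_le_mul_of_nonneg_left h2 hr0.le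
        · have hsplit : xN * ζ = xN * zst + xN * (ζ - zst) := by ring
          have h1 : (xN * (ζ - zst)).re ≤ ‖xN‖ * s := by
            simpa [norm_mul] using Complex.re_le_norm (xN * (ζ - zst))
          have h2 : s ≤ Real.sqrt (t * s) := by
            have h3 : Real.sqrt (s * s) ≤ Real.sqrt (t * s) :=
              Real.sqrt_le_sqrt (by nlinarith)
            rwa [Real.sqrt_mul_self hs0] at h3
          have h4 : (xN * ζ).re ≤ ‖xN‖ * s := by
            rw [hsplit, Complex.add_re]
            linarith [hphase, h1]
          calc lam * (xN * ζ).re ≤ lam * (‖xN‖ * s) :=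
                mul_le_mul_of_nonneg_left h4 hlam0.le
            _ = lam * ‖xN‖ * s := by ring
            _ ≤ r * s := mul_le_mul_of_nonneg_right hlamN hs0
            _ ≤ r * Real.sqrt (t * s) := mul_le_mul_of_nonneg_left h2 hr0.le
      have hsq : Real.sqrt ((1/4) * (t * s)) = (1/2) * Real.sqrt (t * s) := by
        rw [show (1/4 : ℝ) * (t * s) = (1/2)^2 * (t * s) by norm_num,
          Real.sqrt_mul (by positivity), Real.sqrt_sq (by norm_num)]
      have habs2' : ‖βc * u * ζ ^ 2 + ((lam : ℝ) : ℂ) * xT * ζ‖ ∈ Icc (0:ℝ) 1 := by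
        rw [habs2]
        constructor
        · positivity
        · nlinarith
      have hψ2 := hlow _ habs2'
      rw [hre]
      calc -δ + lam * (xN * ζ).re ≤ -δ + r * Real.sqrt (t * s) := by linarith
        _ < c₀ * Real.sqrt ((1/4) * (t * s)) := by
            rw [hsq]
            nlinarith [Real.sqrt_nonneg (t * s)]
        _ = c₀ * Real.sqrt (‖βc * u * ζ ^ 2 + ((lam : ℝ) : ℂ) * xT * ζ‖) := by
            rw [habs2]
        _ ≤ _ := hψ2
  · simp [hφdef, pdel]
  · have hd1 : HasDerivAt (fun ζ : ℂ => -(δ : ℂ) + ((lam : ℝ) : ℂ) * xN * ζ)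
        (((lam : ℝ) : ℂ) * xN) 0 := by
      simpa [mul_assoc] using ((hasDerivAt_id (0:ℂ)).const_mul (((lam : ℝ) : ℂ) * xN)).const_add (-(δ:ℂ))
    have hd2 : HasDerivAt (fun ζ : ℂ => βc * u * ζ ^ 2 + ((lam : ℝ) : ℂ) * xT * ζ)
        (((lam : ℝ) : ℂ) * xT) 0 := by
      have h := (((hasDerivAt_pow 2 (0:ℂ))).const_mul (βc * u)).add
        ((hasDerivAt_id (0:ℂ)).const_mul (((lam : ℝ) : ℂ) * xT))
      simpa [mul_assoc, Pi.add_def] using h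
    have hd := hd1.prodMk hd2
    rw [hd.deriv]
    simp [Prod.ext_iff, Complex.real_smul]

lemma hasDerivAt_fst' {φ : ℂ → ℂ × ℂ} {p : ℂ × ℂ} {x : ℂ} (h : HasDerivAt φ p x) :
    HasDerivAt (fun z => (φ z).1) p.1 x := by
  simpa using h.hasFDerivAt.fst.hasDerivAt

lemma hasDerivAt_snd' {φ : ℂ → ℂ × ℂ} {p : ℂ × ℂ} {x : ℂ} (h : HasDerivAt φ p x) :
    HasDerivAt (fun z => (φ z).2) p.2 x := by
  simpa using h.hasFDerivAt.snd.hasDerivAt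

/-- Schwarz–Pick type bound: a holomorphic self-map of the unit disc has `|f'(0)| ≤ 1`. -/
lemma schwarz_pick0 {f : ℂ → ℂ} (hd : DifferentiableOn ℂ f (ball 0 1))
    (hm : MapsTo f (ball 0 1) (ball 0 1)) : ‖deriv f 0‖ ≤ 1 := by
  have h0 : (0 : ℂ) ∈ ball (0:ℂ) 1 := by simp
  set a : ℂ := f 0 with ha
  have haa : ‖a‖ < 1 := by simpa using mem_ball_zero_iff.1 (hm h0)
  have hns : Complex.normSq a < 1 := by
    rw [← Complex.sq_norm]; nlinarith [norm_nonneg a]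
  have hden : ∀ w : ℂ, ‖w‖ < 1 → 1 - (starRingEnd ℂ) a * w ≠ 0 := by
    intro w hw hcontra
    have h1 : (starRingEnd ℂ) a * w = 1 := by linear_combination -hcontra
    have : ‖(starRingEnd ℂ) a * w‖ = 1 := by simp [h1]
    rw [norm_mul, Complex.norm_conj] at this
    nlinarith [norm_nonneg w]
  have hmob : ∀ w : ℂ, ‖w‖ < 1 →
      ‖(w - a) / (1 - (starRingEnd ℂ) a * w)‖ < 1 := by
    intro w hw
    have hwns : Complex.normSq w < 1 := by
      rw [← Complex.sq_norm]; nlinarith [norm_nonneg w]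
    have expand : Complex.normSq (1 - (starRingEnd ℂ) a * w) - Complex.normSq (w - a)
        = (1 - Complex.normSq a) * (1 - Complex.normSq w) := by
      simp only [Complex.normSq_apply, Complex.sub_re, Complex.sub_im, Complex.mul_re,
        Complex.mul_im, Complex.one_re, Complex.one_im, Complex.conj_re, Complex.conj_im]
      ring
    have hlt : Complex.normSq (w - a) < Complex.normSq (1 - (starRingEnd ℂ) a * w) := by
      nlinarith [Complex.normSq_nonneg (w - a)]
    rw [norm_div, div_lt_one]
    · rw [Complex.norm_def, Complex.norm_def]
      exact Real.sqrt_lt_sqrt (Complex.normSq_nonneg _) hlt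
    · have := norm_pos_iff.2 (hden w hw)
      linarith
  set g : ℂ → ℂ := fun z => (f z - a) / (1 - (starRingEnd ℂ) a * f z) with hg
  have habs : ∀ z ∈ ball (0:ℂ) 1, ‖f z‖ < 1 := fun z hz => by
    simpa using mem_ball_zero_iff.1 (hm hz)
  have hgd : DifferentiableOn ℂ g (ball 0 1) := by
    apply DifferentiableOn.div
    · exact hd.sub (differentiableOn_const _)
    · exact (differentiableOn_const _).sub ((differentiableOn_const _).mul hd)
    · exact fun z hz => hden _ (habs z hz)
  have hg0 : g 0 = 0 := by simp [hg, ← ha]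
  have hgm : MapsTo g (ball 0 1) (ball (g 0) 1) := by
    rw [hg0]
    exact fun z hz => mem_ball_zero_iff.2 (by simpa [g] using hmob _ (habs z hz))
  have hsch := Complex.norm_deriv_le_div_of_mapsTo_ball hgd (hgm.mono_right ball_subset_closedBall) one_pos
  have hf : HasDerivAt f (deriv f 0) 0 :=
    (hd.differentiableAt (isOpen_ball.mem_nhds h0)).hasDerivAt
  have hgderiv : HasDerivAt g ((deriv f 0 * (1 - (starRingEnd ℂ) a * a) -
      (a - a) * (0 - (starRingEnd ℂ) a * deriv f 0)) / (1 - (starRingEnd ℂ) a * a) ^ 2) 0 := by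
    have hnum : HasDerivAt (fun z => f z - a) (deriv f 0) 0 := hf.sub_const a
    have hden' : HasDerivAt (fun z => 1 - (starRingEnd ℂ) a * f z)
        (0 - (starRingEnd ℂ) a * deriv f 0) 0 :=
      (hasDerivAt_const 0 (1:ℂ)).sub (hf.const_mul _)
    simpa [← ha, Pi.div_def] using hnum.div hden' (by simpa [← ha] using hden a haa)
  have hdg : deriv g 0 = deriv f 0 / (1 - (starRingEnd ℂ) a * a) := by
    rw [hgderiv.deriv, sub_self, zero_mul, sub_zero, sq]
    exact mul_div_mul_right _ _ (hden a haa)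
  rw [hdg, norm_div] at hsch
  norm_num at hsch
  rw [div_le_one (norm_pos_iff.2 (hden a haa))] at hsch
  have hca : (starRingEnd ℂ) a * a = (Complex.normSq a : ℂ) := by
    rw [mul_comm, Complex.mul_conj]
  have habs1 : ‖1 - (starRingEnd ℂ) a * a‖ = 1 - Complex.normSq a := by
    rw [hca, show (1:ℂ) - (Complex.normSq a : ℂ) = ((1 - Complex.normSq a : ℝ) : ℂ) by push_cast; ring,
      Complex.norm_real, Real.norm_eq_abs, abs_of_pos (by linarith)]
  rw [habs1] at hsch
  have := Complex.normSq_nonneg a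
  linarith

set_option maxHeartbeats 1000000 in
/-- when `ψ(x) ≥ c₀ √x`, the Kobayashi–Royden metric is comparable to
`max(|x_N|, |x_T|)`. -/
theorem stmt3 (ψ : ℝ → ℝ) (c₀ : ℝ) (hc₀ : 0 < c₀)
    (hcont : ContinuousOn ψ (Icc 0 1)) (hψ0 : ψ 0 = 0)
    (hnonneg : ∀ x ∈ Icc (0 : ℝ) 1, 0 ≤ ψ x)
    (hlow : ∀ x ∈ Icc (0 : ℝ) 1, c₀ * Real.sqrt x ≤ ψ x) :
    ∀ δ₀ ∈ Ioo (0 : ℝ) 1, ∃ C : ℝ, 1 ≤ C ∧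
      ∀ δ ∈ Ioc (0 : ℝ) δ₀, ∀ xN xT : ℂ,
        max (‖xN‖) (‖xT‖) ≤ kob (Gpsi ψ) (pdel δ) (xN, xT) ∧
        kob (Gpsi ψ) (pdel δ) (xN, xT) ≤ C * max (‖xN‖) (‖xT‖) := by
  rintro δ₀ ⟨hδ₀0, hδ₀1⟩
  set r : ℝ := min ((1 - δ₀)/2) (min (1/4) (c₀/2)) with hrdef
  have hr0 : 0 < r := lt_min (by linarith) (lt_min (by norm_num) (by linarith))
  have hr14 : r ≤ 1/4 := le_trans (min_le_right _ _) (min_le_left _ _)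
  have hrc : r ≤ c₀/2 := le_trans (min_le_right _ _) (min_le_right _ _)
  have hrδ : r ≤ (1 - δ₀)/2 := min_le_left _ _
  refine ⟨1/r, by rw [le_div_iff₀ hr0]; linarith, ?_⟩
  rintro δ ⟨hδ0, hδδ₀⟩ xN xT
  have hδ1 : δ < 1 := lt_of_le_of_lt hδδ₀ hδ₀1
  have hsum : δ + r < 1 := by linarith
  set M : ℝ := max (‖xN‖) (‖xT‖) with hMdef
  have hM0 : (0:ℝ) ≤ M := le_max_of_le_left (norm_nonneg _)
  set S : Set ℝ := {c : ℝ | ∃ lam : ℝ, 0 < lam ∧ c = 1 / lam ∧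
    ∃ φ : ℂ → ℂ × ℂ, DifferentiableOn ℂ φ (ball (0 : ℂ) 1) ∧
      MapsTo φ (ball (0 : ℂ) 1) (Gpsi ψ) ∧ φ 0 = pdel δ ∧
      deriv φ 0 = lam • ((xN, xT) : ℂ × ℂ)} with hSdef
  have hkob : kob (Gpsi ψ) (pdel δ) (xN, xT) = sInf S := rfl
  have hp : pdel δ ∈ Gpsi ψ := by
    refine ⟨?_, ?_, ?_⟩
    · simp only [pdel, Gpsi]
      rw [norm_neg, Complex.norm_real, Real.norm_eq_abs, abs_of_pos hδ0]
      exact hδ1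
    · simp [pdel]
    · simp only [pdel, map_zero, norm_zero, hψ0]
      simp [hδ0]
  have hconstmem : ∀ lam : ℝ, 0 < lam → xN = 0 → xT = 0 → (1/lam) ∈ S := by
    intro lam hlam hxN hxT
    exact ⟨lam, hlam, rfl, fun _ => pdel δ, differentiableOn_const _, fun z _ => hp, rfl,
      by simp [hxN, hxT]; rfl⟩
  have hbdd : BddBelow S := by
    refine ⟨0, ?_⟩
    rintro c ⟨lam, hlam, rfl, -⟩
    positivity
  have hne : S.Nonempty := by
    rcases eq_or_lt_of_le hM0 with h0 | hMpos
    · have hxN : xN = 0 := by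
        have := le_max_left (‖xN‖) (‖xT‖)
        rw [← hMdef, ← h0] at this
        exact norm_eq_zero.1 (le_antisymm this (norm_nonneg _))
      have hxT : xT = 0 := by
        have := le_max_right (‖xN‖) (‖xT‖)
        rw [← hMdef, ← h0] at this
        exact norm_eq_zero.1 (le_antisymm this (norm_nonneg _))
      exact ⟨1/1, hconstmem 1 one_pos hxN hxT⟩
    · exact ⟨M / r, upper_mem ψ c₀ hc₀ hlow δ r hδ0 hr0 hr14 hrc hsum xN xT hMpos⟩
  constructor
  · -- lower bound
    rw [hkob]
    apply le_csInf hne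
    rintro c ⟨lam, hlam, rfl, φ, hdiff, hmaps, hφ0, hderiv⟩
    have hdφ : DifferentiableAt ℂ φ 0 :=
      hdiff.differentiableAt (isOpen_ball.mem_nhds (by simp))
    have hD : HasDerivAt φ (lam • ((xN, xT) : ℂ × ℂ)) 0 := by
      rw [← hderiv]; exact hdφ.hasDerivAt
    have hbN : lam * ‖xN‖ ≤ 1 := by
      have h1 : ‖deriv (fun z => (φ z).1) 0‖ ≤ 1 := by
        apply schwarz_pick0 hdiff.fst
        intro z hz
        exact mem_ball_zero_iff.2 (by simpa using (hmaps hz).1)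
      have e1 : deriv (fun z => (φ z).1) 0 = lam • xN := (hasDerivAt_fst' hD).deriv
      rw [e1, Complex.real_smul, norm_mul, Complex.norm_real, Real.norm_eq_abs, abs_of_pos hlam] at h1
      exact h1
    have hbT : lam * ‖xT‖ ≤ 1 := by
      have h1 : ‖deriv (fun z => (φ z).2) 0‖ ≤ 1 := by
        apply schwarz_pick0 hdiff.snd
        intro z hz
        exact mem_ball_zero_iff.2 (by simpa using (hmaps hz).2.1)
      have e1 : deriv (fun z => (φ z).2) 0 = lam • xT := (hasDerivAt_snd' hD).deriv
      rw [e1, Complex.real_smul, norm_mul, Complex.norm_real, Real.norm_eq_abs, abs_of_pos hlam] at h1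
      exact h1
    rw [le_div_iff₀ hlam]
    have hmm : M * lam = max (‖xN‖ * lam) (‖xT‖ * lam) :=
      max_mul_of_nonneg _ _ hlam.le
    rw [hmm]
    exact max_le (by linarith [hbN]) (by linarith [hbT])
  · -- upper bound
    rw [hkob]
    rcases eq_or_lt_of_le hM0 with h0 | hMpos
    · have hxN : xN = 0 := by
        have := le_max_left (‖xN‖) (‖xT‖)
        rw [← hMdef, ← h0] at this
        exact norm_eq_zero.1 (le_antisymm this (norm_nonneg _))
      have hxT : xT = 0 := by
        have := le_max_right (‖xN‖) (‖xT‖)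
        rw [← hMdef, ← h0] at this
        exact norm_eq_zero.1 (le_antisymm this (norm_nonneg _))
      have hle : sInf S ≤ 0 := by
        apply le_of_forall_pos_le_add
        intro ε hε
        have := csInf_le hbdd (hconstmem (1/ε) (by positivity) hxN hxT)
        rw [one_div_one_div] at this
        linarith
      rw [← h0, mul_zero]
      exact hle
    · have hmem : M / r ∈ S := upper_mem ψ c₀ hc₀ hlow δ r hδ0 hr0 hr14 hrc hsum xN xT hMpos
      calc sInf S ≤ M / r := csInf_le hbdd hmem
        _ = 1/r * M := by ring
end

section
/- Let 1/2 < β < 1 and ψ(x) = x^β. Then for every δ₀ ∈ (0,1) there exist constants 0 < c < C (depending only on β and δ₀) such that for all δ ∈ (0, δ₀] and all x_N, x_T ∈ ℂ with |x_T| ≤ δ^{1/β − 1}·|x_N|: c·δ^{1/(2β) − 1}·|x_N| ≤ κ_{G_ψ}(p_δ; (x_N, x_T)) ≤ C·δ^{1/(2β) − 1}·|x_N|. -/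
open Complex Metric Set

lemma absLeAbsOfRe {u : ℂ} {M' : ℝ} (hM' : 0 < M') (hre : u.re ≤ M') :
    ‖u‖ ≤ ‖((2*M' : ℝ) : ℂ) - u‖ := by
  have h1 : ‖u‖^2 ≤ ‖((2*M' : ℝ) : ℂ) - u‖^2 := by
    rw [Complex.sq_norm, Complex.sq_norm,
      Complex.normSq_apply, Complex.normSq_apply]
    simp only [Complex.sub_re, Complex.sub_im, Complex.ofReal_re, Complex.ofReal_im]
    nlinarith
  have h2 := Real.sqrt_le_sqrt h1
  rwa [Real.sqrt_sq (norm_nonneg _), Real.sqrt_sq (norm_nonneg _)] at h2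

lemma borelCaratheodory {H : ℂ → ℂ} {M : ℝ}
    (hd : DifferentiableOn ℂ H (ball 0 1))
    (hM : ∀ ζ ∈ ball (0:ℂ) 1, (H ζ).re ≤ M)
    (hM0 : (H 0).re < M) :
    ‖deriv H 0‖ ≤ 4 * (M - (H 0).re) := by
  set M' : ℝ := M - (H 0).re with hM'def
  have hM' : 0 < M' := sub_pos.2 hM0
  set v : ℂ → ℂ := fun ζ => ((2*M' : ℝ) : ℂ) - (H ζ - H 0) with hv
  have h0mem : (0:ℂ) ∈ ball (0:ℂ) 1 := mem_ball_self one_pos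
  have hrele : ∀ ζ ∈ ball (0:ℂ) 1, (H ζ - H 0).re ≤ M' := by
    intro ζ hζ
    have := hM ζ hζ
    rw [Complex.sub_re]
    simp only [hM'def]
    linarith
  have habs : ∀ ζ ∈ ball (0:ℂ) 1, ‖H ζ - H 0‖ ≤ ‖v ζ‖ := fun ζ hζ =>
    absLeAbsOfRe hM' (hrele ζ hζ)
  have hvne : ∀ ζ ∈ ball (0:ℂ) 1, v ζ ≠ 0 := by
    intro ζ hζ hz
    have h1 : (v ζ).re = 0 := by rw [hz]; simp
    have h2 := hrele ζ hζ
    rw [hv] at h1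
    simp only [Complex.sub_re, Complex.ofReal_re] at h1
    rw [Complex.sub_re] at h2
    linarith
  set F : ℂ → ℂ := fun ζ => (H ζ - H 0) / v ζ with hF
  have hF0 : F 0 = 0 := by simp [hF]
  have hFd : DifferentiableOn ℂ F (ball 0 1) :=
    DifferentiableOn.div (hd.sub_const _) ((differentiableOn_const _).sub (hd.sub_const _)) hvne
  have hmaps : MapsTo F (ball 0 1) (ball (F 0) 2) := by
    intro ζ hζ
    rw [mem_ball, hF0, dist_zero_right]
    have hvpos : 0 < ‖v ζ‖ := norm_pos_iff.2 (hvne ζ hζ)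
    have : ‖F ζ‖ ≤ 1 := by
      rw [hF]
      simp only [norm_div]
      exact div_le_one_of_le₀ (habs ζ hζ) hvpos.le
    linarith
  have hH : HasDerivAt H (deriv H 0) 0 :=
    (hd.differentiableAt (isOpen_ball.mem_nhds h0mem)).hasDerivAt
  have hu : HasDerivAt (fun ζ => H ζ - H 0) (deriv H 0) 0 := hH.sub_const _
  have hvd : HasDerivAt v (0 - deriv H 0) 0 :=
    (hasDerivAt_const (0:ℂ) (((2*M' : ℝ)) : ℂ)).sub hu
  rw [zero_sub] at hvd
  have hv0 : v 0 = ((2*M' : ℝ) : ℂ) := by simp [hv]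
  have h2M'ne : ((2*M' : ℝ) : ℂ) ≠ 0 := by
    simp only [ne_eq, Complex.ofReal_eq_zero]
    linarith
  have hFder : HasDerivAt F (deriv H 0 / ((2*M' : ℝ) : ℂ)) 0 := by
    have h := hu.div hvd (by rw [hv0]; exact h2M'ne)
    have heq : (deriv H 0 * v 0 - (H 0 - H 0) * -deriv H 0) / v 0 ^ 2
        = deriv H 0 / ((2*M' : ℝ) : ℂ) := by
      rw [hv0, sub_self, zero_mul, sub_zero,
        div_eq_div_iff (pow_ne_zero 2 h2M'ne) h2M'ne]
      ring
    rwa [heq] at h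
  have hsch := Complex.norm_deriv_le_div_of_mapsTo_ball hFd (hmaps.mono_right ball_subset_closedBall) one_pos
  rw [hFder.deriv, norm_div] at hsch
  have h2M : ‖((2*M' : ℝ) : ℂ)‖ = 2*M' := by
    rw [Complex.norm_real, Real.norm_eq_abs]
    exact abs_of_pos (by linarith)
  rw [h2M] at hsch
  have h2M'pos : 0 < 2*M' := by linarith
  rw [div_le_div_iff₀ h2M'pos one_pos] at hsch
  linarith


lemma numericLem {β t : ℝ} (hβ0 : 1/2 < β) (hβ1 : β < 1) (ht : 0 ≤ t)
    (h : t ≤ 8 * ((t+9)/2) ^ β + 8) : t ≤ (16:ℝ) ^ (1/(1-β)) := by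
  have h1β : 0 < 1 - β := by linarith
  have hexp : (1:ℝ) ≤ 1/(1-β) := by
    rw [le_div_iff₀ h1β]; linarith
  by_cases h16 : t ≤ 16
  · calc t ≤ 16 := h16
      _ = (16:ℝ) ^ (1:ℝ) := (Real.rpow_one _).symm
      _ ≤ (16:ℝ) ^ (1/(1-β)) := Real.rpow_le_rpow_of_exponent_le (by norm_num) hexp
  · push_neg at h16
    have htpos : 0 < t := by linarith
    have hb : ((t+9)/2 : ℝ) ^ β ≤ t ^ β := by
      apply Real.rpow_le_rpow (by linarith) (by linarith) (by linarith)
    have h2 : t ≤ 16 * t ^ β := by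
      have h8 : (8:ℝ) ≤ t/2 := by linarith
      nlinarith [h, hb]
    have htβpos : 0 < t ^ β := Real.rpow_pos_of_pos htpos β
    have h3 : t ^ (1 - β) ≤ 16 := by
      rw [Real.rpow_sub htpos, Real.rpow_one, div_le_iff₀ htβpos]
      linarith
    calc t = (t ^ (1-β)) ^ (1/(1-β)) := by
          rw [← Real.rpow_mul htpos.le, mul_one_div, div_self h1β.ne', Real.rpow_one]
      _ ≤ (16:ℝ) ^ (1/(1-β)) :=
          Real.rpow_le_rpow (Real.rpow_nonneg htpos.le _) h3 (by positivity)

set_option maxHeartbeats 1000000 in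
lemma lower_core {β δ : ℝ} (hβ0 : 1/2 < β) (hβ1 : β < 1) (hδ : 0 < δ) (hδ1 : δ < 1)
    {xN xT : ℂ} (hxT : ‖xT‖ ≤ δ ^ (1/β - 1) * ‖xN‖)
    {lam : ℝ} (hlam : 0 < lam) {φ : ℂ → ℂ × ℂ}
    (hd : DifferentiableOn ℂ φ (ball 0 1))
    (hmaps : MapsTo φ (ball 0 1) (Gpsi fun x => x ^ β))
    (h0 : φ 0 = pdel δ) (hder : deriv φ 0 = lam • (xN, xT)) :
    lam * ‖xN‖ * δ ^ (1/(2*β) - 1) ≤ (16:ℝ) ^ (1/(1-β)) := by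
  have hβpos : 0 < β := by linarith
  set s : ℝ := δ ^ (1/(2*β)) with hs
  have hspos : 0 < s := Real.rpow_pos_of_pos hδ _
  have hs1 : s < 1 := Real.rpow_lt_one hδ.le hδ1 (by positivity)
  set r : ℝ := s/2 with hrdef
  have hr0 : 0 < r := by positivity
  have hrhalf : r < 1/2 := by rw [hrdef]; linarith
  set φ₂ : ℂ → ℂ := fun ζ => (φ ζ).2 with hφ₂
  have h0mem : (0:ℂ) ∈ ball (0:ℂ) 1 := mem_ball_self one_pos
  have hφat : HasDerivAt φ (lam • (xN, xT)) 0 := by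
    have := (hd.differentiableAt (isOpen_ball.mem_nhds h0mem)).hasDerivAt
    rwa [hder] at this
  have hφ2at : HasDerivAt φ₂ (lam • xT) 0 := (hasFDerivAt_snd (𝕜 := ℂ) (p := φ 0)).comp_hasDerivAt 0 hφat
  have hφ1at : HasDerivAt (fun z => (φ z).1) (lam • xN) 0 :=
    (hasFDerivAt_fst (𝕜 := ℂ) (p := φ 0)).comp_hasDerivAt 0 hφat
  have hd2 : DifferentiableOn ℂ φ₂ (ball 0 1) := hd.snd
  have hφ₂lt1 : ∀ w ∈ ball (0:ℂ) 1, ‖φ₂ w‖ < 1 := by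
    intro w hw
    have := (hmaps hw).2.1
    exact this
  -- derivative bound on half ball
  have hder4 : ∀ w ∈ ball (0:ℂ) (1/2:ℝ), ‖deriv φ₂ w‖ ≤ 4 := by
    intro w hw
    have hsub : ball w (1/2:ℝ) ⊆ ball (0:ℂ) 1 := by
      intro ζ hζ
      rw [mem_ball] at *
      calc dist ζ 0 ≤ dist ζ w + dist w 0 := dist_triangle _ _ _
        _ < 1/2 + 1/2 := add_lt_add hζ hw
        _ = 1 := by norm_num
    have hmaps2 : MapsTo φ₂ (ball w (1/2:ℝ)) (ball (φ₂ w) 2) := by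
      intro ζ hζ
      rw [mem_ball]
      calc dist (φ₂ ζ) (φ₂ w) = ‖φ₂ ζ - φ₂ w‖ := dist_eq_norm _ _
        _ ≤ ‖φ₂ ζ‖ + ‖φ₂ w‖ := norm_sub_le _ _
        _ < 1 + 1 := add_lt_add (hφ₂lt1 ζ (hsub hζ))
            (hφ₂lt1 w (hsub (mem_ball_self (by norm_num))))
        _ = 2 := by norm_num
    have h := Complex.norm_deriv_le_div_of_mapsTo_ball (hd2.mono hsub) (hmaps2.mono_right ball_subset_closedBall) (by norm_num)
    norm_num at h
    exact h
  set a : ℝ := lam * ‖xT‖ with ha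
  have ha0 : 0 ≤ a := by positivity
  have hnorm0 : ‖deriv φ₂ 0‖ = a := by
    rw [hφ2at.deriv, norm_smul, Real.norm_eq_abs, abs_of_pos hlam]
  -- Schwarz for deriv φ₂ - deriv φ₂ 0
  have hgbd : ∀ w ∈ ball (0:ℂ) (1/2:ℝ), ‖deriv φ₂ w - deriv φ₂ 0‖ ≤ 18 * ‖w‖ := by
    have hdd : DifferentiableOn ℂ (deriv φ₂) (ball 0 1) :=
      ((hd2.analyticOnNhd isOpen_ball).deriv).differentiableOn
    intro w hw
    set g : ℂ → ℂ := fun w => deriv φ₂ w - deriv φ₂ 0 with hgdef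
    have hgd : DifferentiableOn ℂ g (ball 0 (1/2:ℝ)) :=
      (hdd.mono (ball_subset_ball (by norm_num))).sub_const _
    have hg0 : g 0 = 0 := sub_self _
    have hgmaps : MapsTo g (ball (0:ℂ) (1/2:ℝ)) (ball (g 0) 9) := by
      intro ζ hζ
      rw [mem_ball, hg0, dist_zero_right]
      have h1 := hder4 ζ hζ
      have h2 := hder4 0 (mem_ball_self (by norm_num))
      calc ‖g ζ‖ ≤ ‖deriv φ₂ ζ‖ + ‖deriv φ₂ 0‖ := norm_sub_le _ _
        _ < 9 := by linarith
    have h := Complex.dist_le_div_mul_dist_of_mapsTo_ball hgd (hgmaps.mono_right ball_subset_closedBall) hw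
    rw [hg0, dist_zero_right, dist_zero_right] at h
    norm_num at h
    exact h
  -- quadratic bound for φ₂
  have hφ₂0 : φ₂ 0 = 0 := by rw [hφ₂]; simp only; rw [h0]; rfl
  have hquad : ∀ ζ : ℂ, ‖ζ‖ ≤ r → ‖(φ₂ ζ)‖ ≤ (a + 18*r)*r := by
    intro ζ hζ
    have hsub2 : closedBall (0:ℂ) r ⊆ ball (0:ℂ) (1/2:ℝ) := closedBall_subset_ball hrhalf
    have hsub3 : closedBall (0:ℂ) r ⊆ ball (0:ℂ) 1 :=
      hsub2.trans (ball_subset_ball (by norm_num))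
    have hζmem : ζ ∈ closedBall (0:ℂ) r := by
      rwa [mem_closedBall, dist_zero_right]
    have hmvt := Convex.norm_image_sub_le_of_norm_hasDerivWithin_le
      (f := φ₂) (f' := deriv φ₂) (s := closedBall (0:ℂ) r) (C := a + 18*r) (x := 0) (y := ζ)
      (fun w hw =>
        ((hd2.differentiableAt (isOpen_ball.mem_nhds (hsub3 hw))).hasDerivAt).hasDerivWithinAt)
      (fun w hw => by
        have h1 := hgbd w (hsub2 hw)
        have h2 : ‖w‖ ≤ r := by rwa [mem_closedBall, dist_zero_right] at hw
        calc ‖deriv φ₂ w‖ ≤ ‖deriv φ₂ w - deriv φ₂ 0‖ + ‖deriv φ₂ 0‖ := by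
              simpa using norm_add_le (deriv φ₂ w - deriv φ₂ 0) (deriv φ₂ 0)
          _ ≤ a + 18*r := by rw [hnorm0]; linarith)
      (convex_closedBall _ _) (mem_closedBall_self hr0.le) hζmem
    rw [hφ₂0, sub_zero, sub_zero] at hmvt
    calc ‖(φ₂ ζ)‖ ≤ (a + 18*r) * ‖ζ‖ := by
          exact hmvt
      _ ≤ (a + 18*r) * r := mul_le_mul_of_nonneg_left hζ (by positivity)
  -- Borel-Caratheodory for H = φ₁ ∘ (r ·)
  set M : ℝ := ((a + 18*r)*r) ^ β with hM
  have hMnn : 0 ≤ M := Real.rpow_nonneg (by positivity) _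
  set H : ℂ → ℂ := fun ζ => (φ ((r:ℂ) * ζ)).1 with hH
  have hrmem : ∀ ζ ∈ ball (0:ℂ) 1, ((r:ℂ)*ζ) ∈ ball (0:ℂ) 1 := by
    intro ζ hζ
    rw [mem_ball, dist_zero_right] at *
    rw [norm_mul, Complex.norm_real, Real.norm_eq_abs, abs_of_pos hr0]
    nlinarith
  have hrabs : ∀ ζ ∈ ball (0:ℂ) 1, ‖((r:ℂ)*ζ)‖ ≤ r := by
    intro ζ hζ
    rw [mem_ball, dist_zero_right] at hζ
    rw [norm_mul, Complex.norm_real, Real.norm_eq_abs, abs_of_pos hr0]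
    nlinarith [norm_nonneg ζ]
  have hHd : DifferentiableOn ℂ H (ball 0 1) := by
    apply DifferentiableOn.comp (g := fun z => (φ z).1) hd.fst
    · exact ((differentiable_id.const_mul ((r:ℂ))).differentiableOn)
    · exact hrmem
  have hHre : ∀ ζ ∈ ball (0:ℂ) 1, (H ζ).re ≤ M := by
    intro ζ hζ
    have hmem := hmaps (hrmem ζ hζ)
    have h1 : (φ ((r:ℂ)*ζ)).1.re < (‖(φ ((r:ℂ)*ζ)).2‖) ^ β := hmem.2.2
    have h2 : ‖(φ ((r:ℂ)*ζ)).2‖ ≤ (a + 18*r)*r := hquad _ (hrabs ζ hζ)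
    have h3 : (‖(φ ((r:ℂ)*ζ)).2‖) ^ β ≤ M := by
      rw [hM]
      exact Real.rpow_le_rpow (norm_nonneg _) h2 hβpos.le
    calc (H ζ).re = (φ ((r:ℂ)*ζ)).1.re := rfl
      _ ≤ M := by linarith
  have hH0re : (H 0).re = -δ := by
    rw [hH]; simp only [mul_zero, h0]; simp [pdel]
  have hHlt : (H 0).re < M := by rw [hH0re]; linarith
  have hbc := borelCaratheodory hHd hHre hHlt
  have hmul : HasDerivAt (fun ζ : ℂ => (r:ℂ) * ζ) (r:ℂ) 0 := by
    simpa using (hasDerivAt_id (0:ℂ)).const_mul (r:ℂ)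
  have hHat : HasDerivAt H ((lam • xN) * (r:ℂ)) 0 := by
    have h00 : ((r:ℂ) * 0) = 0 := mul_zero _
    rw [← h00] at hφ1at
    exact HasDerivAt.comp 0 hφ1at hmul
  have hnormH : ‖(lam • xN) * (r:ℂ)‖ = lam * ‖xN‖ * r := by
    rw [norm_mul, norm_smul, Real.norm_eq_abs, abs_of_pos hlam,
      Complex.norm_real, Real.norm_eq_abs, abs_of_pos hr0]
  have hkey : lam * ‖xN‖ * r ≤ 4*(M + δ) := by
    rw [hHat.deriv, hnormH, hH0re] at hbc
    linarith
  -- final algebra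
  set t : ℝ := lam * ‖xN‖ * δ ^ (1/(2*β) - 1) with htdef
  have ht0 : 0 ≤ t := by positivity
  have hats : a ≤ t * s := by
    have h1 : a ≤ lam * (δ ^ (1/β - 1 : ℝ) * ‖xN‖) :=
      mul_le_mul_of_nonneg_left hxT hlam.le
    have h2 : δ ^ (1/β - 1 : ℝ) = δ ^ (1/(2*β) - 1 : ℝ) * s := by
      rw [hs, ← Real.rpow_add hδ]
      congr 1
      have hβne : β ≠ 0 := hβpos.ne'
      field_simp
      ring
    calc a ≤ lam * (δ ^ (1/β-1 : ℝ) * ‖xN‖) := h1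
      _ = t * s := by rw [h2, htdef]; ring
  have hss : s * s = δ ^ (1/β : ℝ) := by
    rw [hs, ← Real.rpow_add hδ]
    congr 1
    rw [← add_div]
    rw [show (1:ℝ) + 1 = 2 by norm_num, div_eq_div_iff (by positivity) hβpos.ne']
    ring
  have hsβ : (δ ^ (1/β : ℝ)) ^ β = δ := by
    rw [← Real.rpow_mul hδ.le, one_div_mul_cancel hβpos.ne', Real.rpow_one]
  have hMle : M ≤ ((t+9)/2) ^ β * δ := by
    have h1 : (a + 18*r)*r ≤ ((t+9)/2) * δ ^ (1/β : ℝ) := by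
      rw [hrdef]
      have hsum : a + 18*(s/2) ≤ (t+9)*s := by nlinarith [hats]
      calc (a + 18*(s/2))*(s/2) ≤ ((t+9)*s)*(s/2) :=
            mul_le_mul_of_nonneg_right hsum (by positivity)
        _ = ((t+9)/2)*(s*s) := by ring
        _ = ((t+9)/2)*δ^(1/β:ℝ) := by rw [hss]
    calc M ≤ (((t+9)/2) * δ ^ (1/β:ℝ)) ^ β := by
          rw [hM]
          exact Real.rpow_le_rpow (by positivity) h1 hβpos.le
      _ = ((t+9)/2)^β * δ := by
          rw [Real.mul_rpow (by positivity) (by positivity), hsβ]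
  have hsδ : δ ^ (1/(2*β) - 1 : ℝ) = s / δ := by
    rw [hs, Real.rpow_sub hδ, Real.rpow_one]
  have hfin : t ≤ 8 * ((t+9)/2)^β + 8 := by
    have h1 : lam * ‖xN‖ * (s/2) ≤ 4*(((t+9)/2)^β*δ + δ) := by
      calc lam * ‖xN‖ * (s/2) = lam * ‖xN‖ * r := by rw [hrdef]
        _ ≤ 4*(M+δ) := hkey
        _ ≤ 4*(((t+9)/2)^β*δ + δ) := by linarith [hMle]
    have h2 : t * δ = lam * ‖xN‖ * s := by
      rw [htdef, hsδ]
      field_simp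
    have h3 : t * δ ≤ (8*((t+9)/2)^β + 8) * δ := by
      rw [h2]; linarith
    exact le_of_mul_le_mul_right (by linarith) hδ
  exact numericLem hβ0 hβ1 ht0 hfin

set_option maxHeartbeats 1000000 in
lemma upper_disc {β δ δ₀ : ℝ} (hβ0 : 1/2 < β) (hβ1 : β < 1) (hδ : 0 < δ) (hδδ₀ : δ ≤ δ₀)
    (hδ₀0 : 0 < δ₀) (hδ₀1 : δ₀ < 1) {xN xT : ℂ} (hxN : xN ≠ 0)
    (hxT : ‖xT‖ ≤ δ ^ (1/β - 1) * ‖xN‖) :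
    ∃ lam : ℝ, 0 < lam ∧
      (1 / min ((1-δ₀)/2) (1/4)) * δ ^ (1/(2*β) - 1) * ‖xN‖ = 1/lam ∧
      ∃ φ : ℂ → ℂ × ℂ, DifferentiableOn ℂ φ (ball (0:ℂ) 1) ∧
        MapsTo φ (ball (0:ℂ) 1) (Gpsi fun x => x ^ β) ∧ φ 0 = pdel δ ∧
        deriv φ 0 = lam • (xN, xT) := by
  have hβpos : 0 < β := by linarith
  have h2β : (0:ℝ) < 2*β := by linarith
  have hhalf : (1:ℝ)/(2*β) + 1/(2*β) = 1/β := by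
    rw [← add_div, show (1:ℝ) + 1 = 2 by norm_num,
      div_eq_div_iff h2β.ne' hβpos.ne']
    ring
  set c₁ : ℝ := min ((1-δ₀)/2) (1/4) with hc₁
  have hc₁pos : 0 < c₁ := lt_min (by linarith) (by norm_num)
  have hc₁4 : c₁ ≤ 1/4 := min_le_right _ _
  have hc₁δ₀ : c₁ ≤ (1-δ₀)/2 := min_le_left _ _
  have hδ1 : δ < 1 := lt_of_le_of_lt hδδ₀ hδ₀1
  have haN : 0 < ‖xN‖ := by rwa [norm_pos_iff]
  set e : ℝ := δ ^ (1 - 1/(2*β)) with he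
  have hepos : 0 < e := Real.rpow_pos_of_pos hδ _
  have hexppos : 0 < 1 - 1/(2*β) := by
    have h1 : 1/(2*β) < 1 := by rw [div_lt_one h2β]; linarith
    linarith
  have he1 : e ≤ 1 := Real.rpow_le_one hδ.le hδ1.le hexppos.le
  set s : ℝ := δ ^ (1/(2*β)) with hs
  have hspos : 0 < s := Real.rpow_pos_of_pos hδ _
  have hs1 : s < 1 := Real.rpow_lt_one hδ.le hδ1 (by positivity)
  have hes : e * s = δ := by
    rw [he, hs, ← Real.rpow_add hδ, show (1 - 1/(2*β)) + 1/(2*β) = (1:ℝ) by ring,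
      Real.rpow_one]
  set lam : ℝ := c₁ * e / ‖xN‖ with hlam
  have hlampos : 0 < lam := by positivity
  have hA : lam * ‖xN‖ = c₁ * e := by
    rw [hlam]; field_simp
  have haT : lam * ‖xT‖ ≤ c₁ * s := by
    have h1 : lam * ‖xT‖ ≤ lam * (δ^(1/β-1:ℝ) * ‖xN‖) :=
      mul_le_mul_of_nonneg_left hxT hlampos.le
    have h2 : lam * (δ^(1/β-1:ℝ) * ‖xN‖) = c₁ * (e * δ^(1/β-1:ℝ)) := by
      rw [hlam]; field_simp
    have h3 : e * δ^(1/β-1:ℝ) = s := by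
      rw [he, hs, ← Real.rpow_add hδ]
      congr 1
      linarith [hhalf]
    rw [h2, h3] at h1
    exact h1
  refine ⟨lam, hlampos, ?_, ?_⟩
  · have heinv : δ ^ (1/(2*β) - 1 : ℝ) = e⁻¹ := by
      rw [he, ← Real.rpow_neg hδ.le]
      congr 1
      ring
    rw [hlam, heinv]
    have h1 : c₁ ≠ 0 := hc₁pos.ne'
    have h2 : e ≠ 0 := hepos.ne'
    have h3 : ‖xN‖ ≠ 0 := haN.ne'
    field_simp
  · set L : ℂ := (lam : ℂ) with hL
    have hLabs : ‖L‖ = lam := by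
      rw [hL, Complex.norm_real, Real.norm_eq_abs, abs_of_pos hlampos]
    refine ⟨fun ζ => ((-δ:ℂ) + (L*xN)*ζ, (L*xT)*ζ + ζ^2/2), ?_, ?_, ?_, ?_⟩
    · apply Differentiable.differentiableOn
      apply Differentiable.prodMk
      · exact (differentiable_id.const_mul (L*xN)).const_add _
      · exact (differentiable_id.const_mul (L*xT)).add
          ((differentiable_pow 2).div_const 2)
    · -- MapsTo
      intro ζ hζ
      rw [mem_ball, dist_zero_right] at hζ
      set t : ℝ := ‖ζ‖ with ht
      have ht0 : 0 ≤ t := norm_nonneg _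
      have habs1 : ‖((L*xN)*ζ)‖ = c₁ * e * t := by
        rw [norm_mul, norm_mul, hLabs, ht]
        rw [show lam * ‖xN‖ * ‖ζ‖
            = (lam * ‖xN‖) * ‖ζ‖ by ring, hA]
      have habs2 : ‖((L*xT)*ζ)‖ ≤ c₁ * s * t := by
        rw [norm_mul, norm_mul, hLabs]
        have := mul_le_mul_of_nonneg_right haT ht0
        calc lam * ‖xT‖ * ‖ζ‖ ≤ c₁ * s * ‖ζ‖ := this
          _ = c₁ * s * t := rfl
      have habsq : ‖(ζ^2/2)‖ = t^2/2 := by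
        rw [norm_div, norm_pow, Complex.norm_two, ht]
      simp only [Gpsi, Set.mem_setOf_eq]
      refine ⟨?_, ?_, ?_⟩
      · -- |z₁| < 1
        have habsδ : ‖(-δ:ℂ)‖ = δ := by
          rw [show ((-δ : ℂ)) = ((-δ : ℝ) : ℂ) by push_cast; ring, Complex.norm_real, Real.norm_eq_abs,
            abs_neg, abs_of_pos hδ]
        calc ‖((-δ:ℂ) + (L*xN)*ζ)‖
            ≤ ‖(-δ:ℂ)‖ + ‖((L*xN)*ζ)‖ := norm_add_le _ _
          _ = δ + c₁ * e * t := by rw [habs1, habsδ]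
          _ < 1 := by
              have p1 : c₁ * e * t ≤ c₁ * e := by
                calc c₁ * e * t ≤ c₁ * e * 1 :=
                      mul_le_mul_of_nonneg_left hζ.le (by positivity)
                  _ = c₁ * e := by ring
              have p2 : c₁ * e ≤ c₁ := by
                calc c₁ * e ≤ c₁ * 1 := mul_le_mul_of_nonneg_left he1 hc₁pos.le
                  _ = c₁ := by ring
              linarith
      · -- |z₂| < 1
        calc ‖((L*xT)*ζ + ζ^2/2)‖
            ≤ ‖((L*xT)*ζ)‖ + ‖(ζ^2/2)‖ := norm_add_le _ _
          _ ≤ c₁ * s * t + t^2/2 := by rw [habsq]; linarith [habs2]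
          _ < 1 := by
              have p1 : c₁ * s * t ≤ c₁ := by
                calc c₁ * s * t ≤ c₁ * s * 1 :=
                      mul_le_mul_of_nonneg_left hζ.le (by positivity)
                  _ = c₁ * s := by ring
                  _ ≤ c₁ * 1 := mul_le_mul_of_nonneg_left hs1.le hc₁pos.le
                  _ = c₁ := by ring
              have p2 : t^2 < 1 := pow_lt_one₀ ht0 hζ (by norm_num)
              linarith
      · -- Re z₁ < |z₂|^β
        have hre : ((-δ:ℂ) + (L*xN)*ζ).re ≤ -δ + c₁ * e * t := by
          rw [Complex.add_re]
          have h1 : ((L*xN)*ζ).re ≤ ‖((L*xN)*ζ)‖ := Complex.re_le_norm _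
          have h2 : ((-δ:ℂ)).re = -δ := by simp
          rw [h2]
          linarith [habs1 ▸ h1]
        have hz2nn : (0:ℝ) ≤ ‖((L*xT)*ζ + ζ^2/2)‖ := norm_nonneg _
        rcases le_or_gt t s with hts | hts
        · -- small t
          have h1 : c₁ * e * t ≤ c₁ * δ := by
            calc c₁ * e * t ≤ c₁ * e * s := by
                  apply mul_le_mul_of_nonneg_left hts (by positivity)
              _ = c₁ * δ := by rw [mul_assoc, hes]
          have h2 : ((-δ:ℂ) + (L*xN)*ζ).re < 0 := by
            have p1 : c₁ * δ ≤ (1/4) * δ := mul_le_mul_of_nonneg_right hc₁4 hδ.le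
            linarith
          calc ((-δ:ℂ) + (L*xN)*ζ).re < 0 := h2
            _ ≤ (‖((L*xT)*ζ + ζ^2/2)‖) ^ β := Real.rpow_nonneg hz2nn β
        · -- large t
          have htpos : 0 < t := lt_trans hspos hts
          have hlow : t^2/4 ≤ ‖((L*xT)*ζ + ζ^2/2)‖ := by
            have h6 : ‖ζ^2/2‖ - ‖-((L*xT)*ζ)‖ ≤ ‖ζ^2/2 - -((L*xT)*ζ)‖ :=
              norm_sub_norm_le _ _
            rw [sub_neg_eq_add, norm_neg, add_comm] at h6
            have h7 : c₁ * s * t ≤ t^2/4 := by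
              have p1 : c₁ * s ≤ (1/4) * t := by
                calc c₁ * s ≤ (1/4) * s := mul_le_mul_of_nonneg_right hc₁4 hspos.le
                  _ ≤ (1/4) * t := by linarith
              calc c₁ * s * t ≤ ((1/4) * t) * t := mul_le_mul_of_nonneg_right p1 ht0
                _ = t^2/4 := by ring
            rw [habsq] at h6
            linarith [habs2]
          have hpow1 : (t^2/4 : ℝ) ^ β ≤ (‖((L*xT)*ζ + ζ^2/2)‖) ^ β :=
            Real.rpow_le_rpow (by positivity) hlow hβpos.le
          have ht2 : (t^2 : ℝ) = t ^ (2:ℝ) := by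
            rw [← Real.rpow_natCast t 2]
            norm_num
          have hpow2 : (t^2/4 : ℝ) ^ β = t^(2*β) / (4:ℝ)^β := by
            rw [Real.div_rpow (by positivity) (by norm_num), ht2, ← Real.rpow_mul ht0]
          have h4β : (4:ℝ)^β ≤ 4 := by
            calc (4:ℝ)^β ≤ (4:ℝ)^(1:ℝ) :=
                Real.rpow_le_rpow_of_exponent_le (by norm_num) hβ1.le
              _ = 4 := Real.rpow_one _
          have h4βpos : (0:ℝ) < (4:ℝ)^β := Real.rpow_pos_of_pos (by norm_num) _
          have hdiv : t^(2*β)/4 ≤ t^(2*β)/(4:ℝ)^β := by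
            apply div_le_div_of_nonneg_left (by positivity) h4βpos h4β
          have hkey2 : (2*β) * (1/(2*β)) = 1 := mul_one_div_cancel h2β.ne'
          have hsplit : t^(2*β) = t^(2*β - 1) * t := by
            have h := Real.rpow_add htpos (2*β-1) 1
            rw [Real.rpow_one, show (2*β - 1 + 1 : ℝ) = 2*β by ring] at h
            exact h
          have hts' : e ≤ t^(2*β-1) := by
            have h1 : s ^ (2*β - 1) ≤ t ^ (2*β-1) :=
              Real.rpow_le_rpow hspos.le hts.le (by linarith)
            have h2 : s ^ (2*β-1 : ℝ) = e := by
              rw [hs, he, ← Real.rpow_mul hδ.le]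
              congr 1
              linear_combination hkey2
            linarith [h2 ▸ h1]
          have h8 : e * t ≤ t^(2*β) := by
            rw [hsplit]
            exact mul_le_mul_of_nonneg_right hts' ht0
          have h9 : c₁ * e * t ≤ t^(2*β)/4 := by
            calc c₁ * e * t = c₁ * (e * t) := by ring
              _ ≤ (1/4) * (e * t) := mul_le_mul_of_nonneg_right hc₁4 (by positivity)
              _ ≤ (1/4) * t^(2*β) := mul_le_mul_of_nonneg_left h8 (by norm_num)
              _ = t^(2*β)/4 := by ring
          calc ((-δ:ℂ) + (L*xN)*ζ).re ≤ -δ + c₁*e*t := hre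
            _ < c₁*e*t := by linarith
            _ ≤ t^(2*β)/4 := h9
            _ ≤ t^(2*β)/(4:ℝ)^β := hdiv
            _ = (t^2/4 : ℝ)^β := hpow2.symm
            _ ≤ (‖((L*xT)*ζ + ζ^2/2)‖) ^ β := hpow1
    · show ((-δ:ℂ) + (L*xN)*0, (L*xT)*0 + 0^2/2) = pdel δ
      rw [pdel]
      norm_num
    · have h1 : HasDerivAt (fun ζ:ℂ => (-δ:ℂ) + (L*xN)*ζ) (L*xN) 0 := by
        simpa using (HasDerivAt.const_mul (L*xN) (hasDerivAt_id (0:ℂ))).const_add (-δ:ℂ)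
      have hq : HasDerivAt (fun ζ:ℂ => ζ^2/2) 0 0 := by
        simpa using (hasDerivAt_pow 2 (0:ℂ)).div_const 2
      have h2 : HasDerivAt (fun ζ:ℂ => (L*xT)*ζ + ζ^2/2) (L*xT) 0 := by
        have := (HasDerivAt.const_mul (L*xT) (hasDerivAt_id (0:ℂ))).add hq
        simp only [id_eq, mul_one, add_zero] at this
        exact this
      rw [(h1.prodMk h2).deriv]
      have hs1' : lam • xN = L * xN := by rw [hL, Complex.real_smul]
      have hs2' : lam • xT = L * xT := by rw [hL, Complex.real_smul]
      rw [Prod.ext_iff]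
      constructor
      · exact hs1'.symm
      · exact hs2'.symm

lemma pdel_mem_Gpsi {β δ : ℝ} (hβ : 0 < β) (hδ : 0 < δ) (hδ1 : δ < 1) :
    pdel δ ∈ Gpsi (fun x => x ^ β) := by
  refine ⟨?_, ?_, ?_⟩
  · show ‖(-δ:ℂ)‖ < 1
    rw [show ((-δ : ℂ)) = ((-δ : ℝ) : ℂ) by push_cast; ring, Complex.norm_real, Real.norm_eq_abs,
      abs_neg, abs_of_pos hδ]
    exact hδ1
  · show ‖(0:ℂ)‖ < 1
    simp
  · show ((-δ:ℂ)).re < (‖(0:ℂ)‖) ^ β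
    rw [norm_zero, Real.zero_rpow hβ.ne']
    simp [hδ]

/-- for `ψ(x) = x^β`, `1/2 < β < 1`, in the normal zone
`|x_T| ≤ δ^{1/β−1}|x_N|` the metric is comparable to `δ^{1/(2β)−1}|x_N|`. -/
theorem stmt9 (β : ℝ) (hβ0 : 1 / 2 < β) (hβ1 : β < 1) :
    ∀ δ₀ ∈ Ioo (0 : ℝ) 1, ∃ c C : ℝ, 0 < c ∧ c < C ∧
      ∀ δ ∈ Ioc (0 : ℝ) δ₀, ∀ xN xT : ℂ,
        ‖xT‖ ≤ δ ^ (1 / β - 1) * ‖xN‖ →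
        c * δ ^ (1 / (2 * β) - 1) * ‖xN‖ ≤
            kob (Gpsi (fun x => x ^ β)) (pdel δ) (xN, xT) ∧
        kob (Gpsi (fun x => x ^ β)) (pdel δ) (xN, xT) ≤
            C * δ ^ (1 / (2 * β) - 1) * ‖xN‖ := by
  intro δ₀ hδ₀
  obtain ⟨hδ₀0, hδ₀1⟩ := hδ₀
  have hβpos : 0 < β := by linarith
  have hc₁pos : 0 < min ((1-δ₀)/2) (1/4:ℝ) := lt_min (by linarith) (by norm_num)
  have hc₁4 : min ((1-δ₀)/2) (1/4:ℝ) ≤ 1/4 := min_le_right _ _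
  have hCβ16 : (16:ℝ) ≤ (16:ℝ) ^ (1/(1-β)) := by
    calc (16:ℝ) = 16^(1:ℝ) := (Real.rpow_one _).symm
      _ ≤ (16:ℝ) ^ (1/(1-β)) := by
          apply Real.rpow_le_rpow_of_exponent_le (by norm_num)
          rw [le_div_iff₀ (by linarith)]
          linarith
  have hCβpos : (0:ℝ) < (16:ℝ) ^ (1/(1-β)) := by linarith
  refine ⟨1/(2*(16:ℝ)^(1/(1-β))), 2/(min ((1-δ₀)/2) (1/4:ℝ)), by positivity, ?_, ?_⟩
  · have h1 : 1/(2*(16:ℝ)^(1/(1-β))) ≤ 1/32 := by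
      rw [div_le_div_iff₀ (by linarith) (by norm_num)]
      linarith
    have h2 : (8:ℝ) ≤ 2/(min ((1-δ₀)/2) (1/4:ℝ)) := by
      rw [le_div_iff₀ hc₁pos]
      linarith
    linarith
  intro δ hδIoc xN xT hxT
  obtain ⟨hδ0, hδδ₀⟩ := hδIoc
  have hδ1 : δ < 1 := lt_of_le_of_lt hδδ₀ hδ₀1
  have hdexp : (0:ℝ) < δ ^ (1/(2*β)-1 : ℝ) := Real.rpow_pos_of_pos hδ0 _
  rw [kob]
  have hbdd : BddBelow {c : ℝ | ∃ lam : ℝ, 0 < lam ∧ c = 1 / lam ∧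
      ∃ φ : ℂ → ℂ × ℂ, DifferentiableOn ℂ φ (ball (0 : ℂ) 1) ∧
        MapsTo φ (ball (0 : ℂ) 1) (Gpsi (fun x => x ^ β)) ∧ φ 0 = pdel δ ∧
        deriv φ 0 = lam • ((xN, xT) : ℂ × ℂ)} := by
    refine ⟨0, ?_⟩
    rintro x ⟨lam, hlam, rfl, -⟩
    positivity
  by_cases hxN : xN = 0
  · -- degenerate direction
    have hxT0 : xT = 0 := by
      rw [hxN, norm_zero, mul_zero] at hxT
      exact norm_eq_zero.mp (le_antisymm hxT (norm_nonneg _))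
    subst hxN
    subst hxT0
    rw [norm_zero, mul_zero, mul_zero]
    have hmemc : ∀ lam : ℝ, 0 < lam → (1/lam) ∈ {c : ℝ | ∃ lam : ℝ, 0 < lam ∧ c = 1 / lam ∧
        ∃ φ : ℂ → ℂ × ℂ, DifferentiableOn ℂ φ (ball (0 : ℂ) 1) ∧
          MapsTo φ (ball (0 : ℂ) 1) (Gpsi (fun x => x ^ β)) ∧ φ 0 = pdel δ ∧
          deriv φ 0 = lam • (((0:ℂ), (0:ℂ)) : ℂ × ℂ)} := by
      intro lam hlam
      refine ⟨lam, hlam, rfl, fun _ => pdel δ, differentiableOn_const _,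
        fun ζ _ => pdel_mem_Gpsi hβpos hδ0 hδ1, rfl, ?_⟩
      rw [deriv_const]
      simp; rfl
    constructor
    · apply Real.sInf_nonneg
      rintro x ⟨lam, hlam, rfl, -⟩
      positivity
    · apply le_of_forall_pos_le_add
      intro ε hε
      have := csInf_le hbdd (hmemc (1/ε) (by positivity))
      rw [one_div_one_div] at this
      linarith
  · have haN : 0 < ‖xN‖ := by rwa [norm_pos_iff]
    obtain ⟨lam, hlam, hval, φ, hdφ, hmφ, h0φ, hderφ⟩ :=
      upper_disc hβ0 hβ1 hδ0 hδδ₀ hδ₀0 hδ₀1 hxN hxT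
    have hmem : (1 / min ((1-δ₀)/2) (1/4:ℝ)) * δ ^ (1/(2*β) - 1) * ‖xN‖ ∈
        {c : ℝ | ∃ lam : ℝ, 0 < lam ∧ c = 1 / lam ∧
          ∃ φ : ℂ → ℂ × ℂ, DifferentiableOn ℂ φ (ball (0 : ℂ) 1) ∧
            MapsTo φ (ball (0 : ℂ) 1) (Gpsi (fun x => x ^ β)) ∧ φ 0 = pdel δ ∧
            deriv φ 0 = lam • ((xN, xT) : ℂ × ℂ)} :=
      ⟨lam, hlam, hval, φ, hdφ, hmφ, h0φ, hderφ⟩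
    constructor
    · -- lower bound
      apply le_csInf ⟨_, hmem⟩
      rintro b ⟨lam', hlam', rfl, φ', hd', hm', h0', hder'⟩
      have hcore := lower_core hβ0 hβ1 hδ0 hδ1 hxT hlam' hd' hm' h0' hder'
      have h6 : lam' * (δ ^ (1/(2*β) - 1 : ℝ) * ‖xN‖) ≤
          2 * (16:ℝ)^(1/(1-β)) := by
        calc lam' * (δ ^ (1/(2*β) - 1 : ℝ) * ‖xN‖)
            = lam' * ‖xN‖ * δ ^ (1/(2*β) - 1 : ℝ) := by ring
          _ ≤ (16:ℝ)^(1/(1-β)) := hcore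
          _ ≤ 2 * (16:ℝ)^(1/(1-β)) := by linarith
      have heq : 1/(2*(16:ℝ)^(1/(1-β))) * δ ^ (1/(2*β) - 1 : ℝ) * ‖xN‖
          = (δ ^ (1/(2*β) - 1 : ℝ) * ‖xN‖) / (2*(16:ℝ)^(1/(1-β))) := by
        ring
      rw [heq, div_le_div_iff₀ (by positivity) hlam']
      calc δ ^ (1/(2*β) - 1 : ℝ) * ‖xN‖ * lam'
          = lam' * (δ ^ (1/(2*β) - 1 : ℝ) * ‖xN‖) := by ring
        _ ≤ 2 * (16:ℝ)^(1/(1-β)) := h6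
        _ = 1 * (2*(16:ℝ)^(1/(1-β))) := by ring
    · -- upper bound
      have hup := csInf_le hbdd hmem
      have h5 : (1 / min ((1-δ₀)/2) (1/4:ℝ)) * δ ^ (1/(2*β) - 1) * ‖xN‖ ≤
          (2 / min ((1-δ₀)/2) (1/4:ℝ)) * δ ^ (1/(2*β) - 1) * ‖xN‖ := by
        have : (1 / min ((1-δ₀)/2) (1/4:ℝ)) ≤ 2 / min ((1-δ₀)/2) (1/4:ℝ) := by
          rw [div_le_div_iff₀ hc₁pos hc₁pos]
          linarith
        apply mul_le_mul_of_nonneg_right _ (norm_nonneg _)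
        exact mul_le_mul_of_nonneg_right this hdexp.le
      linarith
end

section
/- Let 1/2 < β < 1 and ψ(x) = x^β. Then for every δ₀ ∈ (0,1) there exist constants 0 < c < C (depending only on β and δ₀) such that for all δ ∈ (0, δ₀] and all x_N, x_T ∈ ℂ with x_N ≠ 0 and δ^{1/β − 1}·|x_N| ≤ |x_T| ≤ |x_N|, setting t := |x_T|/|x_N|: c·t^{(1−2β)/(2(1−β))}·|x_N| ≤ κ_{G_ψ}(p_δ; (x_N, x_T)) ≤ C·t^{(1−2β)/(2(1−β))}·|x_N|. -/
open Complex Metric Set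

namespace Stmt10Aux

lemma rpow_add_le {x y p : ℝ} (hx : 0 ≤ x) (hy : 0 ≤ y) (hp : 0 ≤ p) (hp1 : p ≤ 1) :
    (x + y) ^ p ≤ x ^ p + y ^ p := by
  have h := NNReal.rpow_add_le_add_rpow x.toNNReal y.toNNReal hp hp1
  have h' := NNReal.coe_le_coe.2 h
  push_cast [NNReal.coe_rpow] at h'
  rwa [Real.coe_toNNReal x hx, Real.coe_toNNReal y hy] at h'

lemma le_abs_add_left {u : ℝ} (hu : 0 ≤ u) {w : ℂ} (hw : 0 ≤ w.re) :
    u ≤ ‖(u : ℂ) + w‖ := by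
  have h := Complex.re_le_norm ((u : ℂ) + w)
  have h2 : ((u : ℂ) + w).re = u + w.re := by simp
  rw [h2] at h; linarith

lemma abs_le_abs_add_left {u : ℝ} (hu : 0 ≤ u) {w : ℂ} (hw : 0 ≤ w.re) :
    ‖w‖ ≤ ‖(u : ℂ) + w‖ := by
  have h2 : ‖w‖ ^ 2 ≤ ‖(u : ℂ) + w‖ ^ 2 := by
    rw [Complex.sq_norm, Complex.sq_norm]
    simp only [Complex.normSq_apply, Complex.add_re, Complex.add_im, Complex.ofReal_re,
      Complex.ofReal_im, zero_add]
    nlinarith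
  have h3 := Real.sqrt_le_sqrt h2
  rwa [Real.sqrt_sq (norm_nonneg _), Real.sqrt_sq (norm_nonneg _)] at h3

lemma abs_lt_twoB {B : ℝ} (hB : 0 < B) {w : ℂ} (hw : w.re < B) :
    ‖w‖ < ‖((2 * B : ℝ) : ℂ) - w‖ := by
  have h2 : ‖w‖ ^ 2 < ‖((2 * B : ℝ) : ℂ) - w‖ ^ 2 := by
    rw [Complex.sq_norm, Complex.sq_norm]
    simp only [Complex.normSq_apply, Complex.sub_re, Complex.sub_im, Complex.ofReal_re,
      Complex.ofReal_im, zero_sub]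
    nlinarith
  exact lt_of_pow_lt_pow_left₀ 2 (norm_nonneg _) h2

/-- Borel–Carathéodory-type bound for the derivative at the center. -/
lemma borelCara {f : ℂ → ℂ} {ρ M : ℝ} (hρ : 0 < ρ)
    (hf : DifferentiableOn ℂ f (ball 0 ρ))
    (hM : ∀ z ∈ ball (0 : ℂ) ρ, (f z).re < M) :
    ‖deriv f 0‖ ≤ 2 * (M - (f 0).re) / ρ := by
  have h0 : (0 : ℂ) ∈ ball (0 : ℂ) ρ := mem_ball_self hρ
  set B : ℝ := M - (f 0).re with hBdef
  have hB : 0 < B := sub_pos.2 (hM 0 h0)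
  set c : ℂ := ((2 * B : ℝ) : ℂ) with hc
  set F : ℂ → ℂ := fun z => f z - f 0 with hF
  have hFre : ∀ z ∈ ball (0 : ℂ) ρ, (F z).re < B := by
    intro z hz
    have := hM z hz
    simp only [hF, Complex.sub_re, hBdef]
    linarith
  have hden : ∀ z ∈ ball (0 : ℂ) ρ, c - F z ≠ 0 := by
    intro z hz
    have h1 : 0 < (c - F z).re := by
      have := hFre z hz
      simp only [Complex.sub_re, hc, Complex.ofReal_re]
      linarith
    intro h
    rw [h] at h1
    simp at h1
  set G : ℂ → ℂ := fun z => F z / (c - F z) with hG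
  have hFdiff : DifferentiableOn ℂ F (ball 0 ρ) := hf.sub_const _
  have hGdiff : DifferentiableOn ℂ G (ball 0 ρ) :=
    hFdiff.div ((differentiableOn_const c).sub hFdiff) hden
  have hF0 : F 0 = 0 := by simp [hF]
  have hG0 : G 0 = 0 := by simp [hG, hF0]
  have hmaps : MapsTo G (ball (0 : ℂ) ρ) (ball (G 0) 1) := by
    intro z hz
    rw [hG0, mem_ball, dist_zero_right, hG]
    simp only [norm_div]
    have h1 : ‖F z‖ < ‖c - F z‖ := abs_lt_twoB hB (hFre z hz)
    have h2 : 0 < ‖c - F z‖ := by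
      rw [norm_pos_iff]; exact hden z hz
    rw [div_lt_one h2]
    simpa using h1
  have hd0 : DifferentiableAt ℂ f 0 := hf.differentiableAt (isOpen_ball.mem_nhds h0)
  have h1 : HasDerivAt F (deriv f 0) 0 := hd0.hasDerivAt.sub_const _
  have h2 : HasDerivAt (fun z => c - F z) (-(deriv f 0)) 0 := by
    exact ((hasDerivAt_const (0 : ℂ) c).sub h1).congr_deriv (zero_sub _)
  have hc0 : c - F 0 ≠ 0 := hden 0 h0
  have hcne : c ≠ 0 := by simpa [hF0] using hc0
  have hGd : HasDerivAt G (deriv f 0 / c) 0 := by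
    have h3 := h1.div h2 hc0
    have h4 : (deriv f 0 * (c - F 0) - F 0 * -deriv f 0) / (c - F 0) ^ 2 = deriv f 0 / c := by
      rw [hF0]
      field_simp
      ring
    rwa [h4] at h3
  have hS := Complex.norm_deriv_le_div_of_mapsTo_ball hGdiff (hmaps.mono_right ball_subset_closedBall) hρ
  rw [hGd.deriv, norm_div] at hS
  have hcn : ‖c‖ = 2 * B := by
    rw [hc, Complex.norm_real, Real.norm_eq_abs, abs_of_pos (by linarith)]
  rw [hcn] at hS
  calc ‖deriv f 0‖ = (‖deriv f 0‖ / (2 * B)) * (2 * B) := by field_simp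
    _ ≤ (1 / ρ) * (2 * B) := mul_le_mul_of_nonneg_right hS (by linarith)
    _ = 2 * B / ρ := by ring
    _ = 2 * (M - (f 0).re) / ρ := by rw [hBdef]

/-- Quadratic Schwarz-type growth bound. -/
lemma quad_bound {g : ℂ → ℂ} {s : ℝ}
    (hg : DifferentiableOn ℂ g (ball 0 1)) (hg0 : g 0 = 0)
    (hgb : ∀ z ∈ ball (0 : ℂ) 1, ‖g z‖ < 1)
    (hs : ‖deriv g 0‖ ≤ s) :
    ∀ z ∈ ball (0 : ℂ) 1,
      ‖g z‖ ≤ s * ‖z‖ + (2 * (1 + s)) * ‖z‖ ^ 2 := by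
  have hs0 : 0 ≤ s := le_trans (norm_nonneg _) hs
  set d : ℂ := deriv g 0 with hd
  set h : ℂ → ℂ := fun z => g z - d * z with hh
  have hball0 : (0 : ℂ) ∈ ball (0 : ℂ) 1 := mem_ball_self one_pos
  have hhdiff : DifferentiableOn ℂ h (ball 0 1) :=
    hg.sub ((differentiable_id.const_mul d).differentiableOn)
  have hh0 : h 0 = 0 := by simp [hh, hg0]
  have hd0 : DifferentiableAt ℂ g 0 := hg.differentiableAt (isOpen_ball.mem_nhds hball0)
  have hhd : HasDerivAt h 0 0 := by
    have h1 : HasDerivAt (fun z : ℂ => d * z) d 0 := by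
      simpa using (hasDerivAt_id (0 : ℂ)).const_mul d
    exact (hd0.hasDerivAt.sub h1).congr_deriv (sub_self _)
  have hderivh : deriv h 0 = 0 := hhd.deriv
  have habs : ∀ z ∈ ball (0 : ℂ) 1, ‖h z‖ < 1 + s := by
    intro z hz
    have hz1 : ‖z‖ < 1 := by simpa [mem_ball, dist_zero_right] using hz
    have h1 : ‖h z‖ ≤ ‖g z‖ + ‖d * z‖ := by
      simpa [hh] using norm_sub_le (g z) (d * z)
    have h2 : ‖g z‖ < 1 := by
      have := hgb z hz
      simpa using this
    have h3 : ‖d * z‖ ≤ s := by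
      rw [norm_mul]
      calc ‖d‖ * ‖z‖ ≤ s * 1 := mul_le_mul hs hz1.le (norm_nonneg _) hs0
        _ = s := mul_one s
    linarith
  have hmaps1 : MapsTo h (ball (0 : ℂ) 1) (ball (h 0) (1 + s)) := by
    intro z hz
    rw [hh0, mem_ball, dist_zero_right]
    exact habs z hz
  have S1 : ∀ z ∈ ball (0 : ℂ) 1, ‖dslope h 0 z‖ ≤ 1 + s := by
    intro z hz
    have := Complex.norm_dslope_le_div_of_mapsTo_ball hhdiff (hmaps1.mono_right ball_subset_closedBall) hz
    simpa using this
  set u : ℂ → ℂ := dslope h 0 with hu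
  have hudiff : DifferentiableOn ℂ u (ball 0 1) :=
    (differentiableOn_dslope (isOpen_ball.mem_nhds hball0)).2 hhdiff
  have hu0 : u 0 = 0 := by rw [hu, dslope_same, hderivh]
  have hmaps2 : MapsTo u (ball (0 : ℂ) 1) (ball (u 0) (2 * (1 + s))) := by
    intro z hz
    rw [hu0, mem_ball, dist_zero_right]
    exact lt_of_le_of_lt (S1 z hz) (by linarith)
  have S2 : ∀ z ∈ ball (0 : ℂ) 1, ‖dslope u 0 z‖ ≤ 2 * (1 + s) := by
    intro z hz
    have := Complex.norm_dslope_le_div_of_mapsTo_ball hudiff (hmaps2.mono_right ball_subset_closedBall) hz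
    simpa using this
  intro z hz
  rcases eq_or_ne z 0 with rfl | hz0
  · simp [hg0]
  · have e1 : u z = h z / z := by
      rw [hu, dslope_of_ne _ hz0, slope_def_field, hh0, sub_zero, sub_zero]
    have e2 : dslope u 0 z = u z / z := by
      rw [dslope_of_ne _ hz0, slope_def_field, hu0, sub_zero, sub_zero]
    have hbound : ‖h z‖ ≤ 2 * (1 + s) * ‖z‖ ^ 2 := by
      have hS := S2 z hz
      rw [e2, e1, div_div, norm_div, norm_mul] at hS
      have hzpos : 0 < ‖z‖ * ‖z‖ := by
        have : (0:ℝ) < ‖z‖ := by simpa [norm_pos_iff] using hz0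
        positivity
      rw [div_le_iff₀ hzpos] at hS
      calc ‖h z‖ ≤ 2 * (1 + s) * (‖z‖ * ‖z‖) := hS
        _ = 2 * (1 + s) * ‖z‖ ^ 2 := by ring
    have h4 : ‖g z‖ ≤ ‖h z‖ + ‖d * z‖ := by
      have h5 : g z = h z + d * z := by simp [hh]
      rw [h5]; exact norm_add_le _ _
    have h3 : ‖d * z‖ ≤ s * ‖z‖ := by
      rw [norm_mul]
      exact mul_le_mul_of_nonneg_right hs (norm_nonneg _)
    calc ‖g z‖ ≤ ‖h z‖ + ‖d * z‖ := h4
      _ ≤ 2 * (1 + s) * ‖z‖ ^ 2 + s * ‖z‖ := by linarith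
      _ = s * ‖z‖ + 2 * (1 + s) * ‖z‖ ^ 2 := by ring

end Stmt10Aux

open Stmt10Aux in
/-- for `ψ(x) = x^β`, `1/2 < β < 1`, in the intermediate zone
`δ^{1/β−1}|x_N| ≤ |x_T| ≤ |x_N|` the metric is comparable to
`t^{(1−2β)/(2(1−β))}|x_N|` where `t = |x_T|/|x_N|`. -/
theorem stmt10 (β : ℝ) (hβ0 : 1 / 2 < β) (hβ1 : β < 1) :
    ∀ δ₀ ∈ Ioo (0 : ℝ) 1, ∃ c C : ℝ, 0 < c ∧ c < C ∧
      ∀ δ ∈ Ioc (0 : ℝ) δ₀, ∀ xN xT : ℂ, xN ≠ 0 →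
        δ ^ (1 / β - 1) * ‖xN‖ ≤ ‖xT‖ →
        ‖xT‖ ≤ ‖xN‖ →
        c * (‖xT‖ / ‖xN‖) ^ ((1 - 2 * β) / (2 * (1 - β))) *
            ‖xN‖ ≤ kob (Gpsi (fun x => x ^ β)) (pdel δ) (xN, xT) ∧
        kob (Gpsi (fun x => x ^ β)) (pdel δ) (xN, xT) ≤
            C * (‖xT‖ / ‖xN‖) ^ ((1 - 2 * β) / (2 * (1 - β))) *
              ‖xN‖ := by
  have hβpos : (0:ℝ) < β := by linarith
  have h1β : (0:ℝ) < 1 - β := by linarith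
  have h2β1 : (0:ℝ) ≤ 2 * β - 1 := by linarith
  intro δ₀ hδ₀
  obtain ⟨hδ₀0, hδ₀1⟩ := hδ₀
  set κ : ℝ := (1 - δ₀) / 2 with hκdef
  have hκpos : 0 < κ := by rw [hκdef]; linarith only [hδ₀1]
  have hκhalf : κ ≤ 1 / 2 := by rw [hκdef]; linarith only [hδ₀0]
  set C₀ : ℝ := 28 ^ ((1:ℝ) / (1 - β)) with hC₀def
  have hexp1 : (1:ℝ) ≤ 1 / (1 - β) := by
    rw [le_div_iff₀ h1β]; linarith only [hβpos]
  have hC₀28 : (28:ℝ) ≤ C₀ := by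
    calc (28:ℝ) = 28 ^ (1:ℝ) := (Real.rpow_one _).symm
      _ ≤ C₀ := Real.rpow_le_rpow_of_exponent_le (by norm_num) hexp1
  have hC₀pos : 0 < C₀ := by positivity
  refine ⟨1 / C₀, 1 / κ, by positivity, ?_, ?_⟩
  · apply one_div_lt_one_div_of_lt hκpos
    calc κ ≤ 1/2 := hκhalf
      _ < 28 := by norm_num
      _ ≤ C₀ := hC₀28
  intro δ hδ xN xT hxN hlow hupp
  obtain ⟨hδpos, hδle⟩ := hδ
  have hδ1 : δ < 1 := lt_of_le_of_lt hδle hδ₀1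
  have hxNpos : 0 < ‖xN‖ := norm_pos_iff.2 hxN
  have hxTpos : 0 < ‖xT‖ := by
    have h0 : 0 < δ ^ (1/β - 1) * ‖xN‖ := by positivity
    linarith only [h0, hlow]
  have hxTne : xT ≠ 0 := by
    intro h; rw [h] at hxTpos; simp at hxTpos
  set t : ℝ := ‖xT‖ / ‖xN‖ with htdef
  have htpos : 0 < t := div_pos hxTpos hxNpos
  have htle1 : t ≤ 1 := by rw [htdef, div_le_one hxNpos]; exact hupp
  set e : ℝ := (1 - 2 * β) / (2 * (1 - β)) with hedef
  set d2 : ℝ := 2 * (1 - β) with hd2def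
  have hd2pos : 0 < d2 := by rw [hd2def]; linarith only [h1β]
  set r : ℝ := t ^ (1 / d2) with hrdef
  have hrpos : 0 < r := Real.rpow_pos_of_pos htpos _
  have hrle1 : r ≤ 1 := Real.rpow_le_one htpos.le htle1 (by positivity)
  have htr : r ^ d2 = t := by
    rw [hrdef, ← Real.rpow_mul htpos.le, one_div, inv_mul_cancel₀ hd2pos.ne', Real.rpow_one]
  set a : ℝ := r ^ (2 * β - 1) with hadef
  have hapos : 0 < a := Real.rpow_pos_of_pos hrpos _
  have hale1 : a ≤ 1 := Real.rpow_le_one hrpos.le hrle1 h2β1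
  have hat : a * t = r := by
    rw [hadef, ← htr, ← Real.rpow_add hrpos, hd2def,
      show 2 * β - 1 + 2 * (1 - β) = 1 by ring, Real.rpow_one]
  have hd2e : d2 * e = 1 - 2 * β := by
    rw [hedef, hd2def]
    field_simp
  have hte : t ^ e = r ^ (1 - 2 * β) := by
    rw [← htr, ← Real.rpow_mul hrpos.le, hd2e]
  have hate : a * t ^ e = 1 := by
    rw [hte, hadef, ← Real.rpow_add hrpos,
      show 2 * β - 1 + (1 - 2 * β) = 0 by ring, Real.rpow_zero]
  have htea : t ^ e = 1 / a := by
    rw [eq_div_iff hapos.ne']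
    linarith only [hate]
  have hδr : δ ≤ r ^ (2 * β) := by
    have h1 : δ ^ (1/β - 1) ≤ t := by
      rw [htdef, le_div_iff₀ hxNpos]; exact hlow
    have hexp : (1/β - 1) * (β/(1-β)) = 1 := by
      field_simp
    have h2 : δ = (δ ^ (1/β - 1)) ^ (β/(1-β)) := by
      rw [← Real.rpow_mul hδpos.le, hexp, Real.rpow_one]
    have h3 : (δ ^ (1/β-1)) ^ (β/(1-β)) ≤ t ^ (β/(1-β)) :=
      Real.rpow_le_rpow (Real.rpow_nonneg hδpos.le _) h1 (div_nonneg hβpos.le h1β.le)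
    have h4 : t ^ (β/(1-β)) = r ^ (2*β) := by
      rw [← htr, ← Real.rpow_mul hrpos.le]
      congr 1
      rw [hd2def]
      field_simp
    rw [h2]; rw [h4] at h3; exact h3
  -- the extremal candidate (upper bound disc)
  set lam₀ : ℝ := κ * a / ‖xN‖ with hlamdef
  have hlam₀pos : 0 < lam₀ := by rw [hlamdef]; positivity
  set ωN : ℂ := xN / ((‖xN‖ : ℝ) : ℂ) with hωNdef
  set ωT : ℂ := xT / ((‖xT‖ : ℝ) : ℂ) with hωTdef
  have hxNC : ((‖xN‖ : ℝ) : ℂ) ≠ 0 := by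
    simpa using hxNpos.ne'
  have hxTC : ((‖xT‖ : ℝ) : ℂ) ≠ 0 := by
    simpa using hxTpos.ne'
  have hωNabs : ‖ωN‖ = 1 := by
    rw [hωNdef, norm_div, Complex.norm_real, Real.norm_eq_abs, abs_of_pos hxNpos, div_self hxNpos.ne']
  have hωTabs : ‖ωT‖ = 1 := by
    rw [hωTdef, norm_div, Complex.norm_real, Real.norm_eq_abs, abs_of_pos hxTpos, div_self hxTpos.ne']
  have hxNeq : ((‖xN‖ : ℝ) : ℂ) * ωN = xN := by
    rw [hωNdef]; field_simp
  have hxTeq : ((‖xT‖ : ℝ) : ℂ) * ωT = xT := by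
    rw [hωTdef]; field_simp
  have hlamxN : lam₀ * ‖xN‖ = κ * a := by
    rw [hlamdef]; field_simp
  have hlamxT : lam₀ * ‖xT‖ = κ * r := by
    have h5 : lam₀ * ‖xT‖ = κ * a * t := by
      rw [hlamdef, htdef]; field_simp
    rw [h5, mul_assoc, hat]
  have hμ : ((lam₀:ℝ):ℂ) * xN = ((κ * a : ℝ):ℂ) * ωN := by
    rw [← hxNeq, ← mul_assoc, ← Complex.ofReal_mul, hlamxN]
  have hg2 : ((lam₀:ℝ):ℂ) * xT = ((κ * r : ℝ):ℂ) * ωT := by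
    rw [← hxTeq, ← mul_assoc, ← Complex.ofReal_mul, hlamxT]
  set φ₀ : ℂ → ℂ × ℂ := fun ζ =>
    (-(δ:ℂ) + ((lam₀:ℝ):ℂ) * xN * ζ, ωT * (((κ * r : ℝ):ℂ) * ζ + (ωN / 2) * ζ ^ 2)) with hφ₀def
  have hφ₀diff : DifferentiableOn ℂ φ₀ (ball 0 1) := by
    rw [hφ₀def]
    apply DifferentiableOn.prodMk
    · exact ((differentiable_id.const_mul (((lam₀:ℝ):ℂ) * xN)).const_add _).differentiableOn
    · apply Differentiable.differentiableOn
      apply Differentiable.const_mul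
      exact (differentiable_id.const_mul _).add ((differentiable_pow 2).const_mul _)
  have hD1 : HasDerivAt (fun ζ : ℂ => -(δ:ℂ) + ((lam₀:ℝ):ℂ) * xN * ζ) (((lam₀:ℝ):ℂ) * xN) 0 := by
    simpa using ((hasDerivAt_id (0:ℂ)).const_mul (((lam₀:ℝ):ℂ) * xN)).const_add (-(δ:ℂ))
  have hD2 : HasDerivAt (fun ζ : ℂ => ωT * (((κ * r : ℝ):ℂ) * ζ + (ωN / 2) * ζ ^ 2))
      (ωT * ((κ * r : ℝ):ℂ)) 0 := by
    have p1 : HasDerivAt (fun ζ : ℂ => ((κ * r : ℝ):ℂ) * ζ) ((κ * r : ℝ):ℂ) 0 := by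
      simpa using (hasDerivAt_id (0:ℂ)).const_mul ((κ * r : ℝ):ℂ)
    have p2 : HasDerivAt (fun ζ : ℂ => (ωN / 2) * ζ ^ 2) 0 0 := by
      simpa using (hasDerivAt_pow 2 (0:ℂ)).const_mul (ωN / 2)
    have hi := p1.add p2
    rw [add_zero] at hi
    simpa using hi.const_mul ωT
  have hφ₀deriv : deriv φ₀ 0 = lam₀ • ((xN, xT) : ℂ × ℂ) := by
    have hD := hD1.prodMk hD2
    rw [← hφ₀def] at hD
    rw [hD.deriv]
    have e1 : ((lam₀:ℝ):ℂ) * xN = lam₀ • xN := (Complex.real_smul).symm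
    have e2 : ωT * ((κ * r : ℝ):ℂ) = lam₀ • xT := by
      rw [Complex.real_smul, hg2, mul_comm]
    rw [Prod.smul_mk]
    exact Prod.ext e1 e2
  have hφ₀maps : MapsTo φ₀ (ball (0:ℂ) 1) (Gpsi (fun x => x ^ β)) := by
    intro ζ hζ
    rw [mem_ball, dist_zero_right] at hζ
    set x : ℝ := ‖ζ‖ with hxdef
    have hx0 : 0 ≤ x := norm_nonneg ζ
    have hx1 : x < 1 := hζ
    simp only [hφ₀def, Gpsi, mem_setOf_eq]
    have hκa1 : κ * a ≤ κ := by
      calc κ * a ≤ κ * 1 := mul_le_mul_of_nonneg_left hale1 hκpos.le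
        _ = κ := mul_one κ
    refine ⟨?_, ?_, ?_⟩
    · -- first coordinate modulus
      calc ‖-(δ:ℂ) + ((lam₀:ℝ):ℂ) * xN * ζ‖
          ≤ ‖-(δ:ℂ)‖ + ‖((lam₀:ℝ):ℂ) * xN * ζ‖ := norm_add_le _ _
        _ = δ + κ * a * x := by
            rw [norm_neg, Complex.norm_real, Real.norm_eq_abs, abs_of_pos hδpos, norm_mul, norm_mul,
              Complex.norm_real, Real.norm_eq_abs, abs_of_pos hlam₀pos, hlamxN]
        _ < 1 := by
            have q1 : κ * a * x ≤ κ * x := mul_le_mul_of_nonneg_right hκa1 hx0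
            have q2 : κ * x < κ * 1 := mul_lt_mul_of_pos_left hx1 hκpos
            rw [mul_one] at q2
            have q3 : κ = (1 - δ₀) / 2 := hκdef
            linarith only [q1, q2, q3, hδle, hδ₀1]
    · -- second coordinate modulus
      rw [norm_mul, hωTabs, one_mul]
      calc ‖((κ * r : ℝ):ℂ) * ζ + (ωN / 2) * ζ ^ 2‖
          ≤ ‖((κ * r : ℝ):ℂ) * ζ‖ + ‖(ωN / 2) * ζ ^ 2‖ :=
            norm_add_le _ _
        _ = κ * r * x + x ^ 2 / 2 := by
            rw [norm_mul, norm_mul, Complex.norm_real, Real.norm_eq_abs, abs_of_pos (by positivity), norm_div,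
              hωNabs, Complex.norm_two, norm_pow]
            ring
        _ < 1 := by
            have q1 : r * x ≤ x := by
              calc r * x ≤ 1 * x := mul_le_mul_of_nonneg_right hrle1 hx0
                _ = x := one_mul x
            have q2 : κ * (r * x) ≤ κ * x := by
              apply mul_le_mul_of_nonneg_left q1 hκpos.le
            have q2' : κ * x ≤ (1/2) * x := mul_le_mul_of_nonneg_right hκhalf hx0
            have q3 : x ^ 2 ≤ x := by
              rw [sq]
              calc x * x ≤ 1 * x := mul_le_mul_of_nonneg_right hx1.le hx0
                _ = x := one_mul x
            have q4 : κ * r * x = κ * (r * x) := by ring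
            linarith only [q1, q2, q2', q3, q4, hx1, hx0]
    · -- boundary inequality
      have hre : (-(δ:ℂ) + ((lam₀:ℝ):ℂ) * xN * ζ).re = -δ + κ * a * (ωN * ζ).re := by
        rw [show ((lam₀:ℝ):ℂ) * xN * ζ = ((κ * a : ℝ):ℂ) * (ωN * ζ) by rw [hμ]; ring]
        simp [Complex.add_re, Complex.mul_re, Complex.ofReal_re, Complex.ofReal_im]
      rw [hre]
      set R0 : ℝ := (ωN * ζ).re with hR0def
      set w : ℂ := (ωN / 2) * ζ with hwdef
      have hwre : w.re = R0 / 2 := by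
        have h9 : w = ((1/2 : ℝ):ℂ) * (ωN * ζ) := by rw [hwdef]; push_cast; ring
        rw [h9, Complex.mul_re, Complex.ofReal_re, Complex.ofReal_im, zero_mul, sub_zero,
          ← hR0def]
        ring
      have hwabs : ‖w‖ = x / 2 := by
        rw [hwdef, show ωN / 2 * ζ = ωN * ζ / 2 by ring, norm_div, norm_mul, hωNabs, one_mul,
          Complex.norm_two]
      have habsg : ‖((κ * r : ℝ):ℂ) * ζ + (ωN / 2) * ζ ^ 2‖
          = x * ‖((κ * r : ℝ):ℂ) + w‖ := by
        rw [show ((κ * r : ℝ):ℂ) * ζ + (ωN / 2) * ζ ^ 2 = ζ * (((κ * r : ℝ):ℂ) + w) by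
          rw [hwdef]; ring, norm_mul]
      rw [norm_mul, hωTabs, one_mul, habsg]
      rcases le_or_gt R0 0 with hR0 | hR0
      · have h6 : κ * a * R0 ≤ 0 := mul_nonpos_of_nonneg_of_nonpos (by positivity) hR0
        have h7 : (0:ℝ) ≤ (x * ‖((κ * r : ℝ):ℂ) + w‖) ^ β :=
          Real.rpow_nonneg (by positivity) _
        linarith only [h6, h7, hδpos]
      · have hR0x : R0 ≤ x := by
          have h8 := Complex.re_le_norm (ωN * ζ)
          rwa [norm_mul, hωNabs, one_mul] at h8
        have hxpos : 0 < x := lt_of_lt_of_le hR0 hR0x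
        have hwre0 : 0 ≤ w.re := by rw [hwre]; linarith only [hR0]
        have hb1 : κ * r ≤ ‖((κ * r : ℝ):ℂ) + w‖ :=
          le_abs_add_left (by positivity) hwre0
        have hb2 : x / 2 ≤ ‖((κ * r : ℝ):ℂ) + w‖ := by
          rw [← hwabs]
          exact abs_le_abs_add_left (by positivity) hwre0
        have hmain : κ * a * R0 ≤ (x * ‖((κ * r : ℝ):ℂ) + w‖) ^ β := by
          have hstep0 : κ * a * R0 ≤ κ * a * x :=
            mul_le_mul_of_nonneg_left hR0x (by positivity)
          rcases le_or_gt x r with hxr | hrx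
          · -- x ≤ r
            set y : ℝ := κ * r * x with hydef
            have hy : 0 < y := by rw [hydef]; positivity
            have hyrr : y ≤ r * r := by
              rw [hydef]
              have q1 : κ * r ≤ r := by
                calc κ * r ≤ 1 * r := by
                      apply mul_le_mul_of_nonneg_right _ hrpos.le
                      linarith only [hκhalf]
                  _ = r := one_mul r
              calc κ * r * x ≤ r * x := mul_le_mul_of_nonneg_right q1 hx0
                _ ≤ r * r := mul_le_mul_of_nonneg_left hxr hrpos.le
            have hra : r * r ^ (2*β - 2) = a := by
              rw [hadef]
              nth_rewrite 1 [← Real.rpow_one r]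
              rw [← Real.rpow_add hrpos]
              congr 1
              ring
            have hstep1 : κ * a * x = y * r ^ (2*β - 2) := by
              rw [hydef, ← hra]; ring
            have hstep2 : y * r ^ (2*β - 2) ≤ y ^ β := by
              have h5 : y ^ (1-β) ≤ (r*r) ^ (1-β) :=
                Real.rpow_le_rpow hy.le hyrr (by linarith only [hβ1])
              have h6 : (r*r) ^ (1-β) * r ^ (2*β-2) = 1 := by
                rw [Real.mul_rpow hrpos.le hrpos.le, ← Real.rpow_add hrpos,
                  ← Real.rpow_add hrpos, show (1-β) + (1-β) + (2*β-2) = 0 by ring,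
                  Real.rpow_zero]
              have hybeta : y = y ^ β * y ^ (1-β) := by
                rw [← Real.rpow_add hy, show β + (1-β) = 1 by ring, Real.rpow_one]
              have h7 : y ^ (1-β) * r ^ (2*β-2) ≤ 1 := by
                calc y ^ (1-β) * r ^ (2*β-2) ≤ (r*r) ^ (1-β) * r ^ (2*β-2) :=
                      mul_le_mul_of_nonneg_right h5 (Real.rpow_nonneg hrpos.le _)
                  _ = 1 := h6
              calc y * r ^ (2*β-2) = y ^ β * (y ^ (1-β) * r ^ (2*β-2)) := by
                    nth_rewrite 1 [hybeta]; ring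
                _ ≤ y ^ β * 1 :=
                    mul_le_mul_of_nonneg_left h7 (Real.rpow_nonneg hy.le _)
                _ = y ^ β := mul_one _
            have hstep3 : y ^ β ≤ (x * ‖((κ * r : ℝ):ℂ) + w‖) ^ β := by
              apply Real.rpow_le_rpow hy.le ?_ hβpos.le
              calc y = x * (κ * r) := by rw [hydef]; ring
                _ ≤ x * ‖((κ * r : ℝ):ℂ) + w‖ :=
                    mul_le_mul_of_nonneg_left hb1 hx0
            calc κ * a * R0 ≤ κ * a * x := hstep0
              _ = y * r ^ (2*β - 2) := hstep1
              _ ≤ y ^ β := hstep2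
              _ ≤ _ := hstep3
          · -- r < x
            have ha_x : a ≤ x ^ (2*β-1) := by
              rw [hadef]
              exact Real.rpow_le_rpow hrpos.le hrx.le h2β1
            have hx2β : x ^ (2*β-1) * x = x ^ (2*β) := by
              nth_rewrite 2 [← Real.rpow_one x]
              rw [← Real.rpow_add hxpos]
              congr 1
              ring
            have hhalf : (1/2 : ℝ) ≤ (1/2 : ℝ) ^ β := by
              have h9 := Real.rpow_le_rpow_of_exponent_ge (by norm_num : (0:ℝ) < 1/2)
                (by norm_num) hβ1.le
              simpa using h9
            have hx2βnn : (0:ℝ) ≤ x ^ (2*β) := Real.rpow_nonneg hx0 _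
            have hstep4 : κ * a * x ≤ (1/2) * x ^ (2*β) := by
              have q1 : a * x ≤ x ^ (2*β-1) * x := mul_le_mul_of_nonneg_right ha_x hx0
              rw [hx2β] at q1
              have q2 : κ * (a * x) ≤ κ * x ^ (2*β) := mul_le_mul_of_nonneg_left q1 hκpos.le
              have q3 : κ * x ^ (2*β) ≤ (1/2) * x ^ (2*β) :=
                mul_le_mul_of_nonneg_right hκhalf hx2βnn
              calc κ * a * x = κ * (a * x) := by ring
                _ ≤ κ * x ^ (2*β) := q2
                _ ≤ (1/2) * x ^ (2*β) := q3
            have hstep5 : (1/2) * x ^ (2*β) ≤ (x * (x/2)) ^ β := by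
              have hxx : (x * (x/2)) ^ β = x ^ β * x ^ β * (1/2:ℝ) ^ β := by
                rw [show x * (x/2) = x * (x * (1/2)) by ring, Real.mul_rpow hx0 (by positivity),
                  Real.mul_rpow hx0 (by norm_num)]
                ring
              have hxβ2 : x ^ β * x ^ β = x ^ (2*β) := by
                rw [← Real.rpow_add hxpos, show β + β = 2*β by ring]
              rw [hxx, hxβ2]
              calc (1/2) * x ^ (2*β) = x ^ (2*β) * (1/2) := by ring
                _ ≤ x ^ (2*β) * (1/2) ^ β := mul_le_mul_of_nonneg_left hhalf hx2βnn
            have hstep6 : (x * (x/2)) ^ β ≤ (x * ‖((κ * r : ℝ):ℂ) + w‖) ^ β := by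
              apply Real.rpow_le_rpow (by positivity) ?_ hβpos.le
              exact mul_le_mul_of_nonneg_left hb2 hx0
            calc κ * a * R0 ≤ κ * a * x := hstep0
              _ ≤ (1/2) * x ^ (2*β) := hstep4
              _ ≤ (x * (x/2)) ^ β := hstep5
              _ ≤ _ := hstep6
        linarith only [hmain, hδpos]
  have hφ₀0 : φ₀ 0 = pdel δ := by
    rw [hφ₀def, pdel]
    simp
  have hmem : (1/lam₀) ∈ {c : ℝ | ∃ lam : ℝ, 0 < lam ∧ c = 1 / lam ∧
      ∃ φ : ℂ → ℂ × ℂ, DifferentiableOn ℂ φ (ball (0 : ℂ) 1) ∧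
        MapsTo φ (ball (0 : ℂ) 1) (Gpsi (fun x => x ^ β)) ∧ φ 0 = pdel δ ∧
        deriv φ 0 = lam • ((xN, xT) : ℂ × ℂ)} :=
    ⟨lam₀, hlam₀pos, rfl, φ₀, hφ₀diff, hφ₀maps, hφ₀0, hφ₀deriv⟩
  have hbdd : BddBelow {c : ℝ | ∃ lam : ℝ, 0 < lam ∧ c = 1 / lam ∧
      ∃ φ : ℂ → ℂ × ℂ, DifferentiableOn ℂ φ (ball (0 : ℂ) 1) ∧
        MapsTo φ (ball (0 : ℂ) 1) (Gpsi (fun x => x ^ β)) ∧ φ 0 = pdel δ ∧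
        deriv φ 0 = lam • ((xN, xT) : ℂ × ℂ)} := by
    refine ⟨0, ?_⟩
    rintro b ⟨lam, hlam, rfl, -⟩
    positivity
  constructor
  · -- lower bound
    unfold kob
    apply le_csInf ⟨1/lam₀, hmem⟩
    rintro b ⟨lam, hlam, rfl, φ, hφdiff, hφmaps, hφ0, hφderiv⟩
    set f : ℂ → ℂ := fun z => (φ z).1 with hfdef
    set g : ℂ → ℂ := fun z => (φ z).2 with hgdef
    have hfdiff : DifferentiableOn ℂ f (ball 0 1) := hφdiff.fst
    have hgdiff : DifferentiableOn ℂ g (ball 0 1) := hφdiff.snd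
    have hf0re : (f 0).re = -δ := by simp [hfdef, hφ0, pdel]
    have hg0 : g 0 = 0 := by simp [hgdef, hφ0, pdel]
    have hball0 : (0:ℂ) ∈ ball (0:ℂ) 1 := mem_ball_self one_pos
    have hφat : DifferentiableAt ℂ φ 0 := hφdiff.differentiableAt (isOpen_ball.mem_nhds hball0)
    have hφd : HasDerivAt φ (lam • ((xN, xT) : ℂ × ℂ)) 0 := by
      have h9 := hφat.hasDerivAt
      rwa [hφderiv] at h9
    have hfd : HasDerivAt f (lam • xN) 0 := by
      have h9 := hφd.hasFDerivAt.fst.hasDerivAt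
      simpa using h9
    have hgd : HasDerivAt g (lam • xT) 0 := by
      have h9 := hφd.hasFDerivAt.snd.hasDerivAt
      simpa using h9
    set L : ℝ := lam * ‖xN‖ with hLdef
    have hLpos : 0 < L := by rw [hLdef]; positivity
    have hnormf : ‖deriv f 0‖ = L := by
      rw [hfd.deriv, norm_smul, Real.norm_eq_abs, abs_of_pos hlam, hLdef]
    set s : ℝ := lam * ‖xT‖ with hsdef
    have hs0 : 0 ≤ s := by rw [hsdef]; positivity
    have hnormg : ‖deriv g 0‖ = s := by
      rw [hgd.deriv, norm_smul, Real.norm_eq_abs, abs_of_pos hlam, hsdef]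
    have hsL : s = L * t := by
      rw [hsdef, hLdef, htdef]
      field_simp
    have hmem' : ∀ z ∈ ball (0:ℂ) 1,
        ‖g z‖ < 1 ∧ (f z).re < (‖g z‖) ^ β := by
      intro z hz
      have h9 := hφmaps hz
      simp only [Gpsi, mem_setOf_eq] at h9
      exact ⟨h9.2.1, h9.2.2⟩
    have hgb : ∀ z ∈ ball (0:ℂ) 1, ‖g z‖ < 1 := fun z hz => (hmem' z hz).1
    have hfb : ∀ z ∈ ball (0:ℂ) 1, (f z).re < (‖g z‖) ^ β :=
      fun z hz => (hmem' z hz).2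
    have hcrude : L ≤ 8 := by
      have hRe1 : ∀ z ∈ ball (0:ℂ) (1/2 : ℝ), (f z).re < 1 := by
        intro z hz
        have hz1 : z ∈ ball (0:ℂ) 1 := ball_subset_ball (by norm_num) hz
        calc (f z).re < (‖g z‖) ^ β := hfb z hz1
          _ < 1 := Real.rpow_lt_one (norm_nonneg _) (hgb z hz1) hβpos
      have h9 := borelCara (by norm_num : (0:ℝ) < 1/2)
        (hfdiff.mono (ball_subset_ball (by norm_num))) hRe1
      rw [hnormf, hf0re] at h9
      calc L ≤ 2 * (1 - -δ) / (1/2) := h9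
        _ = 4 * (1 + δ) := by ring
        _ ≤ 8 := by linarith only [hδ1]
    have hquad := quad_bound hgdiff hg0 hgb (le_of_eq hnormg)
    set ρ : ℝ := r / 2 with hρdef
    have hρpos : 0 < ρ := by rw [hρdef]; positivity
    have hρhalf : ρ ≤ 1/2 := by rw [hρdef]; linarith only [hrle1]
    have hsub : ball (0:ℂ) ρ ⊆ ball (0:ℂ) 1 := ball_subset_ball (by linarith only [hρhalf])
    set Mv : ℝ := (s * ρ + 18 * ρ ^ 2) ^ β with hMdef
    have hReρ : ∀ z ∈ ball (0:ℂ) ρ, (f z).re < Mv := by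
      intro z hz
      have hz1 : z ∈ ball (0:ℂ) 1 := hsub hz
      have hzρ : ‖z‖ ≤ ρ := by
        rw [mem_ball, dist_zero_right] at hz
        exact hz.le
      have h18 : 2 * (1 + s) ≤ 18 := by
        have h9 : s ≤ 8 := by
          rw [hsL]
          calc L * t ≤ L * 1 := mul_le_mul_of_nonneg_left htle1 hLpos.le
            _ = L := mul_one L
            _ ≤ 8 := hcrude
        linarith only [h9]
      have hgz : ‖g z‖ ≤ s * ρ + 18 * ρ ^ 2 := by
        have q1 := hquad z hz1
        have hz0 : (0:ℝ) ≤ ‖z‖ := norm_nonneg z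
        have q2 : s * ‖z‖ ≤ s * ρ := mul_le_mul_of_nonneg_left hzρ hs0
        have q3 : ‖z‖ ^ 2 ≤ ρ ^ 2 := pow_le_pow_left₀ hz0 hzρ 2
        have q4 : 2 * (1 + s) * ‖z‖ ^ 2 ≤ 18 * ρ ^ 2 :=
          mul_le_mul h18 q3 (by positivity) (by norm_num)
        linarith only [q1, q2, q4]
      calc (f z).re < (‖g z‖) ^ β := hfb z hz1
        _ ≤ Mv := Real.rpow_le_rpow (norm_nonneg _) hgz hβpos.le
    have hBC := borelCara hρpos (hfdiff.mono (ball_subset_ball (by linarith only [hρhalf]))) hReρ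
    rw [hnormf, hf0re] at hBC
    set Λ : ℝ := L / a with hΛdef
    have hΛpos : 0 < Λ := div_pos hLpos hapos
    have hLa : L = Λ * a := by rw [hΛdef]; field_simp
    have hM1 : s * ρ + 18 * ρ ^ 2 ≤ s * r + 5 * r ^ 2 := by
      rw [hρdef]
      have q1 : s * (r/2) ≤ s * r := by
        apply mul_le_mul_of_nonneg_left _ hs0
        linarith only [hrpos]
      have q2 : 18 * (r/2)^2 ≤ 5 * r^2 := by nlinarith only [sq_nonneg r]
      linarith only [q1, q2]
    have hr2β : (r ^ 2 : ℝ) ^ β = r ^ (2*β) := by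
      rw [sq, Real.mul_rpow hrpos.le hrpos.le, ← Real.rpow_add hrpos]
      congr 1
      ring
    have hM2 : Mv ≤ (s*r) ^ β + 5 * r ^ (2*β) := by
      have q1 : Mv ≤ (s*r + 5*r^2) ^ β :=
        Real.rpow_le_rpow (by positivity) hM1 hβpos.le
      have q2 : (s*r + 5*r^2) ^ β ≤ (s*r) ^ β + (5*r^2) ^ β :=
        rpow_add_le (by positivity) (by positivity) hβpos.le hβ1.le
      have q3 : ((5:ℝ)*r^2) ^ β ≤ 5 * r ^ (2*β) := by
        rw [Real.mul_rpow (by norm_num) (by positivity), hr2β]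
        apply mul_le_mul_of_nonneg_right _ (Real.rpow_nonneg hrpos.le _)
        calc (5:ℝ) ^ β ≤ 5 ^ (1:ℝ) := Real.rpow_le_rpow_of_exponent_le (by norm_num) hβ1.le
          _ = 5 := Real.rpow_one 5
      linarith only [q1, q2, q3]
    have hsr : (s*r) ^ β = Λ ^ β * r ^ (2*β) := by
      have q1 : s * r = Λ * (r * r) := by
        rw [hsL, hLa]
        calc Λ * a * t * r = Λ * (a * t * r) := by ring
          _ = Λ * (r * r) := by rw [hat]
      rw [q1, Real.mul_rpow hΛpos.le (by positivity), Real.mul_rpow hrpos.le hrpos.le,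
        ← Real.rpow_add hrpos, show β + β = 2*β by ring]
    have hra2 : r ^ (2*β) / r = a := by
      have q1 : a = r ^ (2*β) / r := by
        rw [hadef, Real.rpow_sub hrpos, Real.rpow_one]
      rw [q1]
    have hkey : L ≤ (4 * Λ ^ β + 24) * a := by
      have h8 : L ≤ 4 * (Mv + δ) / r := by
        have q0 : 2 * (Mv - -δ) / ρ = 4 * (Mv + δ) / r := by
          rw [hρdef]
          field_simp
          ring
        rw [q0] at hBC
        exact hBC
      have q1 : Mv + δ ≤ Λ ^ β * r ^ (2*β) + 5 * r ^ (2*β) + r ^ (2*β) := by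
        rw [← hsr]
        linarith only [hM2, hδr]
      calc L ≤ 4 * (Mv + δ) / r := h8
        _ ≤ 4 * (Λ ^ β * r ^ (2*β) + 5 * r ^ (2*β) + r ^ (2*β)) / r := by
            apply (div_le_div_iff_of_pos_right hrpos).mpr
            linarith only [q1]
        _ = (4 * Λ ^ β + 24) * (r ^ (2*β) / r) := by ring
        _ = (4 * Λ ^ β + 24) * a := by rw [hra2]
    have hΛineq : Λ ≤ 4 * Λ ^ β + 24 := by
      have h9 : Λ * a ≤ (4 * Λ ^ β + 24) * a := by rw [← hLa]; exact hkey
      exact le_of_mul_le_mul_right h9 hapos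
    have hΛC₀ : Λ ≤ C₀ := by
      rcases le_or_gt Λ 1 with h | h
      · calc Λ ≤ 1 := h
          _ ≤ C₀ := by linarith only [hC₀28]
      · have hΛβ1 : 1 ≤ Λ ^ β := Real.one_le_rpow h.le hβpos.le
        have h28 : Λ ≤ 28 * Λ ^ β := by nlinarith only [hΛineq, hΛβ1]
        have hΛβpos : 0 < Λ ^ β := Real.rpow_pos_of_pos hΛpos _
        have h9 : Λ ^ (1-β) ≤ 28 := by
          rw [Real.rpow_sub hΛpos, Real.rpow_one, div_le_iff₀ hΛβpos]
          linarith only [h28]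
        calc Λ = (Λ ^ (1-β)) ^ ((1:ℝ)/(1-β)) := by
              rw [← Real.rpow_mul hΛpos.le,
                show (1-β) * ((1:ℝ)/(1-β)) = 1 by field_simp, Real.rpow_one]
          _ ≤ 28 ^ ((1:ℝ)/(1-β)) :=
              Real.rpow_le_rpow (Real.rpow_nonneg hΛpos.le _) h9 (by positivity)
          _ = C₀ := hC₀def.symm
    have hLC : L ≤ C₀ * a := by
      rw [hLa]
      exact mul_le_mul_of_nonneg_right hΛC₀ hapos.le
    rw [htea]
    have q5 : 1 / C₀ * (1 / a) * ‖xN‖ = ‖xN‖ / (C₀ * a) := by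
      field_simp
    rw [q5, div_le_div_iff₀ (by positivity) hlam, one_mul]
    calc ‖xN‖ * lam = L := by rw [hLdef]; ring
      _ ≤ C₀ * a := hLC
  · -- upper bound
    unfold kob
    have h := csInf_le hbdd hmem
    have heq : 1/lam₀ = 1/κ * t ^ e * ‖xN‖ := by
      rw [hlamdef, htea]
      field_simp
    rw [heq] at h
    exact h
end

section
/- Let β > 1 and ψ(x) = x^β. Then for every δ₀ ∈ (0,1) there exists C > 0 (depending only on β and δ₀) such that for all δ ∈ (0, δ₀] and all x_N, x_T ∈ ℂ with |x_T| ≤ (1/8)·δ^{1/β − 1}·|x_N|: (1/(4√2))·δ^{1/(2β) − 1}·|x_N| ≤ κ_{G_ψ}(p_δ; (x_N, x_T)) ≤ C·δ^{1/(2β) − 1}·|x_N|. -/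
open Complex Metric Set

-- algebraic identity
lemma alg1 (u v : ℂ) (hu : ‖u‖ ≤ 1) (hv : ‖v‖ ≤ 1) :
    ‖u - v‖ ≤ ‖1 - (starRingEnd ℂ) v * u‖ := by
  have h2 : ‖u - v‖ ^ 2 ≤ ‖1 - (starRingEnd ℂ) v * u‖ ^ 2 := by
    rw [Complex.sq_norm, Complex.sq_norm]
    have hu' : Complex.normSq u ≤ 1 := by
      rw [← Complex.sq_norm]; nlinarith [norm_nonneg u]
    have hv' : Complex.normSq v ≤ 1 := by
      rw [← Complex.sq_norm]; nlinarith [norm_nonneg v]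
    have key : Complex.normSq (1 - (starRingEnd ℂ) v * u) - Complex.normSq (u - v)
        = (1 - Complex.normSq u) * (1 - Complex.normSq v) := by
      simp [Complex.normSq_apply, Complex.sub_re, Complex.sub_im, Complex.mul_re,
        Complex.mul_im, Complex.conj_re, Complex.conj_im]
      ring
    nlinarith [key, hu', hv']
  exact (pow_le_pow_iff_left₀ (norm_nonneg _) (norm_nonneg _) (by norm_num)).mp h2

-- real quadratic conclusion
lemma alg2 (a s A x : ℝ) (ha0 : 0 ≤ a) (ha1 : a ≤ 1) (hs0 : 0 ≤ s) (hs1 : s < 1)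
    (hA0 : 0 ≤ A) (hA1 : A ≤ 1) (hx : x ≤ a * A)
    (h : A ^ 2 + a ^ 2 - 2 * x ≤ s ^ 2 * (1 - 2 * x + a ^ 2 * A ^ 2)) :
    A ≤ a + s := by
  by_contra h'
  push_neg at h'
  have h1 : 0 < (1 + a * s) * A - (a + s) := by nlinarith [mul_nonneg (mul_nonneg ha0 hs0) hA0]
  have haA : a * A ≤ 1 := by nlinarith
  have h2 : 0 < (1 - a * s) * A - (a - s) := by nlinarith [mul_nonneg hs0 (by nlinarith : (0:ℝ) ≤ 1 - a * A)]
  have hs2 : (0:ℝ) ≤ 1 - s ^ 2 := by nlinarith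
  have hx' := mul_le_mul_of_nonneg_right hx hs2
  nlinarith [mul_pos h1 h2, hx']

lemma sq_expand (u v : ℂ) : ‖u - v‖ ^ 2
    = ‖u‖ ^ 2 + ‖v‖ ^ 2 - 2 * ((starRingEnd ℂ) v * u).re := by
  rw [Complex.sq_norm, Complex.sq_norm, Complex.sq_norm]
  simp [Complex.normSq_apply, Complex.mul_re, Complex.sub_re, Complex.sub_im]
  ring

lemma sq_expand2 (u v : ℂ) : ‖1 - (starRingEnd ℂ) v * u‖ ^ 2
    = 1 - 2 * ((starRingEnd ℂ) v * u).re + ‖v‖ ^ 2 * ‖u‖ ^ 2 := by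
  rw [Complex.sq_norm, Complex.sq_norm, Complex.sq_norm]
  simp [Complex.normSq_apply, Complex.mul_re, Complex.mul_im, Complex.sub_re, Complex.sub_im]
  ring

lemma schwarz_pick (f : ℂ → ℂ) (hd : DifferentiableOn ℂ f (ball 0 1))
    (hm : MapsTo f (ball 0 1) (ball 0 1)) (h0 : f 0 = 0) {z : ℂ} (hz : z ∈ ball (0 : ℂ) 1) :
    ‖f z‖ ≤ ‖z‖ * (‖deriv f 0‖ + ‖z‖) := by
  have h01 : (0 : ℂ) ∈ ball (0 : ℂ) 1 := mem_ball_self one_pos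
  set g := dslope f 0 with hg_def
  have hg_diff : DifferentiableOn ℂ g (ball 0 1) :=
    (differentiableOn_dslope (ball_mem_nhds 0 one_pos)).mpr hd
  have hm' : MapsTo f (ball 0 1) (ball (f 0) 1) := by rwa [h0]
  have hg_le : ∀ w ∈ ball (0 : ℂ) 1, ‖g w‖ ≤ 1 := fun w hw => by
    simpa using Complex.norm_dslope_le_div_of_mapsTo_ball hd (hm'.mono_right ball_subset_closedBall) hw
  have hg0 : g 0 = deriv f 0 := dslope_same f 0
  set a := ‖deriv f 0‖ with ha_def
  have ha0 : 0 ≤ a := norm_nonneg _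
  have ha1 : a ≤ 1 := by rw [ha_def, ← hg0]; exact hg_le 0 h01
  have hs0 : 0 ≤ ‖z‖ := norm_nonneg _
  have hs1 : ‖z‖ < 1 := by rwa [mem_ball_zero_iff] at hz
  have key : ‖g z‖ ≤ a + ‖z‖ := by
    rcases le_or_gt 1 (a + ‖z‖) with hcase | hcase
    · exact (hg_le z hz).trans hcase
    · have ha : a < 1 := lt_of_le_of_lt (le_add_of_nonneg_right hs0) hcase
      have hne : ∀ w ∈ ball (0 : ℂ) 1, 1 - (starRingEnd ℂ) (g 0) * g w ≠ 0 := by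
        intro w hw hcontra
        have h1 : ‖(starRingEnd ℂ) (g 0) * g w‖ = 1 := by
          have : (starRingEnd ℂ) (g 0) * g w = 1 := by
            have := sub_eq_zero.mp hcontra; exact this.symm
          rw [this]; simp
        have h2 : ‖(starRingEnd ℂ) (g 0) * g w‖ ≤ a * 1 := by
          rw [norm_mul, Complex.norm_conj, hg0, ← ha_def]
          exact mul_le_mul le_rfl (hg_le w hw) (norm_nonneg _) ha0
        rw [h1] at h2; simp at h2; exact absurd h2 (not_le.mpr ha)
      set q : ℂ → ℂ := fun w => (g w - g 0) / (1 - (starRingEnd ℂ) (g 0) * g w) with hq_def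
      have hd_q : DifferentiableOn ℂ q (ball 0 1) := by
        apply DifferentiableOn.div (hg_diff.sub_const _)
        · exact (differentiableOn_const _).sub (hg_diff.const_mul _)
        · exact hne
      have hq0 : q 0 = 0 := by simp [hq_def]
      have hq_bound : ∀ w ∈ ball (0 : ℂ) 1, ‖q w‖ ≤ 1 := by
        intro w hw
        rw [hq_def]
        simp only [norm_div]
        rw [div_le_one (norm_pos_iff.mpr (hne w hw))]
        exact alg1 (g w) (g 0) (hg_le w hw) (hg_le 0 h01)
      -- Schwarz lemma applied to q for radii R > 1, then limit
      have hqz : ‖q z‖ ≤ ‖z‖ := by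
        apply le_of_forall_pos_le_add
        intro ε hε
        have hR : (0:ℝ) < 1 + ε := by linarith
        have hmaps : MapsTo q (ball (0:ℂ) 1) (ball (q 0) (1 + ε)) := by
          intro w hw
          rw [hq0, mem_ball_zero_iff]
          calc ‖q w‖ ≤ 1 := hq_bound w hw
            _ < 1 + ε := by linarith
        have := Complex.dist_le_div_mul_dist_of_mapsTo_ball hd_q (hmaps.mono_right ball_subset_closedBall) hz
        rw [hq0, dist_zero_right, dist_zero_right, div_one] at this
        calc ‖q z‖ ≤ (1 + ε) * ‖z‖ := this
          _ = ‖z‖ + ε * ‖z‖ := by ring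
          _ ≤ ‖z‖ + ε := by
              have : ε * ‖z‖ ≤ ε * 1 := by
                apply mul_le_mul_of_nonneg_left (le_of_lt hs1) (le_of_lt hε)
              linarith
      -- convert to the key quadratic inequality
      have habs : ‖g z - g 0‖ ≤
          ‖z‖ * ‖1 - (starRingEnd ℂ) (g 0) * g z‖ := by
        have heq : g z - g 0 = q z * (1 - (starRingEnd ℂ) (g 0) * g z) := by
          rw [hq_def]
          exact (div_mul_cancel₀ _ (hne z hz)).symm
        rw [heq, norm_mul, mul_comm, mul_comm (‖z‖)]
        exact mul_le_mul_of_nonneg_left hqz (norm_nonneg _)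
      set A := ‖g z‖ with hA_def
      set s := ‖z‖ with hs_def
      set x := ((starRingEnd ℂ) (g 0) * g z).re with hx_def
      have hsq : A ^ 2 + a ^ 2 - 2 * x ≤ s ^ 2 * (1 - 2 * x + a ^ 2 * A ^ 2) := by
        have h1 := mul_le_mul habs habs (norm_nonneg _)
          (mul_nonneg hs0 (norm_nonneg _))
        have e1 := sq_expand (g z) (g 0)
        have e2 := sq_expand2 (g z) (g 0)
        have hga : ‖g 0‖ = a := by rw [hg0]
        rw [hga] at e1 e2
        nlinarith [e1, e2, h1]
      have hxa : x ≤ a * A := by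
        rw [hx_def]
        calc ((starRingEnd ℂ) (g 0) * g z).re ≤ ‖(starRingEnd ℂ) (g 0) * g z‖ :=
          Complex.re_le_norm _
          _ = a * A := by rw [norm_mul, Complex.norm_conj, hg0]
      exact alg2 a s A x ha0 ha1 hs0 hs1 (norm_nonneg _) (hg_le z hz) hxa hsq
  have hfz : f z = z * g z := by
    have := sub_smul_dslope f 0 z
    simp only [sub_zero, h0, smul_eq_mul] at this
    rw [hg_def, this]
  rw [hfz, norm_mul]
  exact mul_le_mul_of_nonneg_left key hs0

lemma halfplane_deriv (f : ℂ → ℂ) (r M δ : ℝ) (hr : 0 < r) (hM : 0 ≤ M) (hδ : 0 < δ)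
    (hd : DifferentiableOn ℂ f (ball 0 r)) (h0 : f 0 = -(δ : ℂ))
    (hre : ∀ z ∈ ball (0 : ℂ) r, (f z).re < M) :
    ‖deriv f 0‖ ≤ 2 * (M + δ) / r := by
  have hMδ : 0 < M + δ := by linarith
  set d : ℂ := ((δ : ℝ) : ℂ) + 2 * (M : ℂ) with hd_def
  have hden_re : ∀ w : ℂ, w.re < M → (w - d).re < -(M + δ) := by
    intro w hw
    simp only [hd_def, Complex.sub_re, Complex.add_re, Complex.ofReal_re, Complex.mul_re]
    simp
    linarith
  have hden_ne : ∀ w : ℂ, w.re < M → w - d ≠ 0 := by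
    intro w hw hc
    have := hden_re w hw
    rw [hc] at this
    simp at this
    linarith
  have habs_lt : ∀ w : ℂ, w.re < M → ‖w + δ‖ < ‖w - d‖ := by
    intro w hw
    have h2 : ‖w + δ‖ ^ 2 < ‖w - d‖ ^ 2 := by
      rw [Complex.sq_norm, Complex.sq_norm]
      simp only [Complex.normSq_apply, hd_def, Complex.add_re, Complex.add_im, Complex.sub_re,
        Complex.sub_im, Complex.ofReal_re, Complex.ofReal_im, Complex.mul_re, Complex.mul_im]
      simp
      nlinarith
    exact (pow_lt_pow_iff_left₀ (norm_nonneg _) (norm_nonneg _) two_ne_zero).mp h2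
  set F : ℂ → ℂ := fun z => (f z + δ) / (f z - d) with hF_def
  have hd_F : DifferentiableOn ℂ F (ball 0 r) := by
    apply DifferentiableOn.div (hd.add_const _) (hd.sub_const _)
    intro z hz
    exact hden_ne (f z) (hre z hz)
  have hF0 : F 0 = 0 := by
    rw [hF_def]
    simp [h0]
  have h0r : (0:ℂ) ∈ ball (0:ℂ) r := mem_ball_self hr
  have hmapsF : MapsTo F (ball (0:ℂ) r) (ball (F 0) 1) := by
    intro z hz
    rw [hF0, mem_ball_zero_iff]
    have hfz := hre z hz
    calc ‖F z‖ = ‖f z + δ‖ / ‖f z - d‖ := by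
          rw [hF_def]; exact norm_div _ _
      _ < 1 := by
          rw [div_lt_one (norm_pos_iff.mpr (hden_ne (f z) hfz))]
          exact habs_lt (f z) hfz
  have hschwarz := Complex.norm_deriv_le_div_of_mapsTo_ball hd_F (hmapsF.mono_right ball_subset_closedBall) hr
  -- compute deriv F 0
  have hf_at : HasDerivAt f (deriv f 0) 0 :=
    (hd.differentiableAt (isOpen_ball.mem_nhds h0r)).hasDerivAt
  have hden0 : f 0 - d = -(2 * ((M : ℂ) + (δ : ℂ))) := by
    rw [h0, hd_def]; ring
  have hden0_ne : f 0 - d ≠ 0 := hden_ne (f 0) (by rw [h0]; simp; linarith)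
  have hF_at : HasDerivAt F ((deriv f 0 * (f 0 - d) - (f 0 + δ) * deriv f 0) / (f 0 - d) ^ 2) 0 :=
    (hf_at.add_const _).div (hf_at.sub_const _) hden0_ne
  have hnum0 : f 0 + (δ : ℂ) = 0 := by rw [h0]; ring
  have hne2 : (-(2 * ((M : ℂ) + (δ : ℂ)))) ≠ 0 := by rw [← hden0]; exact hden0_ne
  have hderivF : deriv F 0 = deriv f 0 / (-(2 * ((M : ℂ) + (δ : ℂ)))) := by
    rw [hF_at.deriv, hnum0, zero_mul, sub_zero, hden0, pow_two,
      mul_div_mul_right _ _ hne2]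
  rw [hderivF] at hschwarz
  rw [norm_div] at hschwarz
  have habs_den : ‖-(2 * ((M : ℂ) + (δ : ℂ)))‖ = 2 * (M + δ) := by
    rw [norm_neg]
    rw [show (2 * ((M : ℂ) + (δ : ℂ))) = ((2 * (M + δ) : ℝ) : ℂ) by push_cast; ring]
    rw [Complex.norm_real, Real.norm_eq_abs]
    rw [abs_of_pos (by linarith)]
  rw [habs_den, div_le_div_iff₀ (by linarith) hr] at hschwarz
  rw [le_div_iff₀ hr]
  linarith


lemma Tfacts (K : ℝ) (hK0 : 0 < K) :
    0 < (Real.sqrt (K ^ 2 / 64 + 4) - K / 8) / 2 ∧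
    (Real.sqrt (K ^ 2 / 64 + 4) - K / 8) / 2 ≤ 1 ∧
    ((Real.sqrt (K ^ 2 / 64 + 4) - K / 8) / 2) ^ 2
      + K / 8 * ((Real.sqrt (K ^ 2 / 64 + 4) - K / 8) / 2) = 1 ∧
    4 / ((Real.sqrt (K ^ 2 / 64 + 4) - K / 8) / 2) = K / 4 + 2 * Real.sqrt (K ^ 2 / 64 + 4) := by
  set S := Real.sqrt (K ^ 2 / 64 + 4) with hS_def
  have hS : S ^ 2 = K ^ 2 / 64 + 4 := Real.sq_sqrt (by positivity)
  have hSpos : 0 < S := Real.sqrt_pos.mpr (by positivity)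
  have hεpos : 0 < (S - K / 8) / 2 := by nlinarith
  refine ⟨hεpos, by nlinarith, by nlinarith, ?_⟩
  rw [eq_comm, eq_div_iff (ne_of_gt hεpos)]
  nlinarith

lemma Tcontract (K s2 : ℝ) (hs2 : s2 ^ 2 = 2) (hs2pos : 0 < s2) (hK : 4 * s2 ≤ K) :
    4 * s2 ≤ K / 4 + 2 * Real.sqrt (K ^ 2 / 64 + 4) ∧
    K / 4 + 2 * Real.sqrt (K ^ 2 / 64 + 4) - 4 * s2 ≤ (K - 4 * s2) / 2 := by
  have hK0 : 0 < K := lt_of_lt_of_le (by positivity) hK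
  set S := Real.sqrt (K ^ 2 / 64 + 4) with hS_def
  have hS : S ^ 2 = K ^ 2 / 64 + 4 := Real.sq_sqrt (by positivity)
  have hSpos : 0 < S := Real.sqrt_pos.mpr (by positivity)
  constructor
  · rcases le_or_gt (4 * s2 - K / 4) 0 with h | h
    · nlinarith
    · nlinarith [mul_pos (add_pos (mul_pos two_pos hSpos) h) hSpos]
  · -- 2S ≤ K/4 + 2 s2
    have h1 : 2 * S ≤ K / 4 + 2 * s2 := by
      nlinarith [mul_pos hSpos hs2pos, mul_pos hK0 hs2pos]
    linarith

lemma iterC (β δ L a : ℝ) (hβ : 1 < β) (hδ0 : 0 < δ) (hδ1 : δ < 1)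
    (hL0 : 0 ≤ L) (ha0 : 0 ≤ a) (ha1 : a ≤ 1)
    (hzone : a ≤ (1 / 8) * δ ^ (1 / β - 1) * L)
    (H : ∀ r : ℝ, 0 < r → r ≤ 1 → L ≤ 2 * ((r * (a + r)) ^ β + δ) / r) :
    L ≤ 4 * Real.sqrt 2 * δ ^ (1 - 1 / (2 * β)) := by
  have hβ0 : 0 < β := by linarith
  set s2 := Real.sqrt 2 with hs2_def
  have hs2 : s2 ^ 2 = 2 := Real.sq_sqrt (by norm_num)
  have hs2pos : 0 < s2 := Real.sqrt_pos.mpr (by norm_num)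
  set r₀ := δ ^ (1 / (2 * β)) with hr₀_def
  have hr₀pos : 0 < r₀ := Real.rpow_pos_of_pos hδ0 _
  have hr₀lt1 : r₀ < 1 := Real.rpow_lt_one hδ0.le hδ1 (by positivity)
  have hr₀sq : r₀ * r₀ = δ ^ (1 / β) := by
    rw [hr₀_def, ← Real.rpow_add hδ0]
    congr 1
    field_simp
    norm_num
  have hδβlt1 : δ ^ (1 / β) < 1 := Real.rpow_lt_one hδ0.le hδ1 (by positivity)
  have hδβpos : 0 < δ ^ (1 / β) := Real.rpow_pos_of_pos hδ0 _
  have hrpowβ : (δ ^ (1 / β)) ^ β = δ := by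
    rw [← Real.rpow_mul hδ0.le, one_div_mul_cancel (ne_of_gt hβ0), Real.rpow_one]
  have hδr₀ : δ / r₀ = δ ^ (1 - 1 / (2 * β)) := by
    rw [hr₀_def, Real.rpow_sub hδ0, Real.rpow_one]
  have hδβ1 : δ ^ (1 / β - 1) * δ = δ ^ (1 / β) := by
    rw [Real.rpow_sub hδ0, Real.rpow_one, div_mul_cancel₀]
    exact ne_of_gt hδ0
  have hQpos : 0 < δ / r₀ := div_pos hδ0 hr₀pos
  -- the iteration step
  have step : ∀ K : ℝ, 4 * s2 ≤ K → L ≤ K * (δ / r₀) →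
      L ≤ (K / 4 + 2 * Real.sqrt (K ^ 2 / 64 + 4)) * (δ / r₀) := by
    intro K hK hLK
    have hK0 : 0 < K := lt_of_lt_of_le (by positivity) hK
    obtain ⟨hεpos, hεle1, hεeq, h4ε⟩ := Tfacts K hK0
    set S := Real.sqrt (K ^ 2 / 64 + 4) with hS_def
    set ε := (S - K / 8) / 2 with hε_def
    set r := ε * r₀ with hr_def
    have hrpos : 0 < r := mul_pos hεpos hr₀pos
    have hrle1 : r ≤ 1 := by
      have : r ≤ r₀ := by
        calc r = ε * r₀ := rfl
          _ ≤ 1 * r₀ := mul_le_mul_of_nonneg_right hεle1 hr₀pos.le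
          _ = r₀ := one_mul _
      linarith
    have ha' : a ≤ K / 8 * r₀ := by
      have h1 : (1 / 8) * δ ^ (1 / β - 1) * L ≤ (1 / 8) * δ ^ (1 / β - 1) * (K * (δ / r₀)) := by
        apply mul_le_mul_of_nonneg_left hLK
        positivity
      have h2 : (1 / 8) * δ ^ (1 / β - 1) * (K * (δ / r₀)) = K / 8 * (δ ^ (1 / β - 1) * δ / r₀) := by
        ring
      have h3 : δ ^ (1 / β) / r₀ = r₀ := by
        rw [← hr₀sq]
        field_simp
      rw [h2, hδβ1, h3] at h1
      exact hzone.trans h1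
    have hra : r * (a + r) ≤ δ ^ (1 / β) := by
      calc r * (a + r) ≤ (ε * r₀) * (K / 8 * r₀ + ε * r₀) := by
            apply mul_le_mul_of_nonneg_left _ (le_of_lt hrpos)
            exact add_le_add_left ha' _
        _ = (ε ^ 2 + K / 8 * ε) * (r₀ * r₀) := by ring
        _ = δ ^ (1 / β) := by rw [hεeq, one_mul, hr₀sq]
    have hMle : (r * (a + r)) ^ β ≤ δ := by
      calc (r * (a + r)) ^ β ≤ (δ ^ (1 / β)) ^ β :=
            Real.rpow_le_rpow (by positivity) hra hβ0.le
        _ = δ := hrpowβ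
    calc L ≤ 2 * ((r * (a + r)) ^ β + δ) / r := H r hrpos hrle1
      _ ≤ 2 * (δ + δ) / r := (div_le_div_iff_of_pos_right hrpos).mpr (by linarith)
      _ = 4 / ε * (δ / r₀) := by
          rw [hr_def]
          field_simp
          ring
      _ = (K / 4 + 2 * S) * (δ / r₀) := by rw [h4ε]
  -- initialization
  set K₀ := max (4 * s2) (8 / r₀) with hK₀_def
  have hK₀₁ : 4 * s2 ≤ K₀ := le_max_left _ _
  have hinit : L ≤ K₀ * (δ / r₀) := by
    set r := δ ^ (1 / β) / 2 with hr_def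
    have hrpos : 0 < r := by positivity
    have hrle1 : r ≤ 1 := by
      rw [hr_def]; linarith
    have hra : r * (a + r) ≤ δ ^ (1 / β) := by
      have h1 : a + r ≤ 3 / 2 := by rw [hr_def]; linarith
      calc r * (a + r) ≤ r * (3 / 2) := mul_le_mul_of_nonneg_left h1 hrpos.le
        _ = (3 / 4) * δ ^ (1 / β) := by rw [hr_def]; ring
        _ ≤ δ ^ (1 / β) := by linarith
    have hMle : (r * (a + r)) ^ β ≤ δ := by
      calc (r * (a + r)) ^ β ≤ (δ ^ (1 / β)) ^ β :=
            Real.rpow_le_rpow (by positivity) hra hβ0.le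
        _ = δ := hrpowβ
    calc L ≤ 2 * ((r * (a + r)) ^ β + δ) / r := H r hrpos hrle1
      _ ≤ 2 * (δ + δ) / r := (div_le_div_iff_of_pos_right hrpos).mpr (by linarith)
      _ = (8 / r₀) * (δ / r₀) := by
          rw [hr_def, ← hr₀sq]
          field_simp
          ring
      _ ≤ K₀ * (δ / r₀) := by
          apply mul_le_mul_of_nonneg_right (le_max_right _ _) hQpos.le
  -- induction
  have hind : ∀ n : ℕ, ∃ K : ℝ, 4 * s2 ≤ K ∧ L ≤ K * (δ / r₀) ∧
      K - 4 * s2 ≤ (K₀ - 4 * s2) / 2 ^ n := by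
    intro n
    induction n with
    | zero => exact ⟨K₀, hK₀₁, hinit, by norm_num⟩
    | succ n ih =>
        obtain ⟨K, hK1, hK2, hK3⟩ := ih
        obtain ⟨hc1, hc2⟩ := Tcontract K s2 hs2 hs2pos hK1
        refine ⟨K / 4 + 2 * Real.sqrt (K ^ 2 / 64 + 4), hc1, step K hK1 hK2, ?_⟩
        have h2n : (0:ℝ) < 2 ^ n := by positivity
        calc K / 4 + 2 * Real.sqrt (K ^ 2 / 64 + 4) - 4 * s2 ≤ (K - 4 * s2) / 2 := hc2
          _ ≤ ((K₀ - 4 * s2) / 2 ^ n) / 2 := by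
              exact (div_le_div_iff_of_pos_right two_pos).mpr (by linarith)
          _ = (K₀ - 4 * s2) / 2 ^ (n + 1) := by
              rw [div_div, ← pow_succ]
  -- pass to the limit
  have hfinal : L ≤ 4 * s2 * (δ / r₀) := by
    by_contra hcon
    push_neg at hcon
    set g := L - 4 * s2 * (δ / r₀) with hg_def
    have hgpos : 0 < g := by rw [hg_def]; linarith
    set B := (K₀ - 4 * s2) * (δ / r₀) with hB_def
    have hBnn : 0 ≤ B := mul_nonneg (by linarith) hQpos.le
    obtain ⟨n, hn⟩ := pow_unbounded_of_one_lt (B / g) (by norm_num : (1:ℝ) < 2)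
    obtain ⟨K, hK1, hK2, hK3⟩ := hind n
    have h2n : (0:ℝ) < 2 ^ n := by positivity
    have hBn : B / 2 ^ n < g := by
      rw [div_lt_iff₀ h2n]
      calc B = (B / g) * g := by field_simp
        _ < 2 ^ n * g := by exact mul_lt_mul_of_pos_right hn hgpos
        _ = g * 2 ^ n := mul_comm _ _
    have : L ≤ (4 * s2 + (K₀ - 4 * s2) / 2 ^ n) * (δ / r₀) := by
      calc L ≤ K * (δ / r₀) := hK2
        _ ≤ (4 * s2 + (K₀ - 4 * s2) / 2 ^ n) * (δ / r₀) := by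
            apply mul_le_mul_of_nonneg_right (by linarith) hQpos.le
    have hexp : (4 * s2 + (K₀ - 4 * s2) / 2 ^ n) * (δ / r₀)
        = 4 * s2 * (δ / r₀) + B / 2 ^ n := by
      rw [hB_def]; ring
    rw [hexp] at this
    rw [hg_def] at hgpos
    linarith
  calc L ≤ 4 * s2 * (δ / r₀) := hfinal
    _ = 4 * s2 * δ ^ (1 - 1 / (2 * β)) := by rw [hδr₀]


lemma pow_claim (β δ s c : ℝ) (hβ : 1 < β) (hδ0 : 0 < δ)
    (hc0 : 0 < c) (hc : c ≤ 1 / 4) (hs : Real.sqrt 8 * δ ^ (1 / (2 * β)) ≤ s) :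
    c * δ ^ (1 - 1 / (2 * β)) * s ≤ (s * s / 8) ^ β := by
  have hβ0 : 0 < β := by linarith
  have hβ1 : 0 ≤ β - 1 := by linarith
  set A := δ ^ (1 / (2 * β)) with hA_def
  have hA0 : 0 < A := Real.rpow_pos_of_pos hδ0 _
  set q := Real.sqrt 8 with hq_def
  have hq2 : q ^ 2 = 8 := Real.sq_sqrt (by norm_num)
  have hq0 : 0 < q := Real.sqrt_pos.mpr (by norm_num)
  have hq4 : q ≤ 4 := by nlinarith
  have hspos : 0 < s := lt_of_lt_of_le (by positivity) hs
  have hqA : q * A ≤ s := hs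
  have hsplit : ∀ x : ℝ, 0 < x → x ^ β = x ^ (β - 1) * x := by
    intro x hx
    conv_lhs => rw [show β = (β - 1) + 1 by ring]
    rw [Real.rpow_add hx, Real.rpow_one]
  set X := A ^ (β - 1) with hX_def
  set Y := s ^ (β - 1) with hY_def
  set Z := q ^ (β - 1) with hZ_def
  have hX0 : 0 < X := Real.rpow_pos_of_pos hA0 _
  have hY0 : 0 < Y := Real.rpow_pos_of_pos hspos _
  have hZ0 : 0 < Z := Real.rpow_pos_of_pos hq0 _
  have hsβ : Z * X ≤ Y := by
    rw [hX_def, hY_def, hZ_def, ← Real.mul_rpow hq0.le hA0.le]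
    exact Real.rpow_le_rpow (by positivity) hqA hβ1
  have h8β : (8:ℝ) ^ β = Z * Z * q * q := by
    have h8 : (8:ℝ) ^ β = (q ^ 2) ^ β := by rw [hq2]
    rw [h8, ← Real.rpow_natCast q 2, ← Real.rpow_mul hq0.le]
    rw [show ((2:ℕ):ℝ) * β = (β - 1) + ((β - 1) + (1 + 1)) by push_cast; ring]
    rw [Real.rpow_add hq0, Real.rpow_add hq0, Real.rpow_add hq0, Real.rpow_one]
    rw [hZ_def]
    ring
  have hD : δ ^ (1 - 1 / (2 * β)) = X * X * A := by
    rw [hX_def, hA_def, ← Real.rpow_mul hδ0.le, ← Real.rpow_add hδ0, ← Real.rpow_add hδ0]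
    congr 1
    field_simp
    ring
  have step2 : (A * s * q / 8) ^ β = A ^ β * s ^ β * q ^ β / (8:ℝ) ^ β := by
    rw [Real.div_rpow (by positivity) (by norm_num)]
    rw [Real.mul_rpow (by positivity) hq0.le, Real.mul_rpow hA0.le hspos.le]
  have step1 : (A * s * q / 8) ^ β ≤ (s * s / 8) ^ β := by
    apply Real.rpow_le_rpow (by positivity) _ hβ0.le
    have h1 : A * s * q ≤ s * s := by
      calc A * s * q = (q * A) * s := by ring
        _ ≤ s * s := mul_le_mul_of_nonneg_right hqA hspos.le
    linarith
  have key : c * (X * X * A) * s * ((8:ℝ) ^ β) ≤ (A ^ β) * (s ^ β) * (q ^ β) := by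
    rw [hsplit A hA0, hsplit s hspos, hsplit q hq0, ← hX_def, ← hY_def, ← hZ_def, h8β]
    have hcq : c * q ≤ 1 := by nlinarith
    have h5 : c * q * (X * Z) ≤ Y := by
      calc c * q * (X * Z) ≤ 1 * (X * Z) :=
            mul_le_mul_of_nonneg_right hcq (by positivity)
        _ = Z * X := by ring
        _ ≤ Y := hsβ
    nlinarith [mul_le_mul_of_nonneg_right h5 (by positivity : (0:ℝ) ≤ X * A * s * Z * q)]
  have h8pos : (0:ℝ) < (8:ℝ) ^ β := Real.rpow_pos_of_pos (by norm_num) _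
  calc c * δ ^ (1 - 1 / (2 * β)) * s = c * (X * X * A) * s := by rw [hD]
    _ ≤ (A ^ β) * (s ^ β) * (q ^ β) / (8:ℝ) ^ β := by
        rw [le_div_iff₀ h8pos]
        exact key
    _ = (A * s * q / 8) ^ β := step2.symm
    _ ≤ (s * s / 8) ^ β := step1

set_option maxHeartbeats 1000000 in
lemma disc_mem (β δ₀ δ : ℝ) (xN xT : ℂ) (hβ : 1 < β) (hδ₀0 : 0 < δ₀) (hδ₀1 : δ₀ < 1)
    (hδ0 : 0 < δ) (hδδ₀ : δ ≤ δ₀) (hxN : xN ≠ 0)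
    (hzone : ‖xT‖ ≤ (1 / 8) * δ ^ (1 / β - 1) * ‖xN‖) :
    ∃ lam : ℝ, 0 < lam ∧
      lam * ‖xN‖ = min (1 / 4) ((1 - δ₀) / 2) * δ ^ (1 - 1 / (2 * β)) ∧
      ∃ φ : ℂ → ℂ × ℂ, DifferentiableOn ℂ φ (ball (0 : ℂ) 1) ∧
        MapsTo φ (ball (0 : ℂ) 1) (Gpsi (fun x => x ^ β)) ∧
        φ 0 = pdel δ ∧ deriv φ 0 = lam • (xN, xT) := by
  have hβ0 : 0 < β := by linarith
  have hδ1 : δ < 1 := lt_of_le_of_lt hδδ₀ hδ₀1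
  set c := min (1 / 4) ((1 - δ₀) / 2) with hc_def
  have hc0 : 0 < c := lt_min (by norm_num) (by linarith)
  have hc14 : c ≤ 1 / 4 := min_le_left _ _
  have hcδ₀ : c ≤ (1 - δ₀) / 2 := min_le_right _ _
  have habsxN : 0 < ‖xN‖ := norm_pos_iff.mpr hxN
  set D := δ ^ (1 - 1 / (2 * β)) with hD_def
  have hD0 : 0 < D := Real.rpow_pos_of_pos hδ0 _
  have hDle1 : D ≤ 1 := by
    apply Real.rpow_le_one hδ0.le hδ1.le
    have : 1 / (2 * β) < 1 / 2 := by
      apply div_lt_div_of_pos_left one_pos (by norm_num) (by linarith)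
    linarith
  set lam := c * D / ‖xN‖ with hlam_def
  have hlam0 : 0 < lam := by positivity
  have hlamN : lam * ‖xN‖ = c * D := by
    rw [hlam_def]; field_simp
  set t := c * D with ht_def
  have ht0 : 0 < t := by positivity
  have htc : t ≤ c := by
    calc t = c * D := rfl
      _ ≤ c * 1 := mul_le_mul_of_nonneg_left hDle1 hc0.le
      _ = c := mul_one c
  set b := lam * ‖xT‖ with hb_def
  have hb0 : 0 ≤ b := mul_nonneg hlam0.le (norm_nonneg _)
  have hδhalf : 0 < δ ^ (1 / (2 * β)) := Real.rpow_pos_of_pos hδ0 _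
  have hδhalf1 : δ ^ (1 / (2 * β)) ≤ 1 :=
    (Real.rpow_le_one hδ0.le hδ1.le (by positivity))
  have hbc : b ≤ c / 8 * δ ^ (1 / (2 * β)) := by
    have h1 : b ≤ lam * ((1 / 8) * δ ^ (1 / β - 1) * ‖xN‖) :=
      mul_le_mul_of_nonneg_left hzone hlam0.le
    have h2 : lam * ((1 / 8) * δ ^ (1 / β - 1) * ‖xN‖)
        = (1 / 8) * δ ^ (1 / β - 1) * (c * D) := by
      rw [hlam_def]; field_simp; ring
    have h3 : δ ^ (1 / β - 1) * D = δ ^ (1 / (2 * β)) := by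
      rw [hD_def, ← Real.rpow_add hδ0]
      congr 1
      field_simp
      ring
    calc b ≤ (1 / 8) * δ ^ (1 / β - 1) * (c * D) := by rw [← h2]; exact h1
      _ = c / 8 * (δ ^ (1 / β - 1) * D) := by ring
      _ = c / 8 * δ ^ (1 / (2 * β)) := by rw [h3]
  have hb32 : b ≤ 1 / 32 := by
    calc b ≤ c / 8 * δ ^ (1 / (2 * β)) := hbc
      _ ≤ (1 / 4) / 8 * 1 := by
          apply mul_le_mul (by linarith) hδhalf1 hδhalf.le (by norm_num)
      _ = 1 / 32 := by norm_num
  refine ⟨lam, hlam0, by rw [hlamN, ht_def], ?_⟩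
  set u : ℂ := (lam : ℂ) * xN with hu_def
  set v : ℂ := (lam : ℂ) * xT with hv_def
  have habsu : ‖u‖ = t := by
    rw [hu_def, norm_mul, Complex.norm_real, Real.norm_eq_abs, abs_of_pos hlam0, ← hlamN]
  have habsv : ‖v‖ = b := by
    rw [hv_def, norm_mul, Complex.norm_real, Real.norm_eq_abs, abs_of_pos hlam0, hb_def]
  refine ⟨fun ζ => (-(δ : ℂ) + u * ζ, v * ζ + (1 / 4 : ℂ) * ζ ^ 2), ?_, ?_, ?_, ?_⟩
  · apply Differentiable.differentiableOn
    apply Differentiable.prodMk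
    · exact (differentiable_id.const_mul u).const_add _
    · exact (differentiable_id.const_mul v).add ((differentiable_pow 2).const_mul _)
  · -- MapsTo
    intro ζ hζ
    set s := ‖ζ‖ with hs_def
    have hs0 : 0 ≤ s := norm_nonneg _
    have hs1 : s < 1 := by rwa [mem_ball_zero_iff] at hζ
    have habs1 : ‖-(δ : ℂ) + u * ζ‖ ≤ δ + t * s := by
      calc ‖-(δ : ℂ) + u * ζ‖ ≤ ‖-(δ : ℂ)‖ + ‖u * ζ‖ :=
            norm_add_le _ _
        _ = δ + t * s := by
            rw [norm_neg, Complex.norm_real, Real.norm_eq_abs, abs_of_pos hδ0, norm_mul, habsu]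
    have habs2 : ‖v * ζ + (1 / 4 : ℂ) * ζ ^ 2‖ ≤ b * s + 1 / 4 * s ^ 2 := by
      calc ‖v * ζ + (1 / 4 : ℂ) * ζ ^ 2‖
          ≤ ‖v * ζ‖ + ‖(1 / 4 : ℂ) * ζ ^ 2‖ := norm_add_le _ _
        _ = b * s + 1 / 4 * s ^ 2 := by
            simp only [norm_mul, norm_pow, norm_div, norm_one, Complex.norm_ofNat, ← hs_def]
            rw [habsv]
    refine ⟨?_, ?_, ?_⟩
    · -- |z₁| < 1
      calc ‖-(δ : ℂ) + u * ζ‖ ≤ δ + t * s := habs1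
        _ < δ₀ + c := by
            have h2 : t * s < t := mul_lt_of_lt_one_right ht0 hs1
            linarith
        _ < 1 := by linarith
    · -- |z₂| < 1
      calc ‖v * ζ + (1 / 4 : ℂ) * ζ ^ 2‖ ≤ b * s + 1 / 4 * s ^ 2 := habs2
        _ ≤ 1 / 32 + 1 / 4 := by
            have h2 : b * s ≤ b := mul_le_of_le_one_right hb0 hs1.le
            have h3 : s ^ 2 ≤ 1 := by nlinarith
            linarith
        _ < 1 := by norm_num
    · -- Re z₁ < |z₂|^β
      have hre : ((-(δ : ℂ) + u * ζ).re : ℝ) ≤ -δ + t * s := by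
        have h1 : (u * ζ).re ≤ t * s := by
          calc (u * ζ).re ≤ ‖u * ζ‖ := Complex.re_le_norm _
            _ = t * s := by rw [norm_mul, habsu]
        simp only [Complex.add_re, Complex.neg_re, Complex.ofReal_re]
        linarith
      rcases lt_or_ge (t * s) δ with hcase | hcase
      · -- Re < 0 ≤ rpow
        have : ((-(δ : ℂ) + u * ζ).re : ℝ) < 0 := by linarith
        calc ((-(δ : ℂ) + u * ζ).re : ℝ) < 0 := this
          _ ≤ (‖v * ζ + (1 / 4 : ℂ) * ζ ^ 2‖) ^ β :=
            Real.rpow_nonneg (norm_nonneg _) β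
      · -- big s case
        have hq8 : Real.sqrt 8 ≤ 4 := by
          nlinarith [Real.sq_sqrt (by norm_num : (0:ℝ) ≤ 8),
            Real.sqrt_nonneg (8:ℝ)]
        have hs_big : Real.sqrt 8 * δ ^ (1 / (2 * β)) ≤ s := by
          have h1 : δ ≤ t * s := hcase
          have h2 : δ ^ (1 / (2 * β)) * δ ^ (1 - 1 / (2 * β)) = δ := by
            rw [← Real.rpow_add hδ0]; norm_num
          -- t = c * D, so δ ≤ c * D * s ⇒ δ^{1/(2β)} * D ≤ c * D * s / ... 
          have h3 : δ ^ (1 / (2 * β)) ≤ c * s := by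
            have h4 : δ ^ (1 / (2 * β)) * D ≤ (c * s) * D := by
              calc δ ^ (1 / (2 * β)) * D = δ := by rw [hD_def]; exact h2
                _ ≤ t * s := h1
                _ = (c * s) * D := by rw [ht_def]; ring
            exact le_of_mul_le_mul_right h4 hD0
          calc Real.sqrt 8 * δ ^ (1 / (2 * β)) ≤ 4 * δ ^ (1 / (2 * β)) :=
                mul_le_mul_of_nonneg_right hq8 hδhalf.le
            _ ≤ 4 * (c * s) := by linarith [mul_le_mul_of_nonneg_left h3 (by norm_num : (0:ℝ) ≤ 4)]
            _ ≤ 1 * s := by nlinarith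
            _ = s := one_mul s
        have hs8b : 8 * b ≤ s := by
          have h1 : 8 * b ≤ c * δ ^ (1 / (2 * β)) := by linarith [hbc]
          have h2 : c * δ ^ (1 / (2 * β)) ≤ δ ^ (1 / (2 * β)) := by nlinarith
          have h3 : δ ^ (1 / (2 * β)) ≤ Real.sqrt 8 * δ ^ (1 / (2 * β)) := by
            nlinarith [Real.sq_sqrt (by norm_num : (0:ℝ) ≤ 8), Real.sqrt_nonneg (8:ℝ), hδhalf]
          linarith
        have hspos : 0 < s := by
          have : 0 < Real.sqrt 8 * δ ^ (1 / (2 * β)) := by positivity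
          linarith
        have hlower : s * s / 8 ≤ ‖v * ζ + (1 / 4 : ℂ) * ζ ^ 2‖ := by
          have h1 : ‖(1 / 4 : ℂ) * ζ ^ 2‖
              ≤ ‖v * ζ + (1 / 4 : ℂ) * ζ ^ 2‖ + ‖v * ζ‖ := by
            calc ‖(1 / 4 : ℂ) * ζ ^ 2‖
                = ‖(v * ζ + (1 / 4 : ℂ) * ζ ^ 2) + (-(v * ζ))‖ := by ring_nf
              _ ≤ _ := by
                  have := norm_add_le (v * ζ + (1 / 4 : ℂ) * ζ ^ 2) (-(v * ζ))
                  rwa [norm_neg] at this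
          have h2 : ‖(1 / 4 : ℂ) * ζ ^ 2‖ = 1 / 4 * s ^ 2 := by
            simp only [norm_mul, norm_pow, norm_div, norm_one, Complex.norm_ofNat, ← hs_def]
          have h3 : ‖v * ζ‖ = b * s := by rw [norm_mul, habsv]
          have h4 : b * s ≤ s * s / 8 := by nlinarith
          have h5 : 1 / 4 * s ^ 2 - b * s ≤ ‖v * ζ + (1 / 4 : ℂ) * ζ ^ 2‖ := by
            rw [h2, h3] at h1; linarith
          nlinarith
        have hclaim := pow_claim β δ s c hβ hδ0 hc0 hc14 hs_big
        have hmono : (s * s / 8) ^ β ≤ (‖v * ζ + (1 / 4 : ℂ) * ζ ^ 2‖) ^ β :=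
          Real.rpow_le_rpow (by positivity) hlower hβ0.le
        calc ((-(δ : ℂ) + u * ζ).re : ℝ) ≤ -δ + t * s := hre
          _ < t * s := by linarith
          _ = c * D * s := by rw [ht_def]
          _ ≤ (s * s / 8) ^ β := hclaim
          _ ≤ _ := hmono
  · simp [pdel]
  · -- derivative
    have h1 : HasDerivAt (fun ζ : ℂ => -(δ : ℂ) + u * ζ) u 0 := by
      simpa using ((hasDerivAt_id (0:ℂ)).const_mul u).const_add (-(δ:ℂ))
    have h2 : HasDerivAt (fun ζ : ℂ => v * ζ + (1 / 4 : ℂ) * ζ ^ 2) v 0 := by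
      have ha : HasDerivAt (fun ζ : ℂ => v * ζ) v 0 := by
        simpa using (hasDerivAt_id (0:ℂ)).const_mul v
      have hb : HasDerivAt (fun ζ : ℂ => (1 / 4 : ℂ) * ζ ^ 2) 0 0 := by
        simpa using (hasDerivAt_pow 2 (0:ℂ)).const_mul (1/4 : ℂ)
      have h := ha.add hb
      rw [add_zero] at h
      exact h
    have := (h1.prodMk h2).deriv
    rw [this]
    rw [hu_def, hv_def, Prod.smul_mk]
    simp [Complex.real_smul]


lemma lower_est (β δ : ℝ) (xN xT : ℂ) (hβ : 1 < β) (hδ0 : 0 < δ) (hδ1 : δ < 1)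
    (hzone : ‖xT‖ ≤ (1 / 8) * δ ^ (1 / β - 1) * ‖xN‖)
    (lam : ℝ) (hlam : 0 < lam) (φ : ℂ → ℂ × ℂ)
    (hφd : DifferentiableOn ℂ φ (ball (0 : ℂ) 1))
    (hφm : MapsTo φ (ball (0 : ℂ) 1) (Gpsi fun x => x ^ β))
    (hφ0 : φ 0 = pdel δ) (hφder : deriv φ 0 = lam • (xN, xT)) :
    lam * ‖xN‖ ≤ 4 * Real.sqrt 2 * δ ^ (1 - 1 / (2 * β)) := by
  have hβ0 : 0 < β := by linarith
  have h01 : (0 : ℂ) ∈ ball (0 : ℂ) 1 := mem_ball_self one_pos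
  set φ₁ : ℂ → ℂ := fun z => (φ z).1 with hφ₁_def
  set φ₂ : ℂ → ℂ := fun z => (φ z).2 with hφ₂_def
  have hd1 : DifferentiableOn ℂ φ₁ (ball (0 : ℂ) 1) := hφd.fst
  have hd2 : DifferentiableOn ℂ φ₂ (ball (0 : ℂ) 1) := hφd.snd
  have hφat : DifferentiableAt ℂ φ 0 := (hφd 0 h01).differentiableAt (isOpen_ball.mem_nhds h01)
  have hφder' : HasDerivAt φ (lam • (xN, xT)) 0 := hφder ▸ hφat.hasDerivAt
  have h1 : HasDerivAt φ₁ ((lam : ℂ) * xN) 0 := by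
    have := (ContinuousLinearMap.fst ℂ ℂ ℂ).hasFDerivAt.comp_hasDerivAt 0 hφder'
    simpa [Complex.real_smul, Function.comp_def] using this
  have h2 : HasDerivAt φ₂ ((lam : ℂ) * xT) 0 := by
    have := (ContinuousLinearMap.snd ℂ ℂ ℂ).hasFDerivAt.comp_hasDerivAt 0 hφder'
    simpa [Complex.real_smul, Function.comp_def] using this
  set L := lam * ‖xN‖ with hL_def
  set a := lam * ‖xT‖ with ha_def
  have hderiv1 : ‖deriv φ₁ 0‖ = L := by
    rw [h1.deriv, norm_mul, Complex.norm_real, Real.norm_eq_abs, abs_of_pos hlam]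
  have hderiv2 : ‖deriv φ₂ 0‖ = a := by
    rw [h2.deriv, norm_mul, Complex.norm_real, Real.norm_eq_abs, abs_of_pos hlam]
  have hφ₂0 : φ₂ 0 = 0 := by rw [hφ₂_def]; simp [hφ0, pdel]
  have hφ₁0 : φ₁ 0 = -(δ : ℂ) := by rw [hφ₁_def]; simp [hφ0, pdel]
  have hmap2 : MapsTo φ₂ (ball (0 : ℂ) 1) (ball (0 : ℂ) 1) := by
    intro z hz
    rw [mem_ball_zero_iff]
    exact (hφm hz).2.1
  have hL0 : 0 ≤ L := mul_nonneg hlam.le (norm_nonneg _)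
  have ha0 : 0 ≤ a := mul_nonneg hlam.le (norm_nonneg _)
  have ha1 : a ≤ 1 := by
    rw [← hderiv2]
    exact Complex.norm_deriv_le_one_of_mapsTo_ball hd2 (by rw [hφ₂0]; exact hmap2.mono_right ball_subset_closedBall) one_pos
  have hzone' : a ≤ (1 / 8) * δ ^ (1 / β - 1) * L := by
    calc a = lam * ‖xT‖ := rfl
      _ ≤ lam * ((1 / 8) * δ ^ (1 / β - 1) * ‖xN‖) :=
          mul_le_mul_of_nonneg_left hzone hlam.le
      _ = (1 / 8) * δ ^ (1 / β - 1) * L := by rw [hL_def]; ring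
  have H : ∀ r : ℝ, 0 < r → r ≤ 1 → L ≤ 2 * ((r * (a + r)) ^ β + δ) / r := by
    intro r hr0 hr1
    set M := (r * (a + r)) ^ β with hM_def
    have hM0 : 0 ≤ M := Real.rpow_nonneg (by positivity) _
    have hsub : ball (0 : ℂ) r ⊆ ball (0 : ℂ) 1 := ball_subset_ball hr1
    have hre : ∀ z ∈ ball (0 : ℂ) r, (φ₁ z).re < M := by
      intro z hz
      have hz1 : z ∈ ball (0 : ℂ) 1 := hsub hz
      have hmem := hφm hz1
      have hsp := schwarz_pick φ₂ hd2 hmap2 hφ₂0 hz1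
      rw [hderiv2] at hsp
      have hzr : ‖z‖ < r := by rwa [mem_ball_zero_iff] at hz
      have hmono : ‖z‖ * (a + ‖z‖) ≤ r * (a + r) := by
        apply mul_le_mul hzr.le (by linarith) (by positivity) (by linarith)
      have habs2 : ‖φ₂ z‖ ≤ r * (a + r) := le_trans hsp hmono
      have hpow : (‖φ₂ z‖) ^ β ≤ M := by
        rw [hM_def]
        exact Real.rpow_le_rpow (norm_nonneg _) habs2 hβ0.le
      calc (φ₁ z).re < (‖φ₂ z‖) ^ β := hmem.2.2
        _ ≤ M := hpow
    have := halfplane_deriv φ₁ r M δ hr0 hM0 hδ0 (hd1.mono hsub) hφ₁0 hre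
    rw [hderiv1] at this
    exact this
  exact iterC β δ L a hβ hδ0 hδ1 hL0 ha0 ha1 hzone' H

/-- for `ψ(x) = x^β`, `β > 1`, in the zone `|x_T| ≤ (1/8)δ^{1/β−1}|x_N|`
the metric is comparable to `δ^{1/(2β)−1}|x_N|`, with explicit lower constant `1/(4√2)`. -/
theorem stmt11 (β : ℝ) (hβ : 1 < β) :
    ∀ δ₀ ∈ Ioo (0 : ℝ) 1, ∃ C : ℝ, 0 < C ∧
      ∀ δ ∈ Ioc (0 : ℝ) δ₀, ∀ xN xT : ℂ,
        ‖xT‖ ≤ (1 / 8) * δ ^ (1 / β - 1) * ‖xN‖ →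
        (1 / (4 * Real.sqrt 2)) * δ ^ (1 / (2 * β) - 1) * ‖xN‖ ≤
            kob (Gpsi (fun x => x ^ β)) (pdel δ) (xN, xT) ∧
        kob (Gpsi (fun x => x ^ β)) (pdel δ) (xN, xT) ≤
            C * δ ^ (1 / (2 * β) - 1) * ‖xN‖ := by

  rintro δ₀ ⟨hδ₀0, hδ₀1⟩
  set c := min (1 / 4 : ℝ) ((1 - δ₀) / 2) with hc_def
  have hc0 : 0 < c := lt_min (by norm_num) (by linarith)
  refine ⟨1 / c, by positivity, ?_⟩
  rintro δ ⟨hδ0, hδδ₀⟩ xN xT hzone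
  have hδ1 : δ < 1 := lt_of_le_of_lt hδδ₀ hδ₀1
  set E := δ ^ (1 - 1 / (2 * β)) with hE_def
  have hE0 : 0 < E := Real.rpow_pos_of_pos hδ0 _
  have hEinv : δ ^ (1 / (2 * β) - 1) = E⁻¹ := by
    rw [hE_def, ← Real.rpow_neg hδ0.le]
    congr 1
    ring
  have hs2pos : 0 < Real.sqrt 2 := Real.sqrt_pos.mpr (by norm_num)
  by_cases hxN : xN = 0
  · -- degenerate direction
    have hxT : xT = 0 := by
      subst hxN
      simp only [norm_zero, mul_zero] at hzone
      exact norm_eq_zero.mp (le_antisymm hzone (norm_nonneg _))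
    subst hxN; subst hxT
    have hpmem : pdel δ ∈ Gpsi (fun x => x ^ β) := by
      refine ⟨?_, ?_, ?_⟩
      · simp only [pdel]
        rw [norm_neg, Complex.norm_real, Real.norm_eq_abs, abs_of_pos hδ0]
        exact hδ1
      · simp [pdel]
      · simp only [pdel, Complex.neg_re, Complex.ofReal_re, norm_zero]
        rw [Real.zero_rpow (by positivity : β ≠ 0)]
        linarith
    have hmem : ∀ l : ℝ, 0 < l → (1 / l) ∈ {c : ℝ | ∃ lam : ℝ, 0 < lam ∧ c = 1 / lam ∧
        ∃ φ : ℂ → ℂ × ℂ, DifferentiableOn ℂ φ (ball (0 : ℂ) 1) ∧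
          MapsTo φ (ball (0 : ℂ) 1) (Gpsi (fun x => x ^ β)) ∧ φ 0 = pdel δ ∧
          deriv φ 0 = lam • ((0 : ℂ), (0 : ℂ))} := by
      intro l hl
      refine ⟨l, hl, rfl, fun _ => pdel δ, (differentiable_const _).differentiableOn,
        fun z _ => hpmem, rfl, ?_⟩
      simp
      rfl
    have hbdd : BddBelow {c : ℝ | ∃ lam : ℝ, 0 < lam ∧ c = 1 / lam ∧
        ∃ φ : ℂ → ℂ × ℂ, DifferentiableOn ℂ φ (ball (0 : ℂ) 1) ∧
          MapsTo φ (ball (0 : ℂ) 1) (Gpsi (fun x => x ^ β)) ∧ φ 0 = pdel δ ∧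
          deriv φ 0 = lam • ((0 : ℂ), (0 : ℂ))} := by
      refine ⟨0, ?_⟩
      rintro x ⟨l, hl, rfl, -⟩
      positivity
    constructor
    · simp only [norm_zero, mul_zero]
      show (0:ℝ) ≤ sInf _
      apply le_csInf ⟨1 / 1, hmem 1 one_pos⟩
      rintro x ⟨l, hl, rfl, -⟩
      positivity
    · simp only [norm_zero, mul_zero]
      show sInf _ ≤ (0:ℝ)
      apply le_of_forall_pos_le_add
      intro ε hε
      have hc := csInf_le hbdd (hmem (1 / ε) (by positivity))
      calc sInf _ ≤ 1 / (1 / ε) := hc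
        _ = ε := one_div_one_div ε
        _ ≤ 0 + ε := by linarith
  · obtain ⟨lam, hlam0, hlamN, φ, hφd, hφm, hφ0, hφder⟩ :=
      disc_mem β δ₀ δ xN xT hβ hδ₀0 hδ₀1 hδ0 hδδ₀ hxN hzone
    have hxN0 : 0 < ‖xN‖ := norm_pos_iff.mpr hxN
    have hmem : (1 / lam) ∈ {c : ℝ | ∃ lam : ℝ, 0 < lam ∧ c = 1 / lam ∧
        ∃ φ : ℂ → ℂ × ℂ, DifferentiableOn ℂ φ (ball (0 : ℂ) 1) ∧
          MapsTo φ (ball (0 : ℂ) 1) (Gpsi (fun x => x ^ β)) ∧ φ 0 = pdel δ ∧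
          deriv φ 0 = lam • ((xN, xT) : ℂ × ℂ)} :=
      ⟨lam, hlam0, rfl, φ, hφd, hφm, hφ0, hφder⟩
    have hbdd : BddBelow {c : ℝ | ∃ lam : ℝ, 0 < lam ∧ c = 1 / lam ∧
        ∃ φ : ℂ → ℂ × ℂ, DifferentiableOn ℂ φ (ball (0 : ℂ) 1) ∧
          MapsTo φ (ball (0 : ℂ) 1) (Gpsi (fun x => x ^ β)) ∧ φ 0 = pdel δ ∧
          deriv φ 0 = lam • ((xN, xT) : ℂ × ℂ)} := by
      refine ⟨0, ?_⟩
      rintro x ⟨l, hl, rfl, -⟩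
      positivity
    constructor
    · -- lower bound
      show _ ≤ sInf _
      apply le_csInf ⟨1 / lam, hmem⟩
      rintro x ⟨l, hl0, rfl, ψ, hψd, hψm, hψ0, hψder⟩
      have hle := lower_est β δ xN xT hβ hδ0 hδ1 hzone l hl0 ψ hψd hψm hψ0 hψder
      rw [hEinv, le_div_iff₀ hl0]
      have heq : 1 / (4 * Real.sqrt 2) * E⁻¹ * ‖xN‖ * l
          = (l * ‖xN‖) / (4 * Real.sqrt 2 * E) := by
        field_simp
      rw [heq, div_le_one (by positivity)]
      exact hle
    · -- upper bound
      have h1 : kob (Gpsi (fun x => x ^ β)) (pdel δ) (xN, xT) ≤ 1 / lam := csInf_le hbdd hmem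
      have hlam_eq : lam = c * E / ‖xN‖ := by
        rw [eq_div_iff (ne_of_gt hxN0)]
        exact hlamN
      have h2 : 1 / lam = 1 / c * δ ^ (1 / (2 * β) - 1) * ‖xN‖ := by
        rw [hlam_eq, one_div_div, hEinv]
        field_simp
      rw [h2] at h1
      exact h1
end

section
/- Let ψ(x) = x, so that G_ψ = {(z₁,z₂) ∈ ℂ² : |z₁| < 1, |z₂| < 1, Re z₁ < |z₂|}. Let δ ∈ (0, 1/2) and x_T ∈ ℂ with |x_T| < 1 and δ < (1 − |x_T|)². Set α := (1 − |x_T|)²/(2δ) and define φ(ζ) := (−δ + ζ, x_T·ζ + α·(x_T/|x_T|)·ζ²) (with the convention x_T/|x_T| = 1 when x_T = 0). Then φ(ζ) ∈ G_ψ for every ζ ∈ ℂ with |ζ| < √δ/(2(1 − |x_T|)). In particular, κ_{G_ψ}(p_δ; (1, x_T)) ≤ 2(1 − |x_T|)/√δ. -/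
open Complex Metric Set

lemma keymem (δ a : ℝ) (hδ0 : 0 < δ) (hδ : δ < 1/2) (ha0 : 0 ≤ a) (ha1 : a < 1)
    (hδ' : δ < (1-a)^2) (u ζ : ℂ) (hu : ‖u‖ = 1)
    (hζ : ‖ζ‖ < Real.sqrt δ / (2*(1-a))) :
    ((-(δ : ℂ)) + ζ, (a:ℂ)*u*ζ + (((1-a)^2/(2*δ) : ℝ):ℂ)*u*ζ^2) ∈ Gpsi (fun x => x) := by
  have ha1' : 0 < 1 - a := by linarith
  set α : ℝ := (1-a)^2/(2*δ) with hα
  have hα0 : 0 < α := by rw [hα]; positivity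
  set t : ℝ := ‖ζ‖ with ht
  set x : ℝ := ζ.re with hx
  set y : ℝ := ζ.im with hy
  have ht0 : 0 ≤ t := norm_nonneg ζ
  have hxt : x ≤ t := Complex.re_le_norm ζ
  have ht2 : t^2 = x^2 + y^2 := by
    rw [ht, Complex.sq_norm, Complex.normSq_apply]; ring
  have hs0 : 0 < Real.sqrt δ := Real.sqrt_pos.mpr hδ0
  have hs2 : Real.sqrt δ ^ 2 = δ := Real.sq_sqrt hδ0.le
  have hss : Real.sqrt δ < 1 - a := by
    have := Real.sqrt_lt_sqrt hδ0.le hδ'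
    rwa [Real.sqrt_sq ha1'.le] at this
  set r : ℝ := Real.sqrt δ / (2*(1-a)) with hr
  have hr2 : r < 1/2 := by
    rw [hr, div_lt_iff₀ (by positivity)]; linarith
  have hαr2 : α * r^2 = 1/8 := by
    have hrr : r^2 = δ/(4*(1-a)^2) := by
      rw [hr, div_pow, hs2]; ring_nf
    rw [hα, hrr]; field_simp; ring
  have hz2 : (a:ℂ)*u*ζ + ((α : ℝ):ℂ)*u*ζ^2 = u * (ζ * ((a:ℂ) + ((α:ℝ):ℂ)*ζ)) := by ring
  set B : ℝ := ‖(a:ℂ) + ((α:ℝ):ℂ)*ζ‖ with hB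
  have hB0 : 0 ≤ B := norm_nonneg _
  have habs2 : ‖(a:ℂ)*u*ζ + ((α : ℝ):ℂ)*u*ζ^2‖ = t * B := by
    rw [hz2, norm_mul, norm_mul, hu, one_mul, ht, hB]
  have hB2 : B^2 = (a + α*x)^2 + (α*y)^2 := by
    rw [hB, Complex.sq_norm, Complex.normSq_apply]
    simp [Complex.add_re, Complex.add_im, Complex.mul_re, Complex.mul_im]
    ring
  have hBle : B ≤ a + α*t := by
    calc B ≤ ‖(a:ℂ)‖ + ‖((α:ℝ):ℂ)*ζ‖ := norm_add_le _ _
    _ = a + α*t := by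
      rw [norm_mul, Complex.norm_real, Complex.norm_real, Real.norm_eq_abs, Real.norm_eq_abs, _root_.abs_of_nonneg ha0,
        _root_.abs_of_nonneg hα0.le, ht]
  have key1 : (1-a)*t - α*t^2 ≤ δ/2 := by
    have h := div_nonneg (sq_nonneg ((1-a)*t - δ)) (by linarith : (0:ℝ) ≤ 2*δ)
    have e : ((1-a)*t - δ)^2/(2*δ) = α*t^2 - (1-a)*t + δ/2 := by
      rw [hα]; field_simp; ring
    linarith [e ▸ h]
  have habsz1 : ‖(-(δ:ℂ)) + ζ‖ ≤ δ + t := by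
    calc ‖(-(δ:ℂ)) + ζ‖ ≤ ‖-(δ:ℂ)‖ + t := norm_add_le _ _
    _ = δ + t := by rw [norm_neg, Complex.norm_real, Real.norm_eq_abs, _root_.abs_of_nonneg hδ0.le]
  have hrez1 : ((-(δ:ℂ)) + ζ).re = -δ + x := by
    rw [Complex.add_re, Complex.neg_re, Complex.ofReal_re, hx]
  clear_value α t x y r B
  clear hz2
  refine ⟨?_, ?_, ?_⟩
  · -- |z₁| < 1
    calc ‖(-(δ:ℂ)) + ζ‖ ≤ δ + t := habsz1
    _ < 1 := by linarith
  · -- |z₂| < 1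
    show ‖_‖ < 1
    rw [habs2]
    have h1 : t * B ≤ t * (a + α*t) := mul_le_mul_of_nonneg_left hBle ht0
    have hr0 : 0 < r := lt_of_le_of_lt ht0 hζ
    have hpos : 0 < a + α*(t+r) := by
      have h1 := mul_pos hα0 hr0
      have h2 := mul_nonneg hα0.le ht0
      have h3 : α*(t+r) = α*t + α*r := by ring
      linarith
    have h2 : t * (a + α*t) < r * (a + α*r) := by
      have hm := mul_pos (sub_pos.mpr hζ) hpos
      have he : (r - t)*(a + α*(t+r)) = r*(a + α*r) - t*(a + α*t) := by ring
      linarith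
    have h3 : r*(a + α*r) = a*r + α*r^2 := by ring
    have h4 : a*r ≤ r := mul_le_of_le_one_left hr0.le ha1.le
    linarith
  · -- Re z₁ < |z₂|
    show ((-(δ:ℂ)) + ζ).re < (fun x => x) (‖_‖)
    rw [habs2, hrez1]
    show -δ + x < t * B
    rcases lt_or_ge x δ with hc | hc
    · have := mul_nonneg ht0 hB0
      linarith
    · have hx0 : 0 ≤ x := le_trans hδ0.le hc
      have key2 : x*(1-a) - α*t*x < δ := by
        rcases le_or_gt (α*t) (1-a) with h | h
        · have hm := mul_le_mul_of_nonneg_right hxt (by linarith : (0:ℝ) ≤ 1 - a - α*t)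
          have he1 : x*(1 - a - α*t) = x*(1-a) - α*t*x := by ring
          have he2 : t*(1 - a - α*t) = (1-a)*t - α*t^2 := by ring
          linarith
        · have hm := mul_nonneg hx0 (le_of_lt (sub_pos.mpr h))
          have he : x*(α*t - (1-a)) = α*t*x - x*(1-a) := by ring
          linarith
      have key3 : x - δ < x*(a + α*t) := by
        have he : x*(a + α*t) = x - (x*(1-a) - α*t*x) := by ring
        linarith
      have key4 : (x - δ)^2 < (x*(a + α*t))^2 :=
        pow_lt_pow_left₀ key3 (by linarith) (by norm_num)
      have key5 : (x*(a + α*t))^2 ≤ t^2 * ((a + α*x)^2 + (α*y)^2) := by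
        have expand : t^2*((a + α*x)^2 + (α*y)^2) - (x*(a + α*t))^2
            = a^2*y^2 + 2*a*α*(x*t*(t-x)) + α^2*y^2*t^2 := by
          linear_combination (a^2) * ht2
        have h5a : 0 ≤ a^2*y^2 := by positivity
        have h5b : 0 ≤ 2*a*α*(x*t*(t-x)) := by
          apply mul_nonneg (by positivity)
          exact mul_nonneg (mul_nonneg hx0 ht0) (by linarith)
        have h5c : 0 ≤ α^2*y^2*t^2 := by positivity
        linarith
      have hlt : (x - δ)^2 < (t*B)^2 := by
        calc (x-δ)^2 < (x*(a+α*t))^2 := key4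
        _ ≤ t^2 * ((a + α*x)^2 + (α*y)^2) := key5
        _ = (t*B)^2 := by rw [mul_pow t B, hB2]
      have := lt_of_pow_lt_pow_left₀ 2 (mul_nonneg ht0 hB0) hlt
      linarith

/-- for `ψ(x) = x` and `δ < (1−|x_T|)²`, with `α = (1−|x_T|)²/(2δ)`, the
map `ζ ↦ (−δ + ζ, x_Tζ + α(x_T/|x_T|)ζ²)` takes the disc of radius `√δ/(2(1−|x_T|))`
into `G_ψ`; consequently `κ_{G_ψ}(p_δ; (1, x_T)) ≤ 2(1−|x_T|)/√δ`. -/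
theorem stmt18 (δ : ℝ) (hδ0 : 0 < δ) (hδ : δ < 1 / 2)
    (xT : ℂ) (hxT : ‖xT‖ < 1) (hδ' : δ < (1 - ‖xT‖) ^ 2) :
    (∀ ζ : ℂ, ‖ζ‖ < Real.sqrt δ / (2 * (1 - ‖xT‖)) →
      ((-(δ : ℂ)) + ζ,
        xT * ζ + (((1 - ‖xT‖) ^ 2 / (2 * δ) : ℝ) : ℂ) *
          (if xT = 0 then 1 else xT / ((‖xT‖ : ℝ) : ℂ)) * ζ ^ 2) ∈
        Gpsi (fun x => x)) ∧
    kob (Gpsi (fun x => x)) (pdel δ) ((1 : ℂ), xT) ≤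
      2 * (1 - ‖xT‖) / Real.sqrt δ := by
  set a : ℝ := ‖xT‖ with ha
  set u : ℂ := if xT = 0 then 1 else xT / ((a : ℝ) : ℂ) with hudef
  have ha0 : 0 ≤ a := norm_nonneg xT
  have hu : ‖u‖ = 1 := by
    rw [hudef]
    split_ifs with h
    · simp
    · have ha' : a ≠ 0 := by simpa [ha] using h
      rw [norm_div, Complex.norm_real, Real.norm_eq_abs, _root_.abs_of_nonneg ha0, ← ha, div_self ha']
  have hxu : xT = (a : ℂ) * u := by
    rw [hudef]
    split_ifs with h
    · simp [h, ha]
    · have ha' : (a : ℂ) ≠ 0 := by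
        simpa [Complex.ofReal_eq_zero, ha] using (norm_ne_zero_iff.mpr h)
      field_simp
  have hmem : ∀ ζ : ℂ, ‖ζ‖ < Real.sqrt δ / (2 * (1 - a)) →
      ((-(δ : ℂ)) + ζ,
        xT * ζ + (((1 - a) ^ 2 / (2 * δ) : ℝ) : ℂ) * u * ζ ^ 2) ∈ Gpsi (fun x => x) := by
    intro ζ hζ
    have := keymem δ a hδ0 hδ ha0 hxT hδ' u ζ hu (by simpa using hζ)
    rw [hxu]
    convert this using 3 <;> push_cast <;> ring
  refine ⟨hmem, ?_⟩
  -- second part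
  have ha1' : 0 < 1 - a := by linarith
  have hs0 : 0 < Real.sqrt δ := Real.sqrt_pos.mpr hδ0
  set lam : ℝ := Real.sqrt δ / (2 * (1 - a)) with hlamdef
  have hlam0 : 0 < lam := by positivity
  set L : ℂ := ((lam : ℝ) : ℂ) with hL
  set A : ℂ := (((1 - a) ^ 2 / (2 * δ) : ℝ) : ℂ) * u with hA
  set φ : ℂ → ℂ × ℂ := fun w =>
    ((-(δ : ℂ)) + L * w, xT * (L * w) + A * (L * w) ^ 2) with hφ
  have hder1 : HasDerivAt (fun w : ℂ => (-(δ : ℂ)) + L * w) L 0 := by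
    simpa using ((hasDerivAt_id (0:ℂ)).const_mul L).const_add (-(δ:ℂ))
  have hderL : HasDerivAt (fun w : ℂ => L * w) L 0 := by
    simpa using (hasDerivAt_id (0:ℂ)).const_mul L
  have hder2 : HasDerivAt (fun w : ℂ => xT * (L * w) + A * (L * w) ^ 2) (xT * L) 0 := by
    have h1 : HasDerivAt (fun w : ℂ => xT * (L * w)) (xT * L) 0 := hderL.const_mul xT
    have h2 : HasDerivAt (fun w : ℂ => (L * w) ^ 2) ((2 : ℕ) * (L * 0) ^ 1 * L) 0 := hderL.fun_pow 2
    have h3 : HasDerivAt (fun w : ℂ => A * (L * w) ^ 2) (A * ((2 : ℕ) * (L * 0) ^ 1 * L)) 0 :=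
      h2.const_mul A
    simpa using h1.fun_add h3
  have hderφ : HasDerivAt φ (L, xT * L) 0 := hder1.prodMk hder2
  apply csInf_le
  · refine ⟨0, ?_⟩
    rintro c ⟨l, hl, rfl, -⟩
    positivity
  · refine ⟨lam, hlam0, ?_, φ, ?_, ?_, ?_, ?_⟩
    · rw [hlamdef, one_div_div]
    · apply Differentiable.differentiableOn
      exact (((differentiable_id.const_mul L).const_add _).prodMk
        (((differentiable_id.const_mul L).const_mul xT).add
          (((differentiable_id.const_mul L).pow 2).const_mul A)))
    · intro w hw
      rw [mem_ball, dist_zero_right] at hw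
      have habs : ‖L * w‖ < lam := by
        rw [norm_mul, hL, Complex.norm_real, Real.norm_eq_abs, _root_.abs_of_nonneg hlam0.le]
        calc lam * ‖w‖ < lam * 1 := by
              exact mul_lt_mul_of_pos_left hw hlam0
        _ = lam := mul_one lam
      exact hmem (L * w) (by rw [hlamdef] at habs; exact habs)
    · rw [hφ]
      simp [pdel]
    · rw [hderφ.deriv, Prod.smul_def, Prod.mk.injEq]
      constructor
      · rw [hL]; simp [Complex.real_smul]
      · rw [hL, Complex.real_smul]; ring
end
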